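/- arXiv:1510.02021 — 11 statements merged into one kernel-verified Lean document; each statement's English description precedes it below -/
import Mathlib

section
/- Let q be a prime power, let d be a positive divisor of q²−1, let r be a positive integer and φ a polynomial over F_{q²}. Let a, b, c, u, v ∈ F_{q²} satisfy a·b ≠ 0, a^{q+1} = b^{q+1} and a·c^q = b^q·c, and define f(x) = (a·x^q + b·x + c)^r · φ((a·x^q + b·x + c)^{(q²−1)/d}) + u·x^q + v·x. If b·u = a·v then f is not a permutation polynomial of F_{q²}. If b·u ≠ a·v, then f is a permutation polynomial of F_{q²} if and only if g(x) = x^r·[B·φ(x^{(q²−1)/d}) + A^{1−r}·B^{q·r}·φ(x^{(q²−1)/d})^q] + (u^{q+1} − v^{q+1})·x permutes the set S. -/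
open Polynomial in
lemma root_count {F : Type*} [Field F] [Fintype F] {q : ℕ} (hq2 : 2 ≤ q)
    (α β : F) (hα : α ≠ 0) : {z : F | α * z ^ q + β * z = 0}.ncard ≤ q := by
  classical
  set P : Polynomial F := C α * X ^ q + C β * X with hP
  have hcoeff : P.coeff q = α := by
    rw [hP]
    simp only [coeff_add, coeff_C_mul, coeff_X_pow, if_pos rfl, mul_one, coeff_X,
      if_neg (by omega : ¬ q = 1)]
    simp [if_neg (by omega : ¬ 1 = q)]
  have hPne : P ≠ 0 := fun h => hα (by rw [← hcoeff, h, coeff_zero])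
  have hdeg : P.natDegree ≤ q := by
    apply le_trans (natDegree_add_le _ _)
    simp only [max_le_iff]
    constructor
    · exact le_trans (natDegree_C_mul_le _ _) (by simp)
    · exact le_trans (natDegree_C_mul_le _ _) (by simp; omega)
  have hsubset : {z : F | α * z ^ q + β * z = 0} ⊆ ↑P.roots.toFinset := by
    intro z hz
    simp only [Set.mem_setOf_eq] at hz
    simp only [Finset.coe_sort_coe, Multiset.mem_toFinset, Finset.mem_coe,
      mem_roots hPne, IsRoot.def]
    rw [hP]
    simpa using hz
  calc {z : F | α * z ^ q + β * z = 0}.ncard ≤ (↑P.roots.toFinset : Set F).ncard :=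
        Set.ncard_le_ncard hsubset (Set.toFinite _)
    _ = P.roots.toFinset.card := Set.ncard_coe_finset _
    _ ≤ Multiset.card P.roots := Multiset.toFinset_card_le _
    _ ≤ P.natDegree := P.card_roots'
    _ ≤ q := hdeg

lemma frob_add_aux {F : Type*} [Field F] [Fintype F] {q : ℕ} (hq : IsPrimePow q)
    (hF : Fintype.card F = q ^ 2) :
    ∀ x y : F, (x + y) ^ q = x ^ q + y ^ q := by
  obtain ⟨p, n, hp, hn, rfl⟩ := hq
  have hp' : Nat.Prime p := Nat.prime_iff.mpr hp
  haveI := Fact.mk hp'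
  set p₀ := ringChar F with hp₀
  have hp₀prime : p₀.Prime := CharP.char_is_prime F p₀
  obtain ⟨m, hmprime, hcard⟩ := FiniteField.card F p₀
  have hdvd : p₀ ∣ p := by
    have : p₀ ∣ p₀ ^ (m : ℕ) := dvd_pow_self _ m.ne_zero
    rw [← hcard, hF, ← pow_mul] at this
    exact hp₀prime.dvd_of_dvd_pow this
  have : p₀ = p := ((Nat.prime_dvd_prime_iff_eq hp₀prime hp').mp hdvd)
  haveI : CharP F p := by rw [← this]; exact ringChar.charP F
  intro x y
  exact add_pow_char_pow x y p n

set_option maxHeartbeats 2000000 in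
theorem stmt_0 {F : Type*} [Field F] [Fintype F]
    (q : ℕ) (hq : IsPrimePow q) (hF : Fintype.card F = q ^ 2)
    (d : ℕ) (hd0 : 0 < d) (hdvd : d ∣ q ^ 2 - 1)
    (r : ℕ) (hr : 0 < r) (φ : Polynomial F)
    (a b c u v : F) (hab : a * b ≠ 0)
    (hab1 : a ^ (q + 1) = b ^ (q + 1)) (hac : a * c ^ q = b ^ q * c)
    (A B : F) (hA : A = b * u - a * v) (hB : B = a * u ^ q - b * v ^ q)
    (S : Set F) (hS : S = {y : F | ∃ x : F, a * x ^ q + b * x + c = y})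
    (f g : F → F)
    (hf : f = fun x => (a * x ^ q + b * x + c) ^ r *
      φ.eval ((a * x ^ q + b * x + c) ^ ((q ^ 2 - 1) / d)) + u * x ^ q + v * x)
    (hg : g = fun x => x ^ r * (B * φ.eval (x ^ ((q ^ 2 - 1) / d)) +
      A * (A ^ r)⁻¹ * B ^ (q * r) * (φ.eval (x ^ ((q ^ 2 - 1) / d))) ^ q) +
      (u ^ (q + 1) - v ^ (q + 1)) * x) :
    (b * u = a * v → ¬ Function.Bijective f) ∧
    (b * u ≠ a * v → (Function.Bijective f ↔ Set.BijOn g S S)) := by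
  classical
  have ha : a ≠ 0 := left_ne_zero_of_mul hab
  have hb : b ≠ 0 := right_ne_zero_of_mul hab
  have hq2 : 2 ≤ q := hq.two_le
  have hq0 : q ≠ 0 := by omega
  have hadd : ∀ x y : F, (x + y) ^ q = x ^ q + y ^ q := frob_add_aux hq hF
  have hQQ : ∀ x : F, (x ^ q) ^ q = x := by
    intro x
    rw [← pow_mul, ← pow_two, ← hF]
    exact FiniteField.pow_card x
  have hsub : ∀ x y : F, (x - y) ^ q = x ^ q - y ^ q := by
    intro x y
    have h := hadd (x - y) y
    rw [sub_add_cancel] at h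
    linear_combination -h
  have hneg : ∀ x : F, (-x) ^ q = -(x ^ q) := by
    intro x
    have := hsub 0 x
    simpa [zero_pow hq0] using this
  have h1 : a * a ^ q = b * b ^ q := by
    have := hab1
    rw [pow_succ, pow_succ] at this
    linear_combination this
  -- the "h" map and its basics
  have hyS : ∀ x : F, a * (a * x ^ q + b * x + c) ^ q = b ^ q * (a * x ^ q + b * x + c) := by
    intro x
    have hexp : (a * x ^ q + b * x + c) ^ q = a ^ q * x + b ^ q * x ^ q + c ^ q := by
      rw [hadd, hadd, mul_pow, mul_pow, hQQ]
    rw [hexp]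
    linear_combination x * h1 + hac
  -- relations between A and B
  have hBq : a * B ^ q = b ^ q * A := by
    have hBexp : B ^ q = a ^ q * u - b ^ q * v := by
      rw [hB, hsub, mul_pow, mul_pow, hQQ, hQQ]
    rw [hBexp, hA]
    linear_combination u * h1
  have hP4 : b * A ^ q = a ^ q * B := by
    have := congrArg (· ^ q) hBq
    simp only [mul_pow] at this
    rw [hQQ, hQQ] at this
    linear_combination -this
  have hP5 : a * A ^ q = b ^ q * B := by
    have := mul_left_cancel₀ hb (show b * (a * A ^ q) = b * (b ^ q * B) by
      linear_combination a * hP4 + B * h1)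
    exact this
  -- counting: S equals the set Zc
  set Zc : Set F := {z : F | a * z ^ q = b ^ q * z} with hZc
  have hSsubZc : S ⊆ Zc := by
    rintro y hy
    rw [hS] at hy
    obtain ⟨x, rfl⟩ := hy
    exact hyS x
  have hZc_card : Zc.ncard ≤ q := by
    have : Zc = {z : F | a * z ^ q + (-(b^q)) * z = 0} := by
      ext z; simp [hZc, sub_eq_zero, neg_mul]; constructor <;> intro h' <;> linear_combination h'
    rw [this]
    exact root_count hq2 a _ ha
  -- the additive hom ℓ
  set ℓ : F →+ F := AddMonoidHom.mk' (fun x => a * x ^ q + b * x)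
    (fun x y => by simp only [hadd]; ring) with hℓ
  have hker_le : Nat.card ℓ.ker ≤ q := by
    have hkerset : (ℓ.ker : Set F) = {z : F | a * z ^ q + b * z = 0} := by
      ext z
      simp [AddMonoidHom.mem_ker, hℓ, AddMonoidHom.mk'_apply]
    have : Nat.card ℓ.ker = ((ℓ.ker : Set F)).ncard := by
      rw [← Nat.card_coe_set_eq]; rfl
    rw [this, hkerset]
    exact root_count hq2 a b ha
  have hker_pos : 0 < Nat.card ℓ.ker := Nat.card_pos
  have hcardF : Nat.card F = q * q := by
    rw [Nat.card_eq_fintype_card, hF, pow_two]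
  have hiso : Nat.card F = Nat.card ℓ.range * Nat.card ℓ.ker := by
    rw [AddSubgroup.card_eq_card_quotient_mul_card_addSubgroup ℓ.ker]
    congr 1
    exact Nat.card_congr (QuotientAddGroup.quotientKerEquivRange ℓ).toEquiv
  have hrange_ge : q ≤ Nat.card ℓ.range := by
    by_contra hlt
    push_neg at hlt
    have h2 : Nat.card ℓ.range * Nat.card ℓ.ker < q * q := by
      calc Nat.card ℓ.range * Nat.card ℓ.ker < q * Nat.card ℓ.ker :=
            (Nat.mul_lt_mul_right hker_pos).mpr hlt
        _ ≤ q * q := Nat.mul_le_mul_left q hker_le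
    omega
  have hS_card : q ≤ S.ncard := by
    have himg : S = (fun z => z + c) '' (ℓ.range : Set F) := by
      ext y
      rw [hS]
      constructor
      · rintro ⟨x, rfl⟩
        exact ⟨a * x ^ q + b * x, ⟨x, rfl⟩, by ring⟩
      · rintro ⟨z, ⟨x, rfl⟩, rfl⟩
        exact ⟨x, by simp [hℓ, AddMonoidHom.mk'_apply]⟩
    rw [himg, Set.ncard_image_of_injective _ (add_left_injective c), ← Nat.card_coe_set_eq]
    exact le_trans hrange_ge (le_of_eq rfl)
  have hSZc : S = Zc := Set.eq_of_subset_of_ncard_le hSsubZc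
    (le_trans hZc_card hS_card) (Set.toFinite _)
  constructor
  · -- Part 1 : b*u = a*v → not bijective
    intro hbuav hbij
    have hrange_le : Nat.card ℓ.range ≤ q := by
      have hsub' : (ℓ.range : Set F) ⊆ Zc := by
        rintro z ⟨x, rfl⟩
        show a * (a * x ^ q + b * x) ^ q = b ^ q * (a * x ^ q + b * x)
        have hexp : (a * x ^ q + b * x) ^ q = a ^ q * x + b ^ q * x ^ q := by
          rw [hadd, mul_pow, mul_pow, hQQ]
        rw [hexp]
        linear_combination x * h1
      have : Nat.card ℓ.range = ((ℓ.range : Set F)).ncard := by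
        rw [← Nat.card_coe_set_eq]; rfl
      rw [this]
      exact le_trans (Set.ncard_le_ncard hsub' (Set.toFinite _)) hZc_card
    have hker_ge : 2 ≤ Nat.card ℓ.ker := by
      by_contra hlt
      push_neg at hlt
      have h2 := hiso
      rw [hcardF] at h2
      nlinarith [hrange_le, hker_pos]
    haveI : Nontrivial ℓ.ker := Finite.one_lt_card_iff_nontrivial.mp (by omega)
    obtain ⟨w, hw⟩ := exists_ne (0 : ℓ.ker)
    have hwk : a * (w : F) ^ q + b * (w : F) = 0 := by
      have := w.2
      rw [AddMonoidHom.mem_ker] at this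
      exact this
    have hwne : (w : F) ≠ 0 := fun h => hw (Subtype.ext h)
    have huv : u * (w : F) ^ q + v * (w : F) = 0 := by
      apply mul_left_cancel₀ ha
      rw [mul_zero]
      linear_combination u * hwk - (w : F) * hbuav
    have hf0 : f (w : F) = f 0 := by
      simp only [hf]
      have hcw : a * (w : F) ^ q + b * (w : F) + c = c := by linear_combination hwk
      rw [hcw, zero_pow hq0]
      ring_nf
      linear_combination huv
    exact hwne (hbij.injective hf0)
  · -- Part 2
    intro hbuav
    have hA0 : A ≠ 0 := by rw [hA]; exact sub_ne_zero_of_ne hbuav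
    have hB0 : B ≠ 0 := by
      intro h0
      have hBq' := hBq
      rw [h0, zero_pow hq0, mul_zero] at hBq'
      rcases mul_eq_zero.mp hBq'.symm with h' | h'
      · exact (pow_ne_zero q hb) h'
      · exact hA0 h'
    -- commuting identity
    have hcomm : ∀ x : F, A * (f x) ^ q + B * (f x) + (u ^ (q+1) - v ^ (q+1)) * c
        = g (a * x ^ q + b * x + c) := by
      intro x
      set s : ℕ := (q ^ 2 - 1) / d with hsd
      set y : F := a * x ^ q + b * x + c with hy
      have hfx : f x = y ^ r * φ.eval (y ^ s) + u * x ^ q + v * x := by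
        simp only [hf, hy]
      have hfxq : (f x) ^ q = y ^ (q * r) * (φ.eval (y ^ s)) ^ q + u ^ q * x + v ^ q * x ^ q := by
        rw [hfx, hadd, hadd, mul_pow, mul_pow, mul_pow, hQQ, ← pow_mul]
        ring
      have P1 : a ^ r * y ^ (q * r) = b ^ (q * r) * y ^ r := by
        have h' := congrArg (· ^ r) (hyS x)
        simp only [mul_pow] at h'
        rw [← pow_mul, ← pow_mul] at h'
        exact h'
      have P2 : a ^ r * B ^ (q * r) = b ^ (q * r) * A ^ r := by
        have h' := congrArg (· ^ r) hBq
        simp only [mul_pow] at h'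
        rw [← pow_mul, ← pow_mul] at h'
        exact h'
      have h3 : A ^ r * y ^ (q * r) = B ^ (q * r) * y ^ r := by
        apply mul_left_cancel₀ (pow_ne_zero r ha)
        linear_combination A ^ r * P1 - y ^ r * P2
      have key1 : A * y ^ (q * r) = A * (A ^ r)⁻¹ * B ^ (q * r) * y ^ r := by
        have hAr : (A : F) ^ r ≠ 0 := pow_ne_zero r hA0
        field_simp
        linear_combination h3
      simp only [hg]
      rw [hfxq, hfx]
      linear_combination (φ.eval (y ^ s)) ^ q * key1 + (u ^ q * x + v ^ q * x ^ q) * hA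
        + (u * x ^ q + v * x) * hB
    -- injectivity on fibers
    have fibinj : ∀ x x' : F, a * x ^ q + b * x + c = a * x' ^ q + b * x' + c →
        u * x ^ q + v * x = u * x' ^ q + v * x' → x = x' := by
      intro x x' e1 e2
      have h' : (b * u - a * v) * (x - x') = 0 := by linear_combination u * e1 - a * e2
      rcases mul_eq_zero.mp h' with h'' | h''
      · exact absurd h'' (hA ▸ hA0)
      · exact sub_eq_zero.mp h''
    -- g maps S to S
    have hMZc : ∀ z : F, a * (A * z ^ q + B * z + (u ^ (q+1) - v ^ (q+1)) * c) ^ q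
        = b ^ q * (A * z ^ q + B * z + (u ^ (q+1) - v ^ (q+1)) * c) := by
      intro z
      have htq : (u ^ (q+1) - v ^ (q+1)) ^ q = u ^ (q+1) - v ^ (q+1) := by
        rw [hsub]
        have hu' : (u ^ (q+1)) ^ q = u ^ (q+1) := by
          rw [pow_succ, mul_pow, hQQ]; ring
        have hv' : (v ^ (q+1)) ^ q = v ^ (q+1) := by
          rw [pow_succ, mul_pow, hQQ]; ring
        rw [hu', hv']
      have hexp : (A * z ^ q + B * z + (u ^ (q+1) - v ^ (q+1)) * c) ^ q
          = A ^ q * z + B ^ q * z ^ q + (u ^ (q+1) - v ^ (q+1)) * c ^ q := by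
        rw [hadd, hadd, mul_pow, mul_pow, mul_pow, hQQ, htq]
      rw [hexp]
      linear_combination z * hP5 + z ^ q * hBq + (u ^ (q+1) - v ^ (q+1)) * hac
    have hMaps : Set.MapsTo g S S := by
      intro y hy
      obtain ⟨x, hx⟩ : ∃ x, a * x ^ q + b * x + c = y := by rwa [hS] at hy
      have hgy : g y = A * (f x) ^ q + B * (f x) + (u ^ (q+1) - v ^ (q+1)) * c := by
        rw [← hx, ← hcomm x]
      rw [hSZc]
      show a * (g y) ^ q = b ^ q * (g y)
      rw [hgy]
      exact hMZc (f x)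
    -- g injective on S (assuming f bijective)
    have hInjOn : Function.Bijective f → Set.InjOn g S := by
      intro hbij y hy y' hy' hgy
      obtain ⟨x, hx⟩ : ∃ x, a * x ^ q + b * x + c = y := by rwa [hS] at hy
      obtain ⟨x', hx'⟩ : ∃ x', a * x' ^ q + b * x' + c = y' := by rwa [hS] at hy'
      have e : A * (f x) ^ q + B * (f x) = A * (f x') ^ q + B * (f x') := by
        have c1 := hcomm x
        have c2 := hcomm x'
        rw [hx] at c1
        rw [hx'] at c2
        rw [hgy] at c1
        linear_combination c1 - c2
      set w' : F := f x' - f x with hw'def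
      have hw' : A * w' ^ q + B * w' = 0 := by
        rw [hw'def, hsub]
        linear_combination -e
      set w : F := -(a * w') * A⁻¹ with hwdef
      have hwq : w ^ q = -(a ^ q * w' ^ q) * (A ^ q)⁻¹ := by
        rw [hwdef, mul_pow, hneg, mul_pow, inv_pow]
      have c1 : a * w ^ q + b * w = 0 := by
        rw [hwq, hwdef]
        have hAq : (A : F) ^ q ≠ 0 := pow_ne_zero _ hA0
        field_simp
        linear_combination (-(a * a ^ q)) * hw' + (-(a * w')) * hP4
      have c2 : a * (x + w) ^ q + b * (x + w) + c = a * x ^ q + b * x + c := by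
        rw [hadd]
        linear_combination c1
      have hAw : A * w = -(a * w') := by
        rw [hwdef]
        field_simp
      have c3 : u * w ^ q + v * w = w' := by
        apply mul_left_cancel₀ ha
        linear_combination u * c1 - hAw + w * hA
      have hfw : f x' = f x + w' := by rw [hw'def]; ring
      have hfxw : f (x + w) = f x' := by
        rw [hfw]
        simp only [hf]
        rw [c2, hadd x w]
        linear_combination c3
      have hxx : x + w = x' := hbij.injective hfxw
      rw [← hx, ← hx', ← hxx, c2]
    constructor
    · intro hbij
      exact ((Set.toFinite S).injOn_iff_bijOn_of_mapsTo hMaps).mp (hInjOn hbij)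
    · intro hbijg
      rw [← Finite.injective_iff_bijective]
      intro x x' hfe
      have hgh : g (a * x ^ q + b * x + c) = g (a * x' ^ q + b * x' + c) := by
        rw [← hcomm x, ← hcomm x', hfe]
      have hmem : (a * x ^ q + b * x + c) ∈ S := by rw [hS]; exact ⟨x, rfl⟩
      have hmem' : (a * x' ^ q + b * x' + c) ∈ S := by rw [hS]; exact ⟨x', rfl⟩
      have heq := hbijg.injOn hmem hmem' hgh
      have e2 : u * x ^ q + v * x = u * x' ^ q + v * x' := by
        have hfe' := hfe
        simp only [hf] at hfe'
        rw [heq] at hfe'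
        linear_combination hfe'
      exact fibinj x x' heq e2
end

section
/- Let q be a prime power and let d ≥ 3 be an odd divisor of q−1. Let a, b, c ∈ F_{q²} satisfy a·b ≠ 0, a^{q+1} = b^{q+1} and a·c^q = b^q·c, and assume b·u ≠ a·v. Let u, v ∈ F_{q²} and the positive integer r satisfy either (u^{q+1} = v^{q+1} and gcd(r, (q²−1)/d) = 1) or (u^{q+1} ≠ v^{q+1} and r = 1). Let φ be a polynomial over F_{q²} and define f(x) = (a·x^q + b·x + c)^r · φ((a·x^q + b·x + c)^{(q²−1)/d}) + u·x^q + v·x. Then f is a permutation polynomial of F_{q²} if and only if h(x) = x^r·[B·φ(x) + A^{1−r}·B^{q·r}·φ(x)^q + u^{q+1} − v^{q+1}]^{(q²−1)/d} permutes U_d. -/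
lemma aux_exists_pow_ne (F : Type*) [Field F] [Fintype F] (q : ℕ) (h2 : 2 ≤ q)
    (hF : Fintype.card F = q ^ 2) : ∃ t : F, t ^ q ≠ t := by
  classical
  obtain ⟨g, hg⟩ := IsCyclic.exists_generator (α := Fˣ)
  have hord : orderOf g = q ^ 2 - 1 := by
    rw [orderOf_eq_card_of_forall_mem_zpowers hg, Nat.card_units,
      Nat.card_eq_fintype_card, hF]
  refine ⟨(g : F), fun hcon => ?_⟩
  have hgq : g ^ q = g := Units.ext (by push_cast; exact hcon)
  have h1 : g ^ (q - 1) = 1 := by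
    have h : g ^ (q - 1) * g = 1 * g := by
      rw [one_mul, ← pow_succ, Nat.sub_add_cancel (by omega)]
      exact hgq
    exact mul_right_cancel h
  have hdvd : q ^ 2 - 1 ∣ q - 1 := hord ▸ orderOf_dvd_of_pow_eq_one h1
  have hle := Nat.le_of_dvd (by omega) hdvd
  have h5 : 2 * q ≤ q ^ 2 := by nlinarith
  set M := q ^ 2 with hM
  omega

lemma aux_root (F : Type*) [Field F] [Fintype F] (q d e : ℕ) (hq2 : 2 ≤ q)
    (hF : Fintype.card F = q ^ 2) (hde : d * e = q ^ 2 - 1) (hd0 : 0 < d)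
    (hdodd : Odd d) (hdq : d ∣ q - 1) :
    ∀ z : F, z ^ d = 1 → ∃ τ : F, τ ^ q = τ ∧ τ ^ e = z := by
  classical
  obtain ⟨g, hg⟩ := IsCyclic.exists_generator (α := Fˣ)
  have hord : orderOf g = q ^ 2 - 1 := by
    rw [orderOf_eq_card_of_forall_mem_zpowers hg, Nat.card_units,
      Nat.card_eq_fintype_card, hF]
  intro z hz
  have hz0 : z ≠ 0 := by
    intro h; rw [h, zero_pow hd0.ne'] at hz; exact one_ne_zero hz.symm
  set zu : Fˣ := Units.mk0 z hz0 with hzu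
  have hzd : zu ^ d = 1 := Units.ext (by push_cast [hzu]; exact hz)
  obtain ⟨m, hm⟩ := hdodd
  set w : Fˣ := zu ^ (m + 1) with hw
  have hw2 : w * w = zu := by
    rw [hw, ← pow_add]
    have hmm : (m + 1) + (m + 1) = d + 1 := by omega
    rw [hmm, pow_succ, hzd, one_mul]
  have hwd : w ^ d = 1 := by rw [hw, ← pow_mul, mul_comm, pow_mul, hzd, one_pow]
  obtain ⟨mz, hmz0⟩ := hg w
  have hmz : g ^ mz = w := hmz0
  have hzpow : g ^ (mz * (d : ℤ)) = 1 := by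
    rw [zpow_mul, hmz, zpow_natCast, hwd]
  have hdvd : ((q ^ 2 - 1 : ℕ) : ℤ) ∣ mz * d := by
    rw [← hord]; exact orderOf_dvd_iff_zpow_eq_one.mpr hzpow
  have hcast : ((q ^ 2 - 1 : ℕ) : ℤ) = (d : ℤ) * e := by
    rw [← hde]; push_cast; ring
  have hedvd : (e : ℤ) ∣ mz := by
    have h1 : (d : ℤ) * e ∣ (d : ℤ) * mz := by
      rw [← hcast]; rwa [mul_comm mz (d : ℤ)] at hdvd
    exact (mul_dvd_mul_iff_left (show (d : ℤ) ≠ 0 by exact_mod_cast hd0.ne')).mp h1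
  obtain ⟨m₂, hm₂⟩ := hedvd
  set τu : Fˣ := g ^ (m₂ * ((q : ℤ) + 1)) with hτu
  have hq21 : ((q ^ 2 - 1 : ℕ) : ℤ) = ((q : ℤ) + 1) * ((q : ℤ) - 1) := by
    push_cast [Nat.cast_sub (show 1 ≤ q ^ 2 by nlinarith)]
    ring
  have hτq1 : τu ^ ((q : ℤ) - 1) = 1 := by
    rw [hτu, ← zpow_mul]
    apply orderOf_dvd_iff_zpow_eq_one.mp
    rw [hord, hq21]
    exact ⟨m₂, by ring⟩
  have hτqτ : τu ^ q = τu := by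
    have h1 : τu ^ (q : ℤ) = τu := by
      have : (q : ℤ) = ((q : ℤ) - 1) + 1 := by ring
      rw [this, zpow_add, hτq1, one_mul, zpow_one]
    rw [← zpow_natCast]; exact h1
  have hwq1 : w ^ (q - 1) = 1 := by
    obtain ⟨t, ht⟩ := hdq
    rw [ht, pow_mul, hwd, one_pow]
  have hwq : w ^ (q + 1) = zu := by
    have hqe : q + 1 = (q - 1) + 2 := by omega
    rw [hqe, pow_add, hwq1, one_mul, pow_two, hw2]
  have hτe : τu ^ e = zu := by
    have h1 : τu ^ (e : ℤ) = g ^ (mz * ((q : ℤ) + 1)) := by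
      rw [hτu, ← zpow_mul]
      congr 1
      rw [hm₂]; ring
    have h2 : g ^ (mz * ((q : ℤ) + 1)) = w ^ ((q : ℤ) + 1) := by
      rw [zpow_mul, hmz]
    have h3 : w ^ ((q : ℤ) + 1) = zu := by
      have : ((q : ℤ) + 1) = ((q + 1 : ℕ) : ℤ) := by push_cast; ring
      rw [this, zpow_natCast, hwq]
    rw [← zpow_natCast, h1, h2, h3]
  refine ⟨(τu : F), ?_, ?_⟩
  · have := congrArg (Units.val) hτqτ; push_cast at this; exact this
  · have := congrArg (Units.val) hτe; push_cast [hzu] at this; exact this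

theorem stmt_2 {F : Type*} [Field F] [Fintype F]
    (q : ℕ) (hq : IsPrimePow q) (hF : Fintype.card F = q ^ 2)
    (d : ℕ) (hd3 : 3 ≤ d) (hdodd : Odd d) (hdvd : d ∣ q - 1)
    (a b c u v : F) (hab : a * b ≠ 0)
    (hab1 : a ^ (q + 1) = b ^ (q + 1)) (hac : a * c ^ q = b ^ q * c)
    (hA0 : b * u ≠ a * v)
    (r : ℕ) (hr : 0 < r)
    (huvr : (u ^ (q + 1) = v ^ (q + 1) ∧ Nat.gcd r ((q ^ 2 - 1) / d) = 1) ∨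
      (u ^ (q + 1) ≠ v ^ (q + 1) ∧ r = 1))
    (φ : Polynomial F)
    (A B : F) (hA : A = b * u - a * v) (hB : B = a * u ^ q - b * v ^ q)
    (f h : F → F)
    (hf : f = fun x => (a * x ^ q + b * x + c) ^ r *
      φ.eval ((a * x ^ q + b * x + c) ^ ((q ^ 2 - 1) / d)) + u * x ^ q + v * x)
    (hh : h = fun x => x ^ r * (B * φ.eval x +
      A * (A ^ r)⁻¹ * B ^ (q * r) * (φ.eval x) ^ q +
      u ^ (q + 1) - v ^ (q + 1)) ^ ((q ^ 2 - 1) / d)) :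
    Function.Bijective f ↔
      Set.BijOn h {x : F | x ^ d = 1} {x : F | x ^ d = 1} := by
  classical
  -- ARITHMETIC SETUP
  have hq2 : 2 ≤ q := hq.two_le
  set e := (q ^ 2 - 1) / d with heq
  have hd0 : 0 < d := by omega
  obtain ⟨s, hs⟩ := hdvd
  have hsqq : q ^ 2 = q * q := sq q
  have hq21 : q ^ 2 - 1 = (q - 1) * (q + 1) := by
    obtain ⟨t, rfl⟩ : ∃ t, q = t + 1 := ⟨q - 1, by omega⟩
    have e1 : (t + 1) ^ 2 = t * (t + 2) + 1 := by ring
    have e2 : t + 1 - 1 = t := by omega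
    rw [e1, e2, Nat.add_sub_cancel]
  have hdq2 : d ∣ q ^ 2 - 1 := by
    refine ⟨s * (q + 1), ?_⟩
    rw [hq21, hs]; ring
  have hde : d * e = q ^ 2 - 1 := Nat.mul_div_cancel' hdq2
  have hq21pos : 0 < q ^ 2 - 1 := by
    have h1 : 1 < q ^ 2 := Nat.one_lt_pow two_ne_zero hq2
    omega
  have he0 : 0 < e := by
    rw [heq]
    exact Nat.div_pos (Nat.le_of_dvd hq21pos hdq2) hd0
  have hes : (q + 1) ∣ e := by
    refine ⟨s, ?_⟩
    have h3 : d * e = d * ((q + 1) * s) := by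
      rw [hde, hq21, hs]; ring
    exact Nat.eq_of_mul_eq_mul_left hd0 h3
  -- CHARACTERISTIC / FROBENIUS
  have hfrob : (∀ x y : F, (x + y) ^ q = x ^ q + y ^ q) ∧
      (∀ x y : F, (x - y) ^ q = x ^ q - y ^ q) := by
    obtain ⟨p, k, hp, hk, hpk⟩ := hq
    have hpnat : p.Prime := hp.nat_prime
    obtain ⟨p', hp'⟩ := CharP.exists F
    haveI := hp'
    obtain ⟨n, hpp, hcard⟩ := FiniteField.card F p'
    have hcard2 : (p' : ℕ) ^ (n : ℕ) = p ^ (2 * k) := by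
      rw [← hcard, hF, ← hpk]; ring
    have hpe : p' = p := by
      have h1 : p' ∣ p ^ (2 * k) := by
        rw [← hcard2]
        exact dvd_pow_self p' (by positivity : (n : ℕ) ≠ 0)
      exact (Nat.prime_dvd_prime_iff_eq hpp hpnat).mp (hpp.dvd_of_dvd_pow h1)
    haveI : Fact p.Prime := ⟨hpnat⟩
    haveI : CharP F p := by rwa [hpe] at hp'
    constructor
    · intro x y; rw [← hpk]; exact add_pow_char_pow x y p k
    · intro x y; rw [← hpk]; exact sub_pow_char_pow x y k
  obtain ⟨hadd, hsub⟩ := hfrob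
  have hqq : ∀ x : F, (x ^ q) ^ q = x := by
    intro x
    rw [← pow_mul]
    have h1 : q * q = Fintype.card F := by rw [hF, hsqq]
    rw [h1, FiniteField.pow_card]
  have hunit : ∀ x : F, x ≠ 0 → x ^ (q ^ 2 - 1) = 1 := by
    intro x hx
    have := FiniteField.pow_card_sub_one_eq_one x hx
    rwa [hF] at this
  -- BASIC NONZERO FACTS
  have ha0 : a ≠ 0 := fun hcon => hab (by rw [hcon, zero_mul])
  have hb0 : b ≠ 0 := fun hcon => hab (by rw [hcon, mul_zero])
  have hA0' : A ≠ 0 := by rw [hA]; exact sub_ne_zero.mpr hA0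
  obtain ⟨ω, hωa⟩ : ∃ w : F, w * a = b ^ q := ⟨b ^ q * a⁻¹, by field_simp⟩
  have hω0 : ω ≠ 0 := by
    intro hcon
    rw [hcon, zero_mul] at hωa
    exact (pow_ne_zero q hb0) hωa.symm
  have hNfix : ∀ x : F, (x ^ (q + 1)) ^ q = x ^ (q + 1) := by
    intro x
    rw [pow_succ, mul_pow, hqq]; ring
  have hωq : ω ^ (q + 1) = 1 := by
    have h1 : ω ^ (q + 1) * a ^ (q + 1) = (b ^ q) ^ (q + 1) := by
      rw [← mul_pow, hωa]
    have h2 : (b ^ q) ^ (q + 1) = (b ^ (q + 1)) ^ q := by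
      rw [← pow_mul, ← pow_mul, mul_comm]
    rw [h2, ← hab1, hNfix] at h1
    exact mul_right_cancel₀ (pow_ne_zero (q + 1) ha0) (h1.trans (one_mul _).symm)
  have hAq : A ^ q = ω * B := by
    have h1 : a * A ^ q = a * (ω * B) := by
      have h2 : a * (ω * B) = b ^ q * B := by rw [← hωa]; ring
      rw [h2, hA, hB, hsub, mul_pow, mul_pow]
      linear_combination (-(v ^ q)) * hab1
    exact mul_left_cancel₀ ha0 h1
  have hBq : B ^ q = ω * A := by
    have h1 : a * B ^ q = a * (ω * A) := by
      have h2 : a * (ω * A) = b ^ q * A := by rw [← hωa]; ring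
      rw [h2, hA, hB, hsub, mul_pow, mul_pow, hqq, hqq]
      linear_combination u * hab1
    exact mul_left_cancel₀ ha0 h1
  have hB0 : B ≠ 0 := by
    intro hcon
    apply hA0'
    have h1 : A ^ q = 0 := by rw [hAq, hcon, mul_zero]
    exact pow_eq_zero_iff (by omega : q ≠ 0) |>.mp h1
  have hγq : (u ^ (q + 1) - v ^ (q + 1)) ^ q = u ^ (q + 1) - v ^ (q + 1) := by
    rw [hsub, hNfix, hNfix]
  have hcoef : A * (A ^ r)⁻¹ * B ^ (q * r) = A * ω ^ r := by
    have h1 : B ^ (q * r) = (B ^ q) ^ r := by rw [pow_mul]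
    rw [h1, hBq, mul_pow]
    have h2 : (A ^ r)⁻¹ * A ^ r = 1 := inv_mul_cancel₀ (pow_ne_zero r hA0')
    linear_combination (A * ω ^ r) * h2
  have hBuAv : B * u + A * v ^ q = a * (u ^ (q + 1) - v ^ (q + 1)) := by
    rw [hA, hB]; ring
  have hBvAu : B * v + A * u ^ q = b * (u ^ (q + 1) - v ^ (q + 1)) := by
    rw [hA, hB]; ring
  -- CASE EXTRACTION
  have hγr1 : (u ^ (q + 1) - v ^ (q + 1)) = 0 ∨ r = 1 := by
    rcases huvr with ⟨h1, _⟩ | ⟨_, h2⟩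
    · left; rw [h1, sub_self]
    · right; exact h2
  have hδ1 : ∀ δ : F, δ ^ r = 1 → δ ^ e = 1 → δ = 1 := by
    intro δ h1 h2
    rcases huvr with ⟨_, hg1⟩ | ⟨_, hr1⟩
    · have o1 : orderOf δ ∣ r := orderOf_dvd_of_pow_eq_one h1
      have o2 : orderOf δ ∣ e := orderOf_dvd_of_pow_eq_one h2
      have o3 : orderOf δ ∣ 1 := by rw [← hg1]; exact Nat.dvd_gcd o1 o2
      exact orderOf_eq_one_iff.mp (Nat.dvd_one.mp o3)
    · rwa [hr1, pow_one] at h1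
  -- THE LINE K
  set K : Set F := {y : F | a * y ^ q = b ^ q * y} with hK
  have hmemK : ∀ y : F, y ∈ K ↔ a * y ^ q = b ^ q * y := fun y => Iff.rfl
  have hcK : c ∈ K := hac
  have hK0 : (0 : F) ∈ K := by
    rw [hmemK, zero_pow (by omega : q ≠ 0), mul_zero, mul_zero]
  have hKsub : ∀ y z : F, y ∈ K → z ∈ K → y - z ∈ K := by
    intro y z hy hz
    rw [hmemK] at hy hz ⊢
    rw [hsub]
    linear_combination hy - hz
  have hKadd : ∀ y z : F, y ∈ K → z ∈ K → y + z ∈ K := by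
    intro y z hy hz
    rw [hmemK] at hy hz ⊢
    rw [hadd]
    linear_combination hy + hz
  have hKq : ∀ y ∈ K, y ^ q = ω * y := by
    intro y hy
    rw [hmemK] at hy
    refine mul_left_cancel₀ ha0 ?_
    rw [hy, ← hωa]; ring
  have hKγc : (u ^ (q + 1) - v ^ (q + 1)) * c ∈ K := by
    rw [hmemK, mul_pow, hγq]
    linear_combination (u ^ (q + 1) - v ^ (q + 1)) * hac
  have hωe : ω ^ e = 1 := by
    obtain ⟨s', hs'⟩ := hes
    rw [hs', pow_mul, hωq, one_pow]
  -- t with t^q ≠ t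
  obtain ⟨t₁, ht₁⟩ := aux_exists_pow_ne F q hq2 hF
  -- the additive map ℓ(x) = a x^q + b x lands in K and is onto K
  have hLK : ∀ x : F, a * x ^ q + b * x ∈ K := by
    intro x
    rw [hmemK, hadd, mul_pow, mul_pow, hqq]
    linear_combination x * hab1
  have hLsurj : ∀ m ∈ K, ∃ x : F, a * x ^ q + b * x = m := by
    have hTr : ∀ t : F, (b ^ q * t ^ q + b * t) ^ q = b ^ q * t ^ q + b * t := by
      intro t
      rw [hadd, mul_pow, mul_pow, hqq, hqq]; ring
    have hTrne : ∃ t : F, b ^ q * t ^ q + b * t ≠ 0 := by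
      by_contra hcon
      push_neg at hcon
      have h1 := hcon 1
      have h2 := hcon t₁
      rw [one_pow, mul_one, mul_one] at h1
      have h3 : b * (t₁ - t₁ ^ q) = 0 := by linear_combination h2 - t₁ ^ q * h1
      rcases mul_eq_zero.mp h3 with h4 | h4
      · exact hb0 h4
      · exact ht₁ (by linear_combination -h4)
    obtain ⟨t₀, hz⟩ := hTrne
    intro m hm
    rw [hmemK] at hm
    refine ⟨m * t₀ * (b ^ q * t₀ ^ q + b * t₀)⁻¹, ?_⟩
    rw [mul_pow, mul_pow, inv_pow, hTr t₀]
    have key : a * (m ^ q * t₀ ^ q) + b * (m * t₀) = m * (b ^ q * t₀ ^ q + b * t₀) := by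
      linear_combination t₀ ^ q * hm
    have hgoal : (a * (m ^ q * t₀ ^ q) + b * (m * t₀)) * (b ^ q * t₀ ^ q + b * t₀)⁻¹ = m := by
      rw [key, mul_inv_cancel_right₀ hz]
    linear_combination hgoal
  have hGK : ∀ x : F, a * x ^ q + b * x + c ∈ K := by
    intro x
    exact hKadd _ _ (hLK x) hcK
  have hGsurj : ∀ kk ∈ K, ∃ x : F, a * x ^ q + b * x + c = kk := by
    intro kk hk
    obtain ⟨x, hx⟩ := hLsurj (kk - c) (hKsub _ _ hk hcK)
    exact ⟨x, by linear_combination hx⟩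
  -- the additive map Λ(y) = B y + A y^q lands in K and is onto K
  have hΛK : ∀ y : F, B * y + A * y ^ q ∈ K := by
    intro y
    rw [hmemK, hadd, mul_pow, mul_pow, hqq, hAq, hBq]
    linear_combination (A * y ^ q + B * y) * hωa
  have hΛsurj : ∀ kk ∈ K, ∃ y : F, B * y + A * y ^ q = kk := by
    have hS : ∀ t : F, (A * ω * t ^ q + B * t) ^ q = A * ω * t ^ q + B * t := by
      intro t
      rw [hadd, mul_pow, mul_pow, mul_pow, hqq, hAq, hBq]
      linear_combination (B * t) * hωq
    have hSne : ∃ t : F, A * ω * t ^ q + B * t ≠ 0 := by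
      by_contra hcon
      push_neg at hcon
      have h1 := hcon 1
      have h2 := hcon t₁
      rw [one_pow, mul_one, mul_one] at h1
      have h3 : A * ω * (t₁ ^ q - t₁) = 0 := by linear_combination h2 - t₁ * h1
      rcases mul_eq_zero.mp h3 with h4 | h4
      · exact (mul_ne_zero hA0' hω0) h4
      · exact ht₁ (by linear_combination h4)
    obtain ⟨t₀, hz⟩ := hSne
    intro kk hk
    refine ⟨kk * t₀ * (A * ω * t₀ ^ q + B * t₀)⁻¹, ?_⟩
    rw [mul_pow, mul_pow, inv_pow, hS t₀, hKq kk hk]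
    have key : B * (kk * t₀) + A * (ω * kk * t₀ ^ q) = kk * (A * ω * t₀ ^ q + B * t₀) := by
      ring
    have hgoal : (B * (kk * t₀) + A * (ω * kk * t₀ ^ q)) *
        (A * ω * t₀ ^ q + B * t₀)⁻¹ = kk := by
      rw [key, mul_inv_cancel_right₀ hz]
    linear_combination hgoal
  -- Φ and η
  obtain ⟨Φf, hΦf⟩ : ∃ g : F → F, ∀ z : F, g z = B * φ.eval z +
      A * ω ^ r * (φ.eval z) ^ q + (u ^ (q + 1) - v ^ (q + 1)) :=
    ⟨_, fun z => rfl⟩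
  obtain ⟨η, hη⟩ : ∃ g : F → F, ∀ y : F, g y = y ^ r * Φf (y ^ e) :=
    ⟨_, fun y => rfl⟩
  have hhΦ : ∀ x : F, h x = x ^ r * (Φf x) ^ e := by
    intro x
    simp only [hh]
    rw [hΦf x, hcoef]
    ring
  have hη0 : η 0 = 0 := by
    rw [hη 0, zero_pow hr.ne', zero_mul]
  -- the dagger identity
  have hdagger : ∀ z : F, ω ^ r * (Φf z) ^ q = ω * Φf z := by
    intro z
    rw [hΦf z]
    rw [hadd, hadd, mul_pow, mul_pow, mul_pow, hqq, hγq, hAq, hBq]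
    have hωqr : (ω ^ r) ^ q * ω ^ r = 1 := by
      rw [← pow_mul, ← pow_add, show r * q + r = (q + 1) * r by ring, pow_mul, hωq,
        one_pow]
    have hγω : ω ^ r * (u ^ (q + 1) - v ^ (q + 1)) = ω * (u ^ (q + 1) - v ^ (q + 1)) := by
      rcases hγr1 with h1 | h1
      · rw [h1, mul_zero, mul_zero]
      · rw [h1, pow_one]
    linear_combination (ω * B * φ.eval z) * hωqr + hγω
  -- η maps K to K
  have hηK : ∀ y ∈ K, η y ∈ K := by
    intro y hy
    by_cases hy0 : y = 0
    · rw [hy0, hη0]; exact hK0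
    · have hyq : y ^ q = ω * y := hKq y hy
      rw [hmemK, hη y, mul_pow]
      have h1 : (y ^ r) ^ q = ω ^ r * y ^ r := by
        rw [← pow_mul, mul_comm r q, pow_mul, hyq, mul_pow]
      rw [h1]
      linear_combination (a * y ^ r) * hdagger (y ^ e) + (y ^ r * Φf (y ^ e)) * hωa
  have hKe : ∀ y ∈ K, y ≠ 0 → (y ^ e) ^ d = 1 := by
    intro y _ hy0
    rw [← pow_mul, mul_comm e d, hde]
    exact hunit y hy0
  -- surjectivity of e-th power K* -> U_d
  have hαex : ∃ α : F, α ∈ K ∧ α ≠ 0 := by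
    by_cases hab' : a + b = 0
    · refine ⟨a * t₁ ^ q + b * t₁, hLK t₁, ?_⟩
      intro hcon
      apply ht₁
      have h3 : b * (t₁ - t₁ ^ q) = 0 := by linear_combination hcon - t₁ ^ q * hab'
      rcases mul_eq_zero.mp h3 with h4 | h4
      · exact absurd h4 hb0
      · linear_combination -h4
    · refine ⟨a * 1 ^ q + b * 1, hLK 1, ?_⟩
      rw [one_pow, mul_one, mul_one]
      exact hab'
  obtain ⟨α, hαK, hα0⟩ := hαex
  have hesurjK : ∀ z : F, z ^ d = 1 → ∃ kk : F, kk ∈ K ∧ kk ≠ 0 ∧ kk ^ e = z := by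
    intro z hz
    have hz0 : z ≠ 0 := by
      intro hcon; rw [hcon, zero_pow hd0.ne'] at hz; exact one_ne_zero hz.symm
    have hαe0 : α ^ e ≠ 0 := pow_ne_zero _ hα0
    have hαe : (α ^ e) ^ d = 1 := hKe α hαK hα0
    have hz' : (z * (α ^ e)⁻¹) ^ d = 1 := by
      rw [mul_pow, hz, inv_pow, hαe, inv_one, mul_one]
    obtain ⟨τ, hτq, hτe⟩ := aux_root F q d e hq2 hF hde hd0 hdodd ⟨s, hs⟩ _ hz'
    have hτ0 : τ ≠ 0 := by
      intro hcon
      rw [hcon, zero_pow he0.ne'] at hτe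
      exact (mul_ne_zero hz0 (inv_ne_zero hαe0)) hτe.symm
    refine ⟨α * τ, ?_, mul_ne_zero hα0 hτ0, ?_⟩
    · rw [hmemK, mul_pow, hτq]
      have hα : a * α ^ q = b ^ q * α := hαK
      linear_combination τ * hα
    · rw [mul_pow, hτe]
      field_simp
  -- MAIN IDENTITY : B f(x) + A f(x)^q + γ c = η (G x)
  have hmain : ∀ x : F, B * f x + A * (f x) ^ q +
      (u ^ (q + 1) - v ^ (q + 1)) * c = η (a * x ^ q + b * x + c) := by
    intro x
    have hGmem := hGK x
    rw [hmemK] at hGmem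
    have hGq' : (a * x ^ q + b * x + c) ^ q = ω * (a * x ^ q + b * x + c) := by
      refine mul_left_cancel₀ ha0 ?_
      rw [hGmem, ← hωa]; ring
    have hpowr : ((a * x ^ q + b * x + c) ^ r) ^ q =
        ω ^ r * (a * x ^ q + b * x + c) ^ r := by
      rw [← pow_mul, mul_comm r q, pow_mul, hGq', mul_pow]
    simp only [hf]
    rw [hη _, hΦf _]
    have hfq : ((a * x ^ q + b * x + c) ^ r *
        φ.eval ((a * x ^ q + b * x + c) ^ e) + u * x ^ q + v * x) ^ q =
        ω ^ r * (a * x ^ q + b * x + c) ^ r * (φ.eval ((a * x ^ q + b * x + c) ^ e)) ^ q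
          + u ^ q * x + v ^ q * x ^ q := by
      rw [hadd, hadd, mul_pow, mul_pow, mul_pow, hqq, hpowr]
    rw [hfq]
    have hγG : (u ^ (q + 1) - v ^ (q + 1)) * (a * x ^ q + b * x + c) =
        (u ^ (q + 1) - v ^ (q + 1)) * (a * x ^ q + b * x + c) ^ r := by
      rcases hγr1 with h1 | h1
      · rw [h1, zero_mul, zero_mul]
      · rw [h1, pow_one]
    linear_combination x ^ q * hBuAv + x * hBvAu + hγG
  -- STEP I : f bijective ↔ η BijOn K
  have stepI : Function.Bijective f ↔ Set.BijOn η K K := by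
    constructor
    · intro hfb
      have hmaps : Set.MapsTo η K K := by
        intro kk hkk
        obtain ⟨x, hx⟩ := hGsurj kk hkk
        have hm := hmain x
        rw [hx] at hm
        rw [← hm]
        exact hKadd _ _ (hΛK (f x)) hKγc
      have hsurj : Set.SurjOn η K K := by
        intro kk hkk
        obtain ⟨y, hy⟩ := hΛsurj (kk - (u ^ (q + 1) - v ^ (q + 1)) * c)
          (hKsub _ _ hkk hKγc)
        obtain ⟨x, hx⟩ := hfb.2 y
        refine ⟨a * x ^ q + b * x + c, hGK x, ?_⟩
        rw [← hmain x, hx]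
        linear_combination hy
      exact (Set.Finite.surjOn_iff_bijOn_of_mapsTo (Set.toFinite K) hmaps).mp hsurj
    · intro hηb
      apply Finite.injective_iff_bijective.mp
      intro x x' hxx
      have h1 : η (a * x ^ q + b * x + c) = η (a * x' ^ q + b * x' + c) := by
        rw [← hmain x, ← hmain x', hxx]
      have h2 : a * x ^ q + b * x + c = a * x' ^ q + b * x' + c :=
        hηb.injOn (hGK x) (hGK x') h1
      have h3 : a * (x - x') ^ q + b * (x - x') = 0 := by
        rw [hsub]
        linear_combination h2
      have h5 : u * x ^ q + v * x = u * x' ^ q + v * x' := by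
        have hfx := hxx
        simp only [hf] at hfx
        rw [h2] at hfx
        linear_combination hfx
      have h4 : u * (x - x') ^ q + v * (x - x') = 0 := by
        rw [hsub]
        linear_combination h5
      have h6 : A * (x - x') = 0 := by
        rw [hA]
        linear_combination u * h3 - a * h4
      rcases mul_eq_zero.mp h6 with h7 | h7
      · exact absurd h7 hA0'
      · exact sub_eq_zero.mp h7
  -- STEP II : η BijOn K ↔ h BijOn U_d
  have hpowcomm : ∀ kk : F, h (kk ^ e) = (η kk) ^ e := by
    intro kk
    rw [hhΦ, hη kk, mul_pow]
    congr 1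
    rw [← pow_mul, ← pow_mul, mul_comm e r]
  have stepII : Set.BijOn η K K ↔
      Set.BijOn h {x : F | x ^ d = 1} {x : F | x ^ d = 1} := by
    constructor
    · intro hηb
      have hmaps : Set.MapsTo h {x : F | x ^ d = 1} {x : F | x ^ d = 1} := by
        intro z hz
        obtain ⟨kk, hkK, hk0, hke⟩ := hesurjK z hz
        have hηk0 : η kk ≠ 0 := by
          intro hcon
          apply hk0
          exact hηb.injOn hkK hK0 (by rw [hcon, hη0])
        have hηkK : η kk ∈ K := hηb.mapsTo hkK
        show h z ^ d = 1
        rw [← hke, hpowcomm kk]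
        exact hKe _ hηkK hηk0
      have hsurj : Set.SurjOn h {x : F | x ^ d = 1} {x : F | x ^ d = 1} := by
        intro w hw
        obtain ⟨k', hk'K, hk'0, hk'e⟩ := hesurjK w hw
        obtain ⟨kk, hkK, hkk⟩ := hηb.surjOn hk'K
        have hk0 : kk ≠ 0 := by
          intro hcon
          rw [hcon, hη0] at hkk
          exact hk'0 hkk.symm
        refine ⟨kk ^ e, hKe kk hkK hk0, ?_⟩
        rw [hpowcomm kk, hkk, hk'e]
      exact (Set.Finite.surjOn_iff_bijOn_of_mapsTo (Set.toFinite _) hmaps).mp hsurj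
    · intro hhb
      have h0notU : (0 : F) ∉ {x : F | x ^ d = 1} := by
        intro hcon
        have h9 : (0 : F) ^ d = 1 := hcon
        rw [zero_pow hd0.ne'] at h9
        exact one_ne_zero h9.symm
      have hmaps : Set.MapsTo η K K := fun y hy => hηK y hy
      have hinj : Set.InjOn η K := by
        intro k₁ h₁ k₂ h₂ heqq
        by_cases hz₁ : k₁ = 0
        · by_cases hz₂ : k₂ = 0
          · rw [hz₁, hz₂]
          · exfalso
            rw [hz₁, hη0] at heqq
            have he₂ : k₂ ^ e ∈ {x : F | x ^ d = 1} := hKe k₂ h₂ hz₂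
            have h9 : h (k₂ ^ e) = 0 := by rw [hpowcomm, ← heqq, zero_pow he0.ne']
            exact h0notU (h9 ▸ hhb.mapsTo he₂)
        · by_cases hz₂ : k₂ = 0
          · exfalso
            rw [hz₂, hη0] at heqq
            have he₁ : k₁ ^ e ∈ {x : F | x ^ d = 1} := hKe k₁ h₁ hz₁
            have h9 : h (k₁ ^ e) = 0 := by rw [hpowcomm, heqq, zero_pow he0.ne']
            exact h0notU (h9 ▸ hhb.mapsTo he₁)
          · have he₁ : k₁ ^ e ∈ {x : F | x ^ d = 1} := hKe k₁ h₁ hz₁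
            have he₂ : k₂ ^ e ∈ {x : F | x ^ d = 1} := hKe k₂ h₂ hz₂
            have hh₁ : h (k₁ ^ e) = h (k₂ ^ e) := by
              rw [hpowcomm, hpowcomm, heqq]
            have hee : k₁ ^ e = k₂ ^ e := hhb.injOn he₁ he₂ hh₁
            have hΦne : Φf (k₁ ^ e) ≠ 0 := by
              intro hcon
              have hz : h (k₁ ^ e) = 0 := by
                rw [hhΦ, hcon, zero_pow he0.ne', mul_zero]
              exact h0notU (hz ▸ hhb.mapsTo he₁)
            have hrr : k₁ ^ r = k₂ ^ r := by
              have hexp : k₁ ^ r * Φf (k₁ ^ e) = k₂ ^ r * Φf (k₂ ^ e) := by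
                rw [← hη k₁, ← hη k₂]; exact heqq
              rw [← hee] at hexp
              exact mul_right_cancel₀ hΦne hexp
            have hδr : (k₁ * k₂⁻¹) ^ r = 1 := by
              rw [mul_pow, inv_pow, hrr, mul_inv_cancel₀ (pow_ne_zero _ hz₂)]
            have hδe : (k₁ * k₂⁻¹) ^ e = 1 := by
              rw [mul_pow, inv_pow, hee, mul_inv_cancel₀ (pow_ne_zero _ hz₂)]
            have hδ := hδ1 _ hδr hδe
            have h9 : k₁ / k₂ = 1 := by rwa [div_eq_mul_inv]
            exact (div_eq_one_iff_eq hz₂).mp h9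
      exact (Set.Finite.injOn_iff_bijOn_of_mapsTo (Set.toFinite _) hmaps).mp hinj
  exact stepI.trans stepII
end

section
/- Let q be a prime power and let d ≥ 2 be an even divisor of q−1. Let ξ be a primitive element of F_{q²}. Let a, b, c ∈ F_{q²} and j ∈ ℤ satisfy a·b ≠ 0, b = ξ^{(q−1)·j}·a^q and a·c^q = b^q·c, and assume b·u ≠ a·v. Let u, v ∈ F_{q²} and the positive integer r satisfy either (u^{q+1} = v^{q+1} and gcd(r, (q²−1)/d) = 1) or (u^{q+1} ≠ v^{q+1} and r = 1). Let φ be a polynomial over F_{q²}, define f(x) = (a·x^q + b·x + c)^r · φ((a·x^q + b·x + c)^{(q²−1)/d}) + u·x^q + v·x and h(x) = x^r·[B·φ(x) + A^{1−r}·B^{q·r}·φ(x)^q + u^{q+1} − v^{q+1}]^{(q²−1)/d}. Then: (i) if j is even, f is a permutation polynomial of F_{q²} if and only if h permutes U_{d/2}; (ii) if j is odd, f is a permutation polynomial of F_{q²} if and only if x ↦ h(x) is a bijection of the set U_d \ U_{d/2}. -/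
set_option maxHeartbeats 4000000 in
theorem stmt_3 {F : Type*} [Field F] [Fintype F]
    (q : ℕ) (hq : IsPrimePow q) (hF : Fintype.card F = q ^ 2)
    (d : ℕ) (hd2 : 2 ≤ d) (hdeven : Even d) (hdvd : d ∣ q - 1)
    (ξ : F) (hξ : orderOf ξ = q ^ 2 - 1)
    (a b c u v : F) (j : ℤ) (hab : a * b ≠ 0)
    (hb : b = ξ ^ (((q : ℤ) - 1) * j) * a ^ q)
    (hac : a * c ^ q = b ^ q * c)
    (hA0 : b * u ≠ a * v)
    (r : ℕ) (hr : 0 < r)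
    (huvr : (u ^ (q + 1) = v ^ (q + 1) ∧ Nat.gcd r ((q ^ 2 - 1) / d) = 1) ∨
      (u ^ (q + 1) ≠ v ^ (q + 1) ∧ r = 1))
    (φ : Polynomial F)
    (A B : F) (hA : A = b * u - a * v) (hB : B = a * u ^ q - b * v ^ q)
    (f h : F → F)
    (hf : f = fun x => (a * x ^ q + b * x + c) ^ r *
      φ.eval ((a * x ^ q + b * x + c) ^ ((q ^ 2 - 1) / d)) + u * x ^ q + v * x)
    (hh : h = fun x => x ^ r * (B * φ.eval x +
      A * (A ^ r)⁻¹ * B ^ (q * r) * (φ.eval x) ^ q +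
      u ^ (q + 1) - v ^ (q + 1)) ^ ((q ^ 2 - 1) / d)) :
    (Even j → (Function.Bijective f ↔
      Set.BijOn h {x : F | x ^ (d / 2) = 1} {x : F | x ^ (d / 2) = 1})) ∧
    (Odd j → (Function.Bijective f ↔
      Set.BijOn h ({x : F | x ^ d = 1} \ {x : F | x ^ (d / 2) = 1})
        ({x : F | x ^ d = 1} \ {x : F | x ^ (d / 2) = 1}))) := by
  classical
  have hq2 : 2 ≤ q := hq.two_le
  obtain ⟨m, hmm⟩ := hdeven
  have hm' : d = 2 * m := by omega
  have hm0 : 0 < m := by omega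
  have hd0 : 0 < d := by omega
  have hqodd : q % 2 = 1 := by
    obtain ⟨e', he'⟩ := hdvd
    have h2 : q - 1 = 2 * (m * e') := by rw [he', hm']; ring
    omega
  have hq3 : 3 ≤ q := by omega
  have hq29 : 9 ≤ q ^ 2 := by calc (9:ℕ) = 3^2 := by norm_num
                                _ ≤ q^2 := Nat.pow_le_pow_left hq3 2
  have hq21 : q ^ 2 - 1 = (q - 1) * (q + 1) := by
    have h := Nat.sq_sub_sq q 1
    simpa [Nat.mul_comm] using h
  obtain ⟨e, he⟩ := hdvd
  have he0 : 0 < e := by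
    rcases Nat.eq_zero_or_pos e with rfl | h
    · rw [mul_zero] at he; omega
    · exact h
  have hEeq : (q ^ 2 - 1) / d = e * (q + 1) := by
    refine Nat.div_eq_of_eq_mul_left hd0 ?_
    rw [hq21, he]; ring
  have hEpos : 0 < (q ^ 2 - 1) / d := by rw [hEeq]; exact Nat.mul_pos he0 (by omega)
  have hq0ne : q ≠ 0 := by omega
  -- characteristic
  obtain ⟨p, kk, hpp, hkk, hpq⟩ := hq
  have hp' : Nat.Prime p := hpp.nat_prime
  have hρp : Nat.Prime (ringChar F) := CharP.char_is_prime F (ringChar F)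
  obtain ⟨nn, _, hcard⟩ := FiniteField.card F (ringChar F)
  have hqp : ringChar F = p := by
    have h1 : ringChar F ^ (nn : ℕ) = p ^ (2 * kk) := by
      rw [← hcard, hF, ← hpq, ← pow_mul, mul_comm kk 2]
    have h2 : ringChar F ∣ p ^ (2 * kk) := by
      rw [← h1]; exact dvd_pow_self _ (by positivity)
    exact (Nat.prime_dvd_prime_iff_eq hρp hp').1 (hρp.dvd_of_dvd_pow h2)
  haveI : Fact (Nat.Prime (ringChar F)) := ⟨hρp⟩
  have hfrob : ∀ x y : F, (x + y) ^ q = x ^ q + y ^ q := by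
    intro x y
    rw [← hpq, ← hqp]
    exact add_pow_char_pow x y (ringChar F) kk
  have hfrobs : ∀ x y : F, (x - y) ^ q = x ^ q - y ^ q := by
    intro x y
    rw [← hpq, ← hqp]
    exact sub_pow_char_pow x y kk
  have hpc : ∀ x : F, x ^ (q ^ 2) = x := by
    intro x; rw [← hF]; exact FiniteField.pow_card x
  have hqq : ∀ x : F, (x ^ q) ^ q = x := by
    intro x; rw [← pow_mul, show q * q = q ^ 2 from (pow_two q).symm]; exact hpc x
  have hfix : ∀ x : F, (x ^ (q + 1)) ^ q = x ^ (q + 1) := by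
    intro x
    rw [← pow_mul, show (q+1) * q = q*q + q by ring, pow_add, pow_mul, hqq,
      show x * x ^ q = x ^ (q+1) by rw [pow_succ, mul_comm]]
  -- xi facts
  have hq20 : q ^ 2 - 1 ≠ 0 := by omega
  have hξpow : ξ ^ (q ^ 2 - 1) = 1 := by rw [← hξ]; exact pow_orderOf_eq_one ξ
  have hξ0 : ξ ≠ 0 := fun h => by
    rw [h, zero_pow hq20] at hξpow; exact zero_ne_one hξpow
  have hξZ : ∀ z : ℤ, ξ ^ (((q ^ 2 - 1 : ℕ) : ℤ) * z) = 1 := by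
    intro z
    rw [zpow_mul, zpow_natCast, hξpow, one_zpow]
  have hξper : ∀ z s : ℤ, ξ ^ (z + ((q ^ 2 - 1 : ℕ) : ℤ) * s) = ξ ^ z := by
    intro z s
    rw [zpow_add₀ hξ0, hξZ, mul_one]
  have hcast : ((q ^ 2 - 1 : ℕ) : ℤ) = (q : ℤ) ^ 2 - 1 := by
    have : 1 ≤ q ^ 2 := by omega
    push_cast [Nat.cast_sub this]
    ring
  -- counting lemma
  have ntf : ∀ n : ℕ, 0 < n → n ∣ q ^ 2 - 1 →
      ({x : F | x ^ n = 1}.ncard = n ∧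
        ∀ x : F, x ^ n = 1 → ∃ k : ℕ, x = (ξ ^ ((q ^ 2 - 1) / n)) ^ k) := by
    intro n hn hnd
    obtain ⟨nc, hnc⟩ := hnd
    have hnc0 : 0 < nc := by
      rcases Nat.eq_zero_or_pos nc with rfl | h
      · rw [mul_zero] at hnc; omega
      · exact h
    have hdivnc : (q ^ 2 - 1) / n = nc := by rw [hnc, Nat.mul_div_cancel_left _ hn]
    set ζ : F := ξ ^ ((q ^ 2 - 1) / n) with hζ
    have hordζ : orderOf ζ = n := by
      have h1 : ζ = (((Units.mk0 ξ hξ0) ^ ((q ^ 2 - 1) / n) : Fˣ) : F) := by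
        rw [hζ]; simp
      have h2 : orderOf (Units.mk0 ξ hξ0) = q ^ 2 - 1 := by
        rw [← hξ]; exact (orderOf_units (y := Units.mk0 ξ hξ0)).symm
      rw [h1, orderOf_units, orderOf_pow, h2, hdivnc, Nat.gcd_eq_right ⟨n, by rw [hnc]; ring⟩,
        hnc, Nat.mul_div_cancel _ hnc0]
    have hζn : ζ ^ n = 1 := by rw [← hordζ]; exact pow_orderOf_eq_one ζ
    have hprim : IsPrimitiveRoot ζ n := hordζ ▸ IsPrimitiveRoot.orderOf ζ
    have hcardU : (Polynomial.nthRootsFinset n (1 : F)).card = n := hprim.card_nthRootsFinset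
    have hsubf : (Finset.range n).image (ζ ^ ·) ⊆ Polynomial.nthRootsFinset n (1 : F) := by
      intro x hx
      simp only [Finset.mem_image, Finset.mem_range] at hx
      obtain ⟨k, _, rfl⟩ := hx
      rw [Polynomial.mem_nthRootsFinset hn (1 : F), ← pow_mul, mul_comm, pow_mul, hζn, one_pow]
    have hinjon : Set.InjOn (ζ ^ ·) ↑(Finset.range n) := by
      intro x hx y hy hxy
      have hx' : x ∈ Set.Iio (orderOf ζ) := by
        rw [hordζ]; simpa using hx
      have hy' : y ∈ Set.Iio (orderOf ζ) := by
        rw [hordζ]; simpa using hy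
      exact pow_injOn_Iio_orderOf hx' hy' hxy
    have hcardim : ((Finset.range n).image (ζ ^ ·)).card = n := by
      rw [Finset.card_image_of_injOn hinjon, Finset.card_range]
    have heqf : (Finset.range n).image (ζ ^ ·) = Polynomial.nthRootsFinset n (1 : F) :=
      Finset.eq_of_subset_of_card_le hsubf (by rw [hcardU, hcardim])
    have hseteq : {x : F | x ^ n = 1} = ↑(Polynomial.nthRootsFinset n (1 : F)) := by
      ext x
      simp [Polynomial.mem_nthRootsFinset hn (1 : F)]
    constructor
    · rw [hseteq, Set.ncard_coe_finset, hcardU]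
    · intro x hx
      have hmem : x ∈ Polynomial.nthRootsFinset n (1 : F) := (Polynomial.mem_nthRootsFinset hn (1 : F)).2 hx
      rw [← heqf] at hmem
      simp only [Finset.mem_image, Finset.mem_range] at hmem
      obtain ⟨k, _, hk⟩ := hmem
      exact ⟨k, hk.symm⟩
  -- part 2: basic elements
  have ha0 : a ≠ 0 := fun h0 => hab (by rw [h0, zero_mul])
  have hb0 : b ≠ 0 := fun h0 => hab (by rw [h0, mul_zero])
  have hA0' : A ≠ 0 := by rw [hA]; exact sub_ne_zero.2 hA0
  set ε : F := ξ ^ (((q : ℤ) - 1) * j) with hεdef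
  have hε0 : ε ≠ 0 := zpow_ne_zero _ hξ0
  have hεq1 : ε ^ (q + 1) = 1 := by
    calc ε ^ (q+1) = ε ^ (((q+1 : ℕ) : ℤ)) := (zpow_natCast _ _).symm
      _ = ξ ^ ((((q:ℤ) - 1) * j) * ((q+1 : ℕ) : ℤ)) := by rw [hεdef, ← zpow_mul]
      _ = ξ ^ ((0:ℤ) + ((q ^ 2 - 1 : ℕ) : ℤ) * j) := by
          congr 1
          rw [hcast]
          push_cast
          ring
      _ = ξ ^ (0:ℤ) := hξper 0 j
      _ = 1 := zpow_zero ξ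
  have hεε : ε ^ q * ε = 1 := by rw [← pow_succ]; exact hεq1
  have hεε' : ε * ε ^ q = 1 := by rw [mul_comm]; exact hεε
  have hbqq : b ^ q = ε ^ q * a := by rw [hb, mul_pow, hqq]
  have hεa : ε * b ^ q = a := by
    rw [hbqq, ← mul_assoc, hεε', one_mul]
  have hBqA : ε * B ^ q = A := by
    have h1 : B ^ q = a ^ q * u - b ^ q * v := by
      rw [hB, hfrobs, mul_pow, mul_pow, hqq, hqq]
    rw [h1, hA]
    linear_combination (-u) * hb + (-v) * hεa
  have hB0 : B ≠ 0 := by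
    intro h0
    rw [h0, zero_pow hq0ne, mul_zero] at hBqA
    exact hA0' hBqA.symm
  have hAqB : A ^ q = ε ^ q * B := by rw [← hBqA, mul_pow, hqq]
  have hBεA : ε * A ^ q = B := by rw [hAqB, ← mul_assoc, hεε', one_mul]
  have hcq : ε * c ^ q = c := by
    have h2 : a * (ε * c ^ q) = a * c := by
      rw [show a * (ε * c ^ q) = ε * (a * c ^ q) by ring, hac,
        show ε * (b ^ q * c) = (ε * b ^ q) * c by ring, hεa]
    exact mul_left_cancel₀ ha0 h2
  set D : F := u ^ (q + 1) - v ^ (q + 1) with hD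
  have hDq : D ^ q = D := by rw [hD, hfrobs, hfix, hfix]
  have hcoefa : B * u + A * v ^ q = a * D := by rw [hA, hB, hD]; ring
  have hcoefb : B * v + A * u ^ q = b * D := by rw [hA, hB, hD]; ring
  -- w0 and Vset
  set w0 : F := ξ ^ (-j) with hw0def
  have hw00 : w0 ≠ 0 := zpow_ne_zero _ hξ0
  have hw0q : ε * w0 ^ q = w0 := by
    have h1 : w0 ^ q = ξ ^ ((-j) * (q : ℤ)) := by
      rw [hw0def, ← zpow_natCast (ξ ^ (-j)) q, ← zpow_mul]
    rw [h1, hεdef, ← zpow_add₀ hξ0]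
    congr 1
    ring
  set Vset : Set F := {z : F | ε * z ^ q = z} with hVs
  have hVmemdef : ∀ z : F, z ∈ Vset ↔ ε * z ^ q = z := fun z => Iff.rfl
  have hVmem : ∀ z : F, z ∈ Vset ↔ ∃ y : F, (y = 0 ∨ y ^ (q - 1) = 1) ∧ z = w0 * y := by
    intro z
    rw [hVmemdef]
    constructor
    · intro hz
      refine ⟨z / w0, ?_, by field_simp⟩
      by_cases hz0 : z = 0
      · left; rw [hz0]; simp
      · right
        have hyq : (z / w0) ^ q = z / w0 := by
          rw [div_pow, ← mul_div_mul_left (z ^ q) (w0 ^ q) hε0, hz, hw0q]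
        have hy0 : z / w0 ≠ 0 := div_ne_zero hz0 hw00
        have hstep : (z / w0) ^ (q - 1) * (z / w0) = 1 * (z / w0) := by
          rw [← pow_succ, show q - 1 + 1 = q by omega, hyq, one_mul]
        exact mul_right_cancel₀ hy0 hstep
    · rintro ⟨y, hy, rfl⟩
      rcases hy with rfl | hy1
      · rw [mul_zero, zero_pow hq0ne, mul_zero]
      · have hyq : y ^ q = y := by
          rw [show q = q - 1 + 1 by omega, pow_succ, hy1, one_mul]
        rw [mul_pow, hyq, show ε * (w0 ^ q * y) = (ε * w0 ^ q) * y by ring, hw0q]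
  have hU1 := ntf (q - 1) (by omega) ⟨q + 1, by rw [hq21]⟩
  have hVeq : Vset = (fun y => w0 * y) '' ({y : F | y ^ (q - 1) = 1} ∪ {0}) := by
    ext z
    rw [hVmem z]
    constructor
    · rintro ⟨y, hy, rfl⟩
      exact ⟨y, by rcases hy with rfl | hy1; exacts [Or.inr rfl, Or.inl hy1], rfl⟩
    · rintro ⟨y, hy, rfl⟩
      exact ⟨y, by rcases hy with hy1 | rfl; exacts [Or.inr hy1, Or.inl rfl], rfl⟩
  have hVcard : Vset.ncard = q := by
    rw [hVeq, Set.ncard_image_of_injective _ (mul_right_injective₀ hw00),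
      Set.ncard_union_eq (by
        simp only [Set.disjoint_singleton_right, Set.mem_setOf_eq]
        rw [zero_pow (by omega : q - 1 ≠ 0)]
        exact zero_ne_one),
      hU1.1, Set.ncard_singleton]
    omega
  -- part 3 : range of semilinear maps
  have hline : ∀ P : F, P ≠ 0 →
      Vset ⊆ Set.range (fun x : F => P * x ^ q + (ε * P ^ q) * x) := by
    intro P hP
    set Q' : F := ε * P ^ q with hQ'
    have hQ'0 : Q' ≠ 0 := mul_ne_zero hε0 (pow_ne_zero _ hP)
    set hom : F →+ F := AddMonoidHom.mk' (fun x => P * x ^ q + Q' * x) (by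
      intro x y
      rw [hfrob]
      ring) with hhom
    have hPq2 : P ^ (q ^ 2 - 1) = 1 := by
      have h1 : P ^ (q ^ 2 - 1) * P = 1 * P := by
        rw [← pow_succ, show q ^ 2 - 1 + 1 = q ^ 2 by omega, hpc, one_mul]
      exact mul_right_cancel₀ hP h1
    set θ : F := -(Q' / P) with hθdef
    have hθ0 : θ ≠ 0 := by
      rw [hθdef]
      simp only [ne_eq, neg_eq_zero]
      exact fun h0 => hQ'0 (by
        have := div_eq_zero_iff.1 h0
        tauto)
    have hθ1 : θ ^ (q + 1) = 1 := by
      have heven : Even (q + 1) := Nat.even_iff.2 (by omega)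
      rw [hθdef, neg_pow, Even.neg_one_pow heven, one_mul, div_pow, hQ', mul_pow, hεq1,
        one_mul, ← pow_mul,
        show q * (q + 1) = (q ^ 2 - 1) + (q + 1) by
          have h5 : q * (q+1) = q ^ 2 + q := by ring
          omega,
        pow_add, hPq2, one_mul, div_self (pow_ne_zero _ hP)]
    obtain ⟨k, hk⟩ := (ntf (q + 1) (by omega) ⟨q - 1, by rw [hq21]; ring⟩).2 θ hθ1
    have hdiv : (q ^ 2 - 1) / (q + 1) = q - 1 := by
      rw [hq21, Nat.mul_div_cancel _ (by omega)]
    set x0 : F := ξ ^ k with hx0def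
    have hx00 : x0 ≠ 0 := pow_ne_zero _ hξ0
    have hx0 : x0 ^ (q - 1) = θ := by
      rw [hx0def, ← pow_mul, mul_comm, pow_mul, ← hdiv, ← hk]
    have hker : {x : F | P * x ^ q + Q' * x = 0}
        = {0} ∪ (fun z => x0 * z) '' {z : F | z ^ (q - 1) = 1} := by
      ext x
      simp only [Set.mem_setOf_eq, Set.mem_union, Set.mem_singleton_iff, Set.mem_image]
      constructor
      · intro hx
        by_cases hx0' : x = 0
        · exact Or.inl hx0'
        · refine Or.inr ⟨x / x0, ?_, by field_simp⟩
          have hxq : x ^ q = x ^ (q - 1) * x := by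
            rw [← pow_succ, show q - 1 + 1 = q by omega]
          rw [hxq] at hx
          have h2 : (P * x ^ (q - 1) + Q') * x = 0 := by linear_combination hx
          have h3 : P * x ^ (q - 1) + Q' = 0 := by
            rcases mul_eq_zero.1 h2 with h | h
            · exact h
            · exact absurd h hx0'
          have h4 : x ^ (q - 1) = θ := by
            rw [hθdef]
            field_simp
            linear_combination h3
          rw [div_pow, h4, hx0, div_self hθ0]
      · rintro (rfl | ⟨z, hz, rfl⟩)
        · rw [zero_pow hq0ne, mul_zero, mul_zero, add_zero]
        · have hxq1 : (x0 * z) ^ (q - 1) = θ := by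
            rw [mul_pow, hx0, hz, mul_one]
          have hxq : (x0 * z) ^ q = θ * (x0 * z) := by
            rw [show q = q - 1 + 1 by omega, pow_succ, hxq1]
          rw [hxq, hθdef]
          field_simp
          ring
    have hkercard : Nat.card hom.ker = q := by
      have hks : ((hom.ker : AddSubgroup F) : Set F) = {x : F | P * x ^ q + Q' * x = 0} := by
        ext x
        simp only [SetLike.mem_coe, AddMonoidHom.mem_ker, Set.mem_setOf_eq, hhom,
          AddMonoidHom.mk'_apply]
      have : Nat.card hom.ker = (({x : F | P * x ^ q + Q' * x = 0}) : Set F).ncard := by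
        rw [← hks, ← Nat.card_coe_set_eq]
        rfl
      rw [this, hker, Set.ncard_union_eq (by
          simp only [Set.disjoint_singleton_left, Set.mem_image, not_exists, Set.mem_setOf_eq]
          rintro z ⟨hz, hz0⟩
          rcases mul_eq_zero.1 hz0 with h0 | h0
          · exact hx00 h0
          · rw [h0, zero_pow (by omega : q - 1 ≠ 0)] at hz
            exact zero_ne_one hz),
        Set.ncard_singleton, Set.ncard_image_of_injective _ (mul_right_injective₀ hx00),
        hU1.1]
      omega
    have hrangecard : Nat.card hom.range = q := by
      have h1 : Nat.card F = Nat.card (F ⧸ hom.ker) * Nat.card hom.ker :=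
        AddSubgroup.card_eq_card_quotient_mul_card_addSubgroup hom.ker
      have h2 : Nat.card (F ⧸ hom.ker) = Nat.card hom.range :=
        Nat.card_congr (QuotientAddGroup.quotientKerEquivRange hom).toEquiv
      rw [Nat.card_eq_fintype_card, hF, hkercard, h2] at h1
      have hq0 : 0 < q := by omega
      have h3 : Nat.card hom.range * q = q * q := by
        rw [← h1, pow_two]
      exact Nat.eq_of_mul_eq_mul_right hq0 h3
    have hsubV : Set.range (fun x : F => P * x ^ q + Q' * x) ⊆ Vset := by
      rintro _ ⟨x, rfl⟩
      rw [hVmemdef]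
      simp only
      rw [hfrob, mul_pow, mul_pow, hqq, hQ', mul_pow, hqq]
      linear_combination (P * x ^ q) * hεε'
    have hrangeset : (Set.range fun x : F => P * x ^ q + Q' * x) = ((hom.range : AddSubgroup F) : Set F) := by
      ext z
      simp only [Set.mem_range, SetLike.mem_coe, AddMonoidHom.mem_range, hhom,
        AddMonoidHom.mk'_apply]
    have hVsub : (Set.range fun x : F => P * x ^ q + Q' * x) = Vset := by
      apply Set.eq_of_subset_of_ncard_le hsubV
      rw [hVcard, hrangeset, ← Nat.card_coe_set_eq]
      have : Nat.card ((hom.range : AddSubgroup F) : Set F) = Nat.card hom.range := rfl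
      rw [this, hrangecard]
    rw [hVsub]
  have hNsurj : Vset ⊆ Set.range (fun y : F => A * y ^ q + B * y) := by
    have h1 := hline A hA0'
    simp only [hBεA] at h1
    exact h1
  -- part 4 : the structural identity
  set T : F → F := fun x => a * x ^ q + b * x + c with hT
  set ψ : F → F := fun t => t ^ r * φ.eval (t ^ ((q ^ 2 - 1) / d)) with hψ
  set g : F → F := fun t => A * (ψ t) ^ q + B * (ψ t) + D * (t - c) with hg
  have hfT : ∀ x : F, f x = ψ (T x) + (u * x ^ q + v * x) := by
    intro x
    rw [hf, hψ, hT]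
    ring
  have hstar : ∀ x : F, A * (f x) ^ q + B * (f x) = g (T x) := by
    intro x
    have hLq : (u * x ^ q + v * x) ^ q = u ^ q * x + v ^ q * x ^ q := by
      rw [hfrob, mul_pow, mul_pow, hqq]
    have hfq : (f x) ^ q = (ψ (T x)) ^ q + (u ^ q * x + v ^ q * x ^ q) := by
      rw [hfT, hfrob, hLq]
    rw [hfq, hfT x, hg, hT]
    simp only
    linear_combination (x ^ q) * hcoefa + x * hcoefb
  have hTv : ∀ x : F, T x ∈ Vset := by
    intro x
    rw [hVmemdef, hT]
    simp only
    rw [hfrob, hfrob, mul_pow, mul_pow, hqq]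
    linear_combination (x ^ q) * hεa + hcq - x * hb
  have hVadd : ∀ z w : F, z ∈ Vset → w ∈ Vset → z + w ∈ Vset := by
    intro z w hz hw
    rw [hVmemdef] at *
    rw [hfrob]
    linear_combination hz + hw
  have hVsubm : ∀ z w : F, z ∈ Vset → w ∈ Vset → z - w ∈ Vset := by
    intro z w hz hw
    rw [hVmemdef] at *
    rw [hfrobs]
    linear_combination hz - hw
  have hDmul : ∀ z : F, z ∈ Vset → D * z ∈ Vset := by
    intro z hz
    rw [hVmemdef] at *
    rw [mul_pow]
    linear_combination (ε * z ^ q) * hDq + D * hz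
  have hcV : c ∈ Vset := hcq
  have hNV : ∀ y : F, A * y ^ q + B * y ∈ Vset := by
    intro y
    rw [hVmemdef, hfrob, mul_pow, mul_pow, hqq]
    linear_combination y * hBεA + (y ^ q) * hBqA
  have hgmaps : Set.MapsTo g Vset Vset := by
    intro t ht
    rw [hg]
    simp only
    exact hVadd _ _ (hNV (ψ t)) (hDmul _ (hVsubm _ _ ht hcV))
  -- Part A
  have hPartA : Function.Bijective f ↔ Set.InjOn g Vset := by
    constructor
    · intro hfb
      have hsurj : Set.SurjOn g Vset Vset := by
        intro z hz
        obtain ⟨y, hy⟩ := hNsurj hz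
        obtain ⟨x, rfl⟩ := hfb.surjective y
        exact ⟨T x, hTv x, by rw [← hstar x]; exact hy⟩
      exact (((Set.toFinite Vset).surjOn_iff_bijOn_of_mapsTo hgmaps).1 hsurj).injOn
    · intro hginj
      rw [← Finite.injective_iff_bijective]
      intro x x' hxx
      have hTeq : T x = T x' := by
        apply hginj (hTv x) (hTv x')
        rw [← hstar, ← hstar, hxx]
      have hk1 : a * (x - x') ^ q + b * (x - x') = 0 := by
        have h1 : T x - T x' = 0 := by rw [hTeq, sub_self]
        rw [hT] at h1
        simp only at h1
        rw [hfrobs]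
        linear_combination h1
      have hk2 : u * (x - x') ^ q + v * (x - x') = 0 := by
        have hfe : f x = f x' := hxx
        rw [hfT, hfT, hTeq] at hfe
        rw [hfrobs]
        linear_combination hfe
      have hAk : A * (x - x') = 0 := by
        rw [hA]
        linear_combination u * hk1 - a * hk2
      have := (mul_eq_zero.1 hAk).resolve_left hA0'
      exact sub_eq_zero.1 this
  -- part 5 : multiplicative form
  set G : F → F := fun x => B * φ.eval x + A * (A ^ r) ⁻¹ * B ^ (q * r) * (φ.eval x) ^ q + D
    with hG
  set FV : F → F := fun t => t ^ r * G (t ^ ((q ^ 2 - 1) / d)) with hFV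
  have hhG : h = fun x => x ^ r * (G x) ^ ((q ^ 2 - 1) / d) := by
    rw [hh, hG, hD]
    funext x
    simp only
    congr 1
    congr 1
    ring
  have hεqr : ε ^ (q * r) * ε ^ r = 1 := by
    rw [← pow_add, show q * r + r = (q + 1) * r by ring, pow_mul, hεq1, one_pow]
  have hcoefG : A * (A ^ r)⁻¹ * B ^ (q * r) = A * ε ^ (q * r) := by
    have har : A ^ r = ε ^ r * B ^ (q * r) := by
      rw [← hBqA, mul_pow, ← pow_mul]
    have hBr0 : B ^ (q * r) ≠ 0 := pow_ne_zero _ hB0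
    have hεr0 : ε ^ r ≠ 0 := pow_ne_zero _ hε0
    rw [har, mul_inv]
    rw [show A * ((ε ^ r)⁻¹ * (B ^ (q * r))⁻¹) * B ^ (q * r)
        = A * (ε ^ r)⁻¹ * ((B ^ (q * r))⁻¹ * B ^ (q * r)) by ring,
      inv_mul_cancel₀ hBr0, mul_one, inv_eq_of_mul_eq_one_left hεqr]
  have hgF : ∀ t ∈ Vset, g t + D * c = FV t := by
    intro t ht
    rw [hVmemdef] at ht
    have htq : t ^ q = ε ^ q * t := by
      calc t ^ q = (ε ^ q * ε) * t ^ q := by rw [hεε, one_mul]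
        _ = ε ^ q * t := by rw [mul_assoc, ht]
    have hψq : (ψ t) ^ q = ε ^ (q * r) * t ^ r * (φ.eval (t ^ ((q ^ 2 - 1) / d))) ^ q := by
      rw [hψ]
      simp only
      rw [mul_pow, ← pow_mul, mul_comm r q, pow_mul, htq, mul_pow, ← pow_mul]
    rw [hg, hFV, hG]
    simp only
    rw [hψq, hψ]
    simp only
    rcases huvr with ⟨huv, _⟩ | ⟨_, hr1⟩
    · have hD0 : D = 0 := by rw [hD]; exact sub_eq_zero.2 huv
      rw [hD0]
      linear_combination (t ^ r * (φ.eval (t ^ ((q ^ 2 - 1) / d))) ^ q) * hcoefG.symm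
    · subst hr1
      simp only [pow_one]
      linear_combination (t * (φ.eval (t ^ ((q ^ 2 - 1) / d))) ^ q) * hcoefG.symm
  -- Part B
  have hPartB : Set.InjOn g Vset ↔ Set.InjOn FV Vset := by
    constructor
    · intro H t ht t' ht' heq
      apply H ht ht'
      have h1 : g t + D * c = g t' + D * c := by rw [hgF t ht, hgF t' ht', heq]
      exact add_right_cancel h1
    · intro H t ht t' ht' heq
      apply H ht ht'
      rw [← hgF t ht, ← hgF t' ht', heq]
  -- part C setup
  set Sset : Set F := (fun t => t ^ ((q ^ 2 - 1) / d)) '' (Vset \ {0}) with hSs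
  have hEne : (q ^ 2 - 1) / d ≠ 0 := by omega
  have hr0 : r ≠ 0 := hr.ne'
  have hS0 : (0 : F) ∉ Sset := by
    rintro ⟨t, ⟨htV, ht0⟩, hte⟩
    exact ht0 (pow_eq_zero_iff hEne |>.1 hte)
  have hcomm : ∀ t : F, h (t ^ ((q ^ 2 - 1) / d)) = (FV t) ^ ((q ^ 2 - 1) / d) := by
    intro t
    rw [hhG, hFV]
    simp only
    rw [mul_pow, ← pow_mul, ← pow_mul, mul_comm r ((q ^ 2 - 1) / d)]
  have hratio : ∀ t t' : F, t ∈ Vset \ {0} → t' ∈ Vset \ {0} →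
      t ^ ((q ^ 2 - 1) / d) = t' ^ ((q ^ 2 - 1) / d) → t ^ r = t' ^ r → t = t' := by
    intro t t' ⟨_, ht0⟩ ⟨_, ht'0⟩ hE hr'
    have ht0' : t ≠ 0 := ht0
    have ht'0' : t' ≠ 0 := ht'0
    have hθE : (t / t') ^ ((q ^ 2 - 1) / d) = 1 := by
      rw [div_pow, hE, div_self (pow_ne_zero _ ht'0')]
    have hθr : (t / t') ^ r = 1 := by
      rw [div_pow, hr', div_self (pow_ne_zero _ ht'0')]
    have hθ1 : t / t' = 1 := by
      rcases huvr with ⟨_, hgcd⟩ | ⟨_, hr1⟩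
      · have hdr : orderOf (t / t') ∣ r := orderOf_dvd_of_pow_eq_one hθr
        have hdE : orderOf (t / t') ∣ (q ^ 2 - 1) / d := orderOf_dvd_of_pow_eq_one hθE
        have : orderOf (t / t') ∣ 1 := hgcd ▸ Nat.dvd_gcd hdr hdE
        have h1 : orderOf (t / t') = 1 := Nat.dvd_one.1 this
        exact orderOf_eq_one_iff.1 h1
      · rw [← pow_one (t / t'), ← hr1]
        exact hθr
    field_simp at hθ1
    exact hθ1
  -- Part C
  have hPartC : Set.InjOn FV Vset ↔ Set.BijOn h Sset Sset := by
    constructor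
    · intro hinj
      have h0V : (0 : F) ∈ Vset := by
        rw [hVmemdef, zero_pow hq0ne, mul_zero]
      have hFV00 : FV 0 = 0 := by
        rw [hFV]
        simp only
        rw [zero_pow hr0, zero_mul]
      have hmapsV : Set.MapsTo FV (Vset \ {0}) (Vset \ {0}) := by
        rintro t ⟨htV, ht0⟩
        refine ⟨?_, ?_⟩
        · rw [← hgF t htV]
          exact hVadd _ _ (hgmaps htV) (hDmul _ hcV)
        · intro h0
          exact ht0 (hinj htV h0V (by rw [hFV00]; exact h0))
      have hbijV : Set.BijOn FV (Vset \ {0}) (Vset \ {0}) :=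
        ((Set.toFinite _).injOn_iff_bijOn_of_mapsTo hmapsV).1 (hinj.mono Set.diff_subset)
      have hmapsS : Set.MapsTo h Sset Sset := by
        rintro x ⟨t, ht, rfl⟩
        exact ⟨FV t, hbijV.mapsTo ht, (hcomm t).symm⟩
      have hsurjS : Set.SurjOn h Sset Sset := by
        rintro x ⟨t', ht', rfl⟩
        obtain ⟨t, ht, hFt⟩ := hbijV.surjOn ht'
        exact ⟨t ^ ((q ^ 2 - 1) / d), ⟨t, ht, rfl⟩, by rw [hcomm t, hFt]⟩
      exact ((Set.toFinite _).surjOn_iff_bijOn_of_mapsTo hmapsS).1 hsurjS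
    · intro hbij
      have hG0 : ∀ x ∈ Sset, G x ≠ 0 := by
        intro x hx hGx
        have h1 : h x ∈ Sset := hbij.mapsTo hx
        rw [hhG] at h1
        simp only at h1
        rw [hGx, zero_pow hEne, mul_zero] at h1
        exact hS0 h1
      intro t htV t' ht'V heq
      by_cases ht0 : t = 0
      · by_cases ht'0 : t' = 0
        · rw [ht0, ht'0]
        · exfalso
          have hxS : t' ^ ((q ^ 2 - 1) / d) ∈ Sset := ⟨t', ⟨ht'V, ht'0⟩, rfl⟩
          have h2 : FV t' ≠ 0 := by
            rw [hFV]
            exact mul_ne_zero (pow_ne_zero _ ht'0) (hG0 _ hxS)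
          apply h2
          rw [← heq, ht0, hFV]
          simp only
          rw [zero_pow hr0, zero_mul]
      · by_cases ht'0 : t' = 0
        · exfalso
          have hxS : t ^ ((q ^ 2 - 1) / d) ∈ Sset := ⟨t, ⟨htV, ht0⟩, rfl⟩
          have h2 : FV t ≠ 0 := by
            rw [hFV]
            exact mul_ne_zero (pow_ne_zero _ ht0) (hG0 _ hxS)
          apply h2
          rw [heq, ht'0, hFV]
          simp only
          rw [zero_pow hr0, zero_mul]
        · have hxS : t ^ ((q ^ 2 - 1) / d) ∈ Sset := ⟨t, ⟨htV, ht0⟩, rfl⟩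
          have hx'S : t' ^ ((q ^ 2 - 1) / d) ∈ Sset := ⟨t', ⟨ht'V, ht'0⟩, rfl⟩
          have hE : t ^ ((q ^ 2 - 1) / d) = t' ^ ((q ^ 2 - 1) / d) := by
            apply hbij.injOn hxS hx'S
            rw [hcomm, hcomm, heq]
          have hreq : t ^ r = t' ^ r := by
            have h3 : t ^ r * G (t ^ ((q ^ 2 - 1) / d))
                = t' ^ r * G (t ^ ((q ^ 2 - 1) / d)) := by
              conv_rhs => rw [hE]
              exact heq
            exact mul_right_cancel₀ (hG0 _ hxS) h3
          exact hratio t t' ⟨htV, ht0⟩ ⟨ht'V, ht'0⟩ hE hreq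
  -- Part D : identify Sset
  have hIFF : Function.Bijective f ↔ Set.BijOn h Sset Sset :=
    hPartA.trans (hPartB.trans hPartC)
  have hd2m : d / 2 = m := by omega
  have hgcd2 : Nat.gcd (q + 1) d = 2 := by
    apply Nat.dvd_antisymm
    · have h1 : Nat.gcd (q + 1) d ∣ q + 1 := Nat.gcd_dvd_left _ _
      have h2 : Nat.gcd (q + 1) d ∣ q - 1 := (Nat.gcd_dvd_right _ _).trans ⟨e, he⟩
      have h3 : Nat.gcd (q + 1) d ∣ (q + 1) - (q - 1) := Nat.dvd_sub h1 h2
      rw [show q + 1 - (q - 1) = 2 by omega] at h3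
      exact h3
    · exact Nat.dvd_gcd ⟨(q + 1) / 2, by omega⟩ ⟨m, hm'⟩
  have h2dvd : 2 ∣ q ^ 2 - 1 := ⟨e * (q + 1) * m, by rw [hq21, he, hm']; ring⟩
  have hhpos : 0 < (q ^ 2 - 1) / 2 := by omega
  have hηsq : ξ ^ ((q ^ 2 - 1) / 2) * ξ ^ ((q ^ 2 - 1) / 2) = 1 := by
    rw [← pow_add, show (q ^ 2 - 1) / 2 + (q ^ 2 - 1) / 2 = q ^ 2 - 1 by omega]
    exact hξpow
  have hηne : ξ ^ ((q ^ 2 - 1) / 2) ≠ 1 := by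
    intro h0
    have h1 := orderOf_dvd_of_pow_eq_one h0
    rw [hξ] at h1
    have h2 := Nat.le_of_dvd hhpos h1
    omega
  have hη : ξ ^ ((q ^ 2 - 1) / 2) = -1 := (mul_self_eq_one_iff.1 hηsq).resolve_left hηne
  have hne11 : (-1 : F) ≠ 1 := hη ▸ hηne
  have hEm : ((q ^ 2 - 1) / d) * m = (q ^ 2 - 1) / 2 := by
    have hhalf : (q ^ 2 - 1) / 2 = e * (q + 1) * m :=
      Nat.div_eq_of_eq_mul_left two_pos (by rw [hq21, he, hm']; ring)
    rw [hEeq, hhalf]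
  have hμcore : (w0 ^ ((q ^ 2 - 1) / d)) ^ m = (-1 : F) ^ (-j) := by
    rw [← pow_mul, hEm, hw0def, ← zpow_natCast (ξ ^ (-j)) ((q ^ 2 - 1) / 2), ← zpow_mul,
      mul_comm (-j) (((q ^ 2 - 1) / 2 : ℕ) : ℤ), zpow_mul, zpow_natCast, hη]
  set μ : F := w0 ^ ((q ^ 2 - 1) / d) with hμdef
  have hμ0 : μ ≠ 0 := pow_ne_zero _ hw00
  -- image of U_{q-1} under power map
  have hmdvd : m ∣ q ^ 2 - 1 := ⟨e * (q + 1) * 2, by rw [hq21, he, hm']; ring⟩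
  have hvm : (q ^ 2 - 1) / m = e * (q + 1) * 2 :=
    Nat.div_eq_of_eq_mul_left hm0 (by rw [hq21, he, hm']; ring)
  obtain ⟨s, hs⟩ : Odd q := Nat.odd_iff.2 hqodd
  have hUq1img : (fun y : F => y ^ ((q ^ 2 - 1) / d)) '' {y : F | y ^ (q - 1) = 1}
      = {x : F | x ^ m = 1} := by
    ext x
    constructor
    · rintro ⟨y, hy, rfl⟩
      have hy' : y ^ (q - 1) = 1 := hy
      show (y ^ ((q ^ 2 - 1) / d)) ^ m = 1
      have hhalf2 : (q ^ 2 - 1) / 2 = (q - 1) * (s + 1) :=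
        Nat.div_eq_of_eq_mul_left two_pos
          (by rw [hq21, show q + 1 = (s + 1) * 2 by omega]; ring)
      rw [← pow_mul, hEm, hhalf2, pow_mul, hy', one_pow]
    · intro hx
      have hx' : x ^ m = 1 := hx
      obtain ⟨k, hk⟩ := (ntf m hm0 hmdvd).2 x hx'
      obtain ⟨α, β, hbez⟩ : ∃ α β : ℤ, ((q : ℤ) + 1) * α + (d : ℤ) * β = 2 := by
        refine ⟨Nat.gcdA (q + 1) d, Nat.gcdB (q + 1) d, ?_⟩
        have h0 := Nat.gcd_eq_gcd_ab (q + 1) d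
        rw [hgcd2] at h0
        have h1 : ((2:ℕ) : ℤ) = ((q + 1 : ℕ) : ℤ) * Nat.gcdA (q + 1) d
            + ((d : ℕ) : ℤ) * Nat.gcdB (q + 1) d := h0
        push_cast at h1
        linarith
      refine ⟨ξ ^ ((q + 1 : ℤ) * (α * k)), ?_, ?_⟩
      · show (ξ ^ ((q + 1 : ℤ) * (α * k))) ^ (q - 1) = 1
        rw [← zpow_natCast (ξ ^ ((q + 1 : ℤ) * (α * k))) (q - 1), ← zpow_mul]
        rw [show ((q + 1 : ℤ) * (α * k)) * ((q - 1 : ℕ) : ℤ)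
            = ((q ^ 2 - 1 : ℕ) : ℤ) * (α * k) by
          rw [hcast]
          have : ((q - 1 : ℕ) : ℤ) = (q : ℤ) - 1 := by
            have h1 : 1 ≤ q := by omega
            push_cast [Nat.cast_sub h1]
            ring
          rw [this]
          ring]
        exact hξZ _
      · show (ξ ^ ((q + 1 : ℤ) * (α * k))) ^ ((q ^ 2 - 1) / d) = x
        rw [hk, hvm, hEeq]
        rw [← zpow_natCast (ξ ^ ((q + 1 : ℤ) * (α * k))) (e * (q + 1)), ← zpow_mul]
        rw [← pow_mul, ← zpow_natCast ξ (e * (q + 1) * 2 * k)]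
        rw [show ((q + 1 : ℤ) * (α * k)) * ((e * (q + 1) : ℕ) : ℤ)
            = ((e * (q + 1) * 2 * k : ℕ) : ℤ) + ((q ^ 2 - 1 : ℕ) : ℤ) * (-(β * k)) by
          rw [hcast]
          push_cast
          have hq2z : ((q : ℤ) ^ 2 - 1) = (d : ℤ) * ((e : ℤ) * ((q : ℤ) + 1)) := by
            have h9 : (q ^ 2 - 1 : ℕ) = d * (e * (q + 1)) := by rw [hq21, he]; ring
            rw [← hcast, h9]
            push_cast
            ring
          rw [hq2z]
          linear_combination ((e : ℤ) * ((q : ℤ) + 1) * (k : ℤ)) * hbez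
          ]
        rw [hξper]
  have hV0 : Vset \ {0} = (fun y => w0 * y) '' {y : F | y ^ (q - 1) = 1} := by
    ext t
    constructor
    · rintro ⟨htV, ht0⟩
      obtain ⟨y, hy, rfl⟩ := (hVmem t).1 htV
      rcases hy with rfl | hy1
      · exact absurd (mul_zero w0) ht0
      · exact ⟨y, hy1, rfl⟩
    · rintro ⟨y, hy, rfl⟩
      have hy' : y ^ (q - 1) = 1 := hy
      have hy0 : y ≠ 0 := by
        intro h0
        rw [h0, zero_pow (by omega : q - 1 ≠ 0)] at hy'
        exact zero_ne_one hy'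
      exact ⟨(hVmem _).2 ⟨y, Or.inr hy', rfl⟩, mul_ne_zero hw00 hy0⟩
  have hSval : Sset = (fun z => μ * z) '' {x : F | x ^ m = 1} := by
    rw [hSs, hV0, Set.image_image, ← hUq1img, Set.image_image]
    apply Set.image_congr'
    intro y
    rw [mul_pow, hμdef]
  refine ⟨fun hj => ?_, fun hj => ?_⟩
  · -- j even
    have hμm : μ ^ m = 1 := by
      rw [hμdef, hμcore, Even.neg_one_zpow hj.neg]
    have hcoset : (fun z => μ * z) '' {x : F | x ^ m = 1} = {x : F | x ^ m = 1} := by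
      ext x
      constructor
      · rintro ⟨z, hz, rfl⟩
        show (μ * z) ^ m = 1
        rw [mul_pow, hμm, hz, mul_one]
      · intro hx
        refine ⟨μ⁻¹ * x, ?_, by field_simp⟩
        show (μ⁻¹ * x) ^ m = 1
        rw [mul_pow, inv_pow, hμm, inv_one, hx, mul_one]
    have hfinal : Sset = {x : F | x ^ (d / 2) = 1} := by
      rw [hd2m, hSval, hcoset]
    rw [← hfinal]
    exact hIFF
  · -- j odd
    have hμm : μ ^ m = -1 := by
      rw [hμdef, hμcore, Odd.neg_one_zpow hj.neg]
    have hcoset : (fun z => μ * z) '' {x : F | x ^ m = 1}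
        = {x : F | x ^ d = 1} \ {x : F | x ^ m = 1} := by
      ext x
      constructor
      · rintro ⟨z, hz, rfl⟩
        have hz' : z ^ m = 1 := hz
        constructor
        · show (μ * z) ^ d = 1
          rw [hm', mul_comm 2 m, pow_mul, mul_pow, hμm, hz', mul_one, neg_one_sq]
        · show ¬(μ * z) ^ m = 1
          rw [mul_pow, hμm, hz', mul_one]
          exact hne11
      · rintro ⟨hxd, hxm⟩
        have hxd' : x ^ d = 1 := hxd
        have hxm' : ¬x ^ m = 1 := hxm
        have hsq : x ^ m * x ^ m = 1 := by
          rw [← pow_add, show m + m = d by omega, hxd']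
        have hxmneg : x ^ m = -1 := (mul_self_eq_one_iff.1 hsq).resolve_left hxm'
        refine ⟨μ⁻¹ * x, ?_, by field_simp⟩
        show (μ⁻¹ * x) ^ m = 1
        rw [mul_pow, inv_pow, hμm, hxmneg]
        norm_num
    have hfinal : Sset = {x : F | x ^ d = 1} \ {x : F | x ^ (d / 2) = 1} := by
      rw [hd2m, hSval, hcoset]
    rw [← hfinal]
    exact hIFF
end

section
/- Let q be a prime power and let a, b, c ∈ F_{q²} with a·b ≠ 0. Then the polynomial a·x^q + b·x + c is a permutation polynomial of F_{q²} if and only if a^{q+1} ≠ b^{q+1}. -/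
/-- In a finite field with `q ^ 2` elements, every unit `u` with `u ^ (q + 1) = 1` is a
`(q - 1)`-th power. -/
lemma aux_exists_pow_root {F : Type*} [Field F] [Fintype F]
    (q : ℕ) (hq2 : 2 ≤ q) (hF : Fintype.card F = q ^ 2)
    (u : Fˣ) (hu : u ^ (q + 1) = 1) : ∃ x : Fˣ, x ^ (q - 1) = u := by
  obtain ⟨g, hg⟩ := IsCyclic.exists_monoid_generator (α := Fˣ)
  obtain ⟨m, hm'⟩ := hg u
  have hm : g ^ m = u := hm'
  have hgz : ∀ x : Fˣ, x ∈ Subgroup.zpowers g := fun x =>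
    mem_powers_iff_mem_zpowers.mp (hg x)
  have hord : orderOf g = q ^ 2 - 1 := by
    rw [orderOf_eq_card_of_forall_mem_zpowers hgz, Nat.card_units,
      Nat.card_eq_fintype_card, hF]
  have hpow1 : g ^ (m * (q + 1)) = 1 := by
    rw [pow_mul, hm, hu]
  have hdvd : orderOf g ∣ m * (q + 1) := orderOf_dvd_of_pow_eq_one hpow1
  rw [hord] at hdvd
  have hfac : q ^ 2 - 1 = (q - 1) * (q + 1) := by
    have h1 : 1 ≤ q := by omega
    have h2 : 1 ≤ q ^ 2 := Nat.one_le_pow _ _ (by omega)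
    zify [h1, h2]
    ring
  rw [hfac] at hdvd
  have hdvd2 : q - 1 ∣ m :=
    (Nat.mul_dvd_mul_iff_right (show 0 < q + 1 by omega)).mp hdvd
  obtain ⟨t, ht⟩ := hdvd2
  exact ⟨g ^ t, by rw [← pow_mul, mul_comm, ← ht, hm]⟩

theorem stmt_4 {F : Type*} [Field F] [Fintype F]
    (q : ℕ) (hq : IsPrimePow q) (hF : Fintype.card F = q ^ 2)
    (a b c : F) (hab : a * b ≠ 0) :
    Function.Bijective (fun x : F => a * x ^ q + b * x + c) ↔
      a ^ (q + 1) ≠ b ^ (q + 1) := by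
  obtain ⟨p, k, hp, hk, hpk⟩ := hq
  have hpprime : Nat.Prime p := hp.nat_prime
  haveI : Fact p.Prime := ⟨hpprime⟩
  have ha : a ≠ 0 := fun h => hab (by rw [h, zero_mul])
  have hb : b ≠ 0 := fun h => hab (by rw [h, mul_zero])
  have hq2 : 2 ≤ q := by
    calc 2 ≤ p := hpprime.two_le
    _ ≤ p ^ k := Nat.le_self_pow (by omega) _
    _ = q := hpk
  -- the characteristic of F is p
  have hcardp : Fintype.card F = p ^ (2 * k) := by
    rw [hF, ← hpk, ← pow_mul, mul_comm]
  haveI hcharF : CharP F p := by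
    obtain ⟨n, hr, hcard⟩ := FiniteField.card F (ringChar F)
    have hrp : ringChar F = p := by
      have h1 : ringChar F ∣ p ^ (2 * k) := by
        rw [← hcardp, hcard]
        exact dvd_pow_self _ (by exact_mod_cast n.pos.ne')
      exact (Nat.prime_dvd_prime_iff_eq hr hpprime).mp (hr.dvd_of_dvd_pow h1)
    exact hrp ▸ ringChar.charP F
  have hfrob : ∀ x y : F, (x - y) ^ q = x ^ q - y ^ q := by
    intro x y
    rw [← hpk]
    exact sub_pow_char_pow x y k
  have hnegone : (-1 : F) ^ (q + 1) = 1 := by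
    rcases hpprime.eq_two_or_odd' with h2 | hodd
    · subst h2
      haveI : CharP F 2 := hcharF
      rw [CharTwo.neg_eq, one_pow]
    · have hqodd : Odd q := by rw [← hpk]; exact hodd.pow
      exact Even.neg_one_pow hqodd.add_one
  have hzz : ∀ z : F, z ^ (q ^ 2) = z := by
    intro z
    rw [← hF]; exact FiniteField.pow_card z
  constructor
  · -- bijective → a ^ (q+1) ≠ b ^ (q+1)
    intro hbij heq
    set u : F := -(b / a) with hu_def
    have hu0 : u ≠ 0 := by
      simp [hu_def, div_eq_zero_iff, hb, ha]
    have hupow : u ^ (q + 1) = 1 := by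
      have h1 : u ^ (q + 1) = (-1 : F) ^ (q + 1) * (b ^ (q + 1) / a ^ (q + 1)) := by
        rw [hu_def, neg_eq_neg_one_mul, mul_pow, div_pow]
      rw [h1, hnegone, one_mul, ← heq, div_self (pow_ne_zero _ ha)]
    set U : Fˣ := Units.mk0 u hu0 with hU_def
    have hUpow : U ^ (q + 1) = 1 := by
      ext
      rw [Units.val_pow_eq_pow_val, Units.val_one]
      exact hupow
    obtain ⟨x, hx⟩ := aux_exists_pow_root q hq2 hF U hUpow
    have hxval : (x : F) ^ (q - 1) = u := by
      have h := congrArg Units.val hx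
      rw [Units.val_pow_eq_pow_val] at h
      exact h
    have hxne : (x : F) ≠ 0 := x.ne_zero
    have hxq : (x : F) ^ q = u * x := by
      have h : (x : F) ^ q = (x : F) ^ (q - 1) * x := by
        rw [← pow_succ, Nat.sub_add_cancel (by omega)]
      rw [h, hxval]
    have hcontra : a * (x : F) ^ q + b * x + c = a * (0 : F) ^ q + b * 0 + c := by
      rw [hxq, zero_pow (show q ≠ 0 by omega), mul_zero, mul_zero, zero_add]
      have hau : a * u = -b := by
        rw [hu_def]
        field_simp
      linear_combination ((x : F)) * hau
    have := hbij.injective hcontra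
    exact hxne this
  · -- a ^ (q+1) ≠ b ^ (q+1) → bijective
    intro hne
    rw [← Finite.injective_iff_bijective]
    intro x y hxy
    simp only at hxy
    by_contra hxyne
    have hz : x - y ≠ 0 := sub_ne_zero.mpr hxyne
    set z := x - y with hz_def
    have hxy' : a * x ^ q + b * x = a * y ^ q + b * y := add_right_cancel hxy
    have h1 : a * z ^ q + b * z = 0 := by
      rw [hz_def, hfrob]
      linear_combination hxy'
    have h2 : a * z ^ q = -(b * z) := by linear_combination h1
    have h3 : a ^ q * z = (-1 : F) ^ q * (b ^ q * z ^ q) := by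
      calc a ^ q * z = a ^ q * z ^ (q ^ 2) := by rw [hzz]
      _ = (a * z ^ q) ^ q := by rw [mul_pow, ← pow_mul, pow_two]
      _ = (-(b * z)) ^ q := by rw [h2]
      _ = (-1 : F) ^ q * (b ^ q * z ^ q) := by
          rw [neg_eq_neg_one_mul, mul_pow, mul_pow]
    have h4 : a ^ (q + 1) * z = b ^ (q + 1) * z := by
      calc a ^ (q + 1) * z = a * (a ^ q * z) := by ring
      _ = a * ((-1 : F) ^ q * (b ^ q * z ^ q)) := by rw [h3]
      _ = (-1 : F) ^ q * b ^ q * (a * z ^ q) := by ring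
      _ = (-1 : F) ^ q * b ^ q * (-(b * z)) := by rw [h2]
      _ = (-1 : F) ^ (q + 1) * (b ^ (q + 1) * z) := by ring
      _ = b ^ (q + 1) * z := by rw [hnegone, one_mul]
    exact hne (mul_right_cancel₀ hz h4)
end

section
/- Let q be a prime power and let a, b, c, u, v ∈ F_{q²} satisfy a·b ≠ 0, a^{q+1} = b^{q+1}, a·c^q = b^q·c and b·u ≠ a·v. Let r be a positive integer and define f(x) = (a·x^q + b·x + c)^r + u·x^q + v·x and g(x) = (B + A^{1−r}·B^{q·r})·x^r + (u^{q+1} − v^{q+1})·x. Then f is a permutation polynomial of F_{q²} if and only if g permutes S. In particular: (i) if B + A^{1−r}·B^{q·r} = 0, then f is a permutation polynomial of F_{q²} if and only if u^{q+1} ≠ v^{q+1}; (ii) if u^{q+1} = v^{q+1}, then f is a permutation polynomial of F_{q²} if and only if B + A^{1−r}·B^{q·r} ≠ 0 and gcd(r, q−1) = 1. -/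
open Polynomial in
lemma aux_eigen_card_le {F : Type*} [Field F] [Fintype F] {q : ℕ} (hq2 : 2 ≤ q) (s : F) :
    Set.ncard {y : F | y ^ q = s * y} ≤ q := by
  classical
  set P : F[X] := X ^ q - C s * X with hP
  have hPne : P ≠ 0 := by
    intro h
    have := congrArg (fun p => Polynomial.coeff p q) h
    simp only [hP, Polynomial.coeff_sub, Polynomial.coeff_X_pow, if_pos rfl,
      Polynomial.coeff_C_mul, Polynomial.coeff_X, Polynomial.coeff_zero,
      if_neg (show ¬ (1 = q) by omega), mul_zero, sub_zero] at this
    exact one_ne_zero this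
  have hdeg : P.natDegree ≤ q := by
    apply le_trans (Polynomial.natDegree_sub_le _ _)
    simp only [Polynomial.natDegree_X_pow]
    have : (C s * X).natDegree ≤ 1 := by
      apply le_trans (Polynomial.natDegree_mul_le)
      simp
    omega
  have hsub : {y : F | y ^ q = s * y} ⊆ (P.roots.toFinset : Set F) := by
    intro y hy
    simp only [Set.mem_setOf_eq] at hy
    simp only [Finset.coe_sort_coe, Multiset.mem_toFinset, Finset.mem_coe]
    rw [Polynomial.mem_roots hPne]
    simp [Polynomial.IsRoot.def, hP, hy]
  calc Set.ncard {y : F | y ^ q = s * y} ≤ (P.roots.toFinset : Set F).ncard :=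
        Set.ncard_le_ncard hsub (Set.toFinite _)
    _ = P.roots.toFinset.card := Set.ncard_coe_finset _
    _ ≤ Multiset.card P.roots := Multiset.toFinset_card_le _
    _ ≤ P.natDegree := Polynomial.card_roots' P
    _ ≤ q := hdeg

lemma aux_range_card {F : Type*} [Field F] [Fintype F] {q : ℕ} (hq2 : 2 ≤ q)
    (hF : Fintype.card F = q ^ 2)
    (hadd : ∀ x y : F, (x + y) ^ q = x ^ q + y ^ q)
    {α β : F} (hα : α ≠ 0) :
    q ≤ Set.ncard (Set.range (fun y : F => α * y ^ q + β * y)) := by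
  set ρ : F →+ F := AddMonoidHom.mk' (fun y => α * y ^ q + β * y)
    (by intro x y; rw [hadd]; ring) with hρ
  have hcard : Nat.card F = Nat.card (F ⧸ ρ.ker) * Nat.card ρ.ker :=
    AddSubgroup.card_eq_card_quotient_mul_card_addSubgroup ρ.ker
  have he : Nat.card (F ⧸ ρ.ker) = Nat.card ρ.range :=
    Nat.card_congr (QuotientAddGroup.quotientKerEquivRange ρ).toEquiv
  have hker_le : Nat.card ρ.ker ≤ q := by
    have hsetker : (ρ.ker : Set F) = {y : F | y ^ q = (-β / α) * y} := by
      ext y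
      simp only [SetLike.mem_coe, AddMonoidHom.mem_ker, Set.mem_setOf_eq, hρ,
        AddMonoidHom.mk'_apply]
      constructor
      · intro h; field_simp; linear_combination h
      · intro h; field_simp at h; linear_combination h
    have := aux_eigen_card_le hq2 (-β / α) (F := F)
    rw [← hsetker] at this
    exact le_trans (le_of_eq (Nat.card_coe_set_eq _)) this
  have hker_pos : 0 < Nat.card ρ.ker := Nat.card_pos
  have hrange : q ≤ Nat.card ρ.range := by
    have h1 : Nat.card F = q * q := by
      rw [Nat.card_eq_fintype_card, hF, sq]
    have h2 : q * q ≤ Nat.card ρ.range * q := by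
      calc q * q = Nat.card (F ⧸ ρ.ker) * Nat.card ρ.ker := by rw [← h1, hcard]
        _ ≤ Nat.card (F ⧸ ρ.ker) * q := Nat.mul_le_mul_left _ hker_le
        _ = Nat.card ρ.range * q := by rw [he]
    exact Nat.le_of_mul_le_mul_right h2 (by omega)
  have : (ρ.range : Set F) = Set.range (fun y : F => α * y ^ q + β * y) := by
    ext y; simp [AddMonoidHom.mem_range, hρ, Set.mem_range, eq_comm]
  rw [← this]
  exact le_trans hrange (le_of_eq (Nat.card_coe_set_eq _))

theorem stmt_7 {F : Type*} [Field F] [Fintype F]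
    (q : ℕ) (hq : IsPrimePow q) (hF : Fintype.card F = q ^ 2)
    (a b c u v : F) (hab : a * b ≠ 0)
    (hab1 : a ^ (q + 1) = b ^ (q + 1)) (hac : a * c ^ q = b ^ q * c)
    (hA0 : b * u ≠ a * v)
    (r : ℕ) (hr : 0 < r)
    (A B : F) (hA : A = b * u - a * v) (hB : B = a * u ^ q - b * v ^ q)
    (S : Set F) (hS : S = {y : F | ∃ x : F, a * x ^ q + b * x + c = y})
    (f g : F → F)
    (hf : f = fun x => (a * x ^ q + b * x + c) ^ r + u * x ^ q + v * x)
    (hg : g = fun x => (B + A * (A ^ r)⁻¹ * B ^ (q * r)) * x ^ r +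
      (u ^ (q + 1) - v ^ (q + 1)) * x) :
    (Function.Bijective f ↔ Set.BijOn g S S) ∧
    (B + A * (A ^ r)⁻¹ * B ^ (q * r) = 0 →
      (Function.Bijective f ↔ u ^ (q + 1) ≠ v ^ (q + 1))) ∧
    (u ^ (q + 1) = v ^ (q + 1) →
      (Function.Bijective f ↔
        (B + A * (A ^ r)⁻¹ * B ^ (q * r) ≠ 0 ∧ Nat.gcd r (q - 1) = 1))) := by
  classical
  have hq2 : 2 ≤ q := hq.two_le
  have hq0 : q ≠ 0 := by omega
  -- characteristic
  obtain ⟨p, k, hp, hk, hpk⟩ := hq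
  have hpp : p.Prime := Nat.prime_iff.mpr hp
  haveI : Fact p.Prime := ⟨hpp⟩
  have hcardF : Fintype.card F = p ^ (2 * k) := by
    rw [hF, ← hpk, ← pow_mul, mul_comm k 2]
  have hchar : CharP F p := by
    obtain ⟨p', hp'⟩ := CharP.exists F
    haveI := hp'
    obtain ⟨n, hn, hcard⟩ := FiniteField.card F p'
    have hdvd : p' ∣ p ^ (2 * k) := by
      rw [← hcardF, hcard]
      exact dvd_pow_self p' (by positivity)
    have : p' = p := (Nat.prime_dvd_prime_iff_eq hn hpp).mp (hn.dvd_of_dvd_pow hdvd)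
    subst this; exact hp'
  haveI := hchar
  have hadd : ∀ x y : F, (x + y) ^ q = x ^ q + y ^ q := by
    intro x y; rw [← hpk]; exact add_pow_char_pow x y p k
  have hqq : ∀ x : F, (x ^ q) ^ q = x := by
    intro x
    rw [← pow_mul, ← sq, ← hF]
    exact FiniteField.pow_card x
  have hsub : ∀ x y : F, (x - y) ^ q = x ^ q - y ^ q := by
    intro x y
    have h := hadd (x - y) y
    rw [sub_add_cancel] at h
    linear_combination -h
  -- basic nonvanishing
  have ha : a ≠ 0 := fun h => hab (by rw [h, zero_mul])
  have hb : b ≠ 0 := fun h => hab (by rw [h, mul_zero])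
  have hab1' : a ^ q * a = b ^ q * b := by
    have := hab1; rwa [pow_succ, pow_succ] at this
  obtain ⟨t, htdef⟩ : ∃ t : F, t = b ^ q / a := ⟨_, rfl⟩
  have ht0 : t ≠ 0 := htdef ▸ div_ne_zero (pow_ne_zero q hb) ha
  have hta : t * a = b ^ q := htdef ▸ div_mul_cancel₀ _ ha
  have htb : t * b = a ^ q := by
    rw [htdef]; field_simp; linear_combination -hab1'
  have htc : t * c = c ^ q := by
    rw [htdef]; field_simp; linear_combination -hac
  have htq_eq : t ^ q = b / a ^ q := by
    rw [htdef, div_pow, hqq b]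
  have htt : t ^ q * t = 1 := by
    rw [htq_eq, htdef]
    field_simp
    linear_combination -hab1'
  have hphi : ∀ x : F, (a * x ^ q + b * x + c) ^ q = t * (a * x ^ q + b * x + c) := by
    intro x
    rw [hadd, hadd, mul_pow, mul_pow, hqq x]
    linear_combination -x ^ q * hta - x * htb - htc
  -- A, B
  have hAne : A ≠ 0 := by rw [hA]; exact sub_ne_zero.mpr hA0
  have hAq : A ^ q = t * B := by
    rw [hA, hB, hsub, mul_pow, mul_pow]
    linear_combination -u ^ q * hta + v ^ q * htb
  have hBq : B ^ q = t * A := by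
    rw [hA, hB, hsub, mul_pow, mul_pow, hqq u, hqq v]
    linear_combination -u * htb + v * hta
  have hBne : B ≠ 0 := by
    intro h
    rw [h, zero_pow hq0] at hBq
    exact hAne (by
      rcases mul_eq_zero.mp hBq.symm with h' | h'
      · exact absurd h' ht0
      · exact h')
  set Cc : F := B + A * (A ^ r)⁻¹ * B ^ (q * r) with hCcdef
  set Dd : F := u ^ (q + 1) - v ^ (q + 1) with hDddef
  have hArne : A ^ r ≠ 0 := pow_ne_zero r hAne
  have hCc : Cc = B + A * t ^ r := by
    rw [hCcdef, pow_mul, hBq, mul_pow]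
    field_simp
  have hDq : Dd ^ q = Dd := by
    rw [hDddef, hsub, pow_succ, pow_succ, mul_pow, mul_pow, hqq u, hqq v]
    ring
  have hCq : Cc ^ q * t ^ r = t * Cc := by
    have h1 : (t ^ r) ^ q = (t ^ q) ^ r := by rw [← pow_mul, ← pow_mul, mul_comm]
    have h2 : (t ^ q) ^ r * t ^ r = 1 := by rw [← mul_pow, htt, one_pow]
    rw [hCc, hadd, mul_pow, hBq, hAq, h1]
    linear_combination (t * B) * h2
  -- the eigenspace T
  set T : Set F := {y : F | y ^ q = t * y} with hTdef
  have hTcard : T.ncard ≤ q := aux_eigen_card_le hq2 t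
  have hSsubT : S ⊆ T := by
    intro y hy
    rw [hS] at hy
    obtain ⟨x, rfl⟩ := hy
    exact hphi x
  have hScard : q ≤ S.ncard := by
    have himg : S = (fun z => z + c) '' Set.range (fun y : F => a * y ^ q + b * y) := by
      ext y
      simp only [hS, Set.mem_setOf_eq, Set.mem_image, Set.mem_range]
      constructor
      · rintro ⟨x, hx⟩; exact ⟨a * x ^ q + b * x, ⟨x, rfl⟩, hx⟩
      · rintro ⟨z, ⟨x, rfl⟩, hx⟩; exact ⟨x, hx⟩
    rw [himg, Set.ncard_image_of_injective _ (add_left_injective c)]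
    exact aux_range_card hq2 hF hadd ha
  have hST : S = T := Set.eq_of_subset_of_ncard_le hSsubT (le_trans hTcard hScard) (Set.toFinite T)
  have hLsubT : Set.range (fun y : F => A * y ^ q + B * y) ⊆ T := by
    rintro z ⟨y, rfl⟩
    show (A * y ^ q + B * y) ^ q = t * (A * y ^ q + B * y)
    rw [hadd, mul_pow, mul_pow, hqq y, hAq, hBq]
    ring
  have hLT : Set.range (fun y : F => A * y ^ q + B * y) = T :=
    Set.eq_of_subset_of_ncard_le hLsubT
      (le_trans hTcard (aux_range_card hq2 hF hadd hAne)) (Set.toFinite T)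
  have hDcT : Dd * c ∈ T := by
    show (Dd * c) ^ q = t * (Dd * c)
    rw [mul_pow, hDq]
    linear_combination -Dd * htc
  have hTsub : ∀ y ∈ T, ∀ z ∈ T, y - z ∈ T := by
    intro y hy z hz
    show (y - z) ^ q = t * (y - z)
    rw [hsub, hy, hz]
    ring
  -- the commutation identity
  have hc1 : A * v ^ q + B * u = Dd * a := by rw [hA, hB, hDddef]; ring
  have hc2 : A * u ^ q + B * v = Dd * b := by rw [hA, hB, hDddef]; ring
  have hfq : ∀ x : F, (f x) ^ q =
      t ^ r * (a * x ^ q + b * x + c) ^ r + u ^ q * x + v ^ q * x ^ q := by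
    intro x
    rw [hf]
    simp only
    rw [hadd, hadd, mul_pow, mul_pow, hqq x, ← pow_mul, mul_comm r q, pow_mul, hphi x, mul_pow]
  have hcomm : ∀ x : F, A * (f x) ^ q + B * (f x) = g (a * x ^ q + b * x + c) - Dd * c := by
    intro x
    rw [hfq x, hf, hg]
    simp only
    linear_combination (x ^ q) * hc1 + x * hc2 - ((a * x ^ q + b * x + c) ^ r) * hCc
  -- injectivity on fibers
  have hfib : ∀ x x' : F, a * x ^ q + b * x + c = a * x' ^ q + b * x' + c →
      f x = f x' → x = x' := by
    intro x x' hphi_eq hf_eq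
    have hd1 : a * (x - x') ^ q + b * (x - x') = 0 := by
      rw [hsub]
      linear_combination hphi_eq
    have hPr : (a * x ^ q + b * x + c) ^ r = (a * x' ^ q + b * x' + c) ^ r := by
      rw [hphi_eq]
    have hd2 : u * (x - x') ^ q + v * (x - x') = 0 := by
      rw [hsub]
      rw [hf] at hf_eq
      simp only at hf_eq
      linear_combination hf_eq - hPr
    have hzero : (b * u - a * v) * (x - x') = 0 := by
      linear_combination u * hd1 - a * hd2
    rcases mul_eq_zero.mp hzero with h | h
    · exact absurd (sub_eq_zero.mp h) hA0
    · exact sub_eq_zero.mp h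
  -- g maps S to S
  have hmapsTo : Set.MapsTo g S S := by
    intro y hy
    rw [hST] at hy ⊢
    have hyq : y ^ q = t * y := hy
    have hgy : g y = Cc * y ^ r + Dd * y := by rw [hg]
    rw [hTdef, Set.mem_setOf_eq, hgy]
    rw [hadd, mul_pow, mul_pow, hDq, ← pow_mul, mul_comm r q, pow_mul, hyq, mul_pow]
    linear_combination (y ^ r) * hCq + y * Dd * hyq - Dd * y * hyq
  -- main equivalence
  have main : Function.Bijective f ↔ Set.BijOn g S S := by
    constructor
    · intro hbij
      have hsurj : Set.SurjOn g S S := by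
        intro s hs
        have h1 : s - Dd * c ∈ T := hTsub s (hST ▸ hs) (Dd * c) hDcT
        rw [← hLT] at h1
        obtain ⟨w, hw⟩ := h1
        obtain ⟨x, hx⟩ := hbij.2 w
        refine ⟨a * x ^ q + b * x + c, by rw [hS]; exact ⟨x, rfl⟩, ?_⟩
        have hcx := hcomm x
        rw [hx] at hcx
        simp only at hw
        show g (a * x ^ q + b * x + c) = s
        linear_combination hw - hcx
      exact (Set.Finite.surjOn_iff_bijOn_of_mapsTo (Set.toFinite S) hmapsTo).mp hsurj
    · intro hbij
      have hinj : Function.Injective f := by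
        intro x x' hxx
        have h1 := hcomm x
        have h2 := hcomm x'
        rw [hxx] at h1
        have hgeq : g (a * x ^ q + b * x + c) = g (a * x' ^ q + b * x' + c) := by
          linear_combination h2 - h1
        have hmem : ∀ z : F, a * z ^ q + b * z + c ∈ S := fun z => by
          rw [hS]; exact ⟨z, rfl⟩
        exact hfib x x' (hbij.injOn (hmem x) (hmem x') hgeq) hxx
      exact Finite.injective_iff_bijective.mp hinj
  -- degenerate case helper
  have hdegen : Cc = 0 → Dd = 0 → ¬ Set.BijOn g S S := by
    intro hC0 hD0 hbij
    obtain ⟨y₁, y₂, hy₁, hy₂, hne⟩ := (Set.one_lt_ncard_iff (Set.toFinite S)).mp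
      (lt_of_lt_of_le (by omega) hScard)
    have : g y₁ = g y₂ := by
      rw [hg]; simp only; rw [hC0, hD0]; ring
    exact hne (hbij.injOn hy₁ hy₂ this)
  -- part (i)
  have parti : Cc = 0 → (Function.Bijective f ↔ u ^ (q + 1) ≠ v ^ (q + 1)) := by
    intro hC0
    rw [main]
    have hDne : Dd ≠ 0 ↔ u ^ (q + 1) ≠ v ^ (q + 1) := by
      rw [hDddef]; exact sub_ne_zero
    rw [← hDne]
    constructor
    · intro hbij hD0
      exact hdegen hC0 hD0 hbij
    · intro hDne0
      apply (Set.Finite.injOn_iff_bijOn_of_mapsTo (Set.toFinite S) hmapsTo).mp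
      intro y hy y' hy' hgy
      rw [hg] at hgy
      simp only at hgy
      rw [hC0] at hgy
      have : Dd * y = Dd * y' := by linear_combination hgy
      exact mul_left_cancel₀ hDne0 this
  -- part (ii)
  have partii : u ^ (q + 1) = v ^ (q + 1) →
      (Function.Bijective f ↔ (Cc ≠ 0 ∧ Nat.gcd r (q - 1) = 1)) := by
    intro huv
    have hD0 : Dd = 0 := by rw [hDddef, huv, sub_self]
    rw [main]
    constructor
    · intro hbij
      have hCne : Cc ≠ 0 := fun hC0 => hdegen hC0 hD0 hbij
      refine ⟨hCne, ?_⟩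
      by_contra hgcd
      have hd0 : Nat.gcd r (q - 1) ≠ 0 := Nat.gcd_ne_zero_left hr.ne'
      have hd2 : 2 ≤ Nat.gcd r (q - 1) := by omega
      have hdq1 : Nat.gcd r (q - 1) ∣ q - 1 := Nat.gcd_dvd_right _ _
      have hdr : Nat.gcd r (q - 1) ∣ r := Nat.gcd_dvd_left _ _
      have hfact : (q - 1) * (q + 1) = q ^ 2 - 1 := by
        zify [show 1 ≤ q by omega, show 1 ≤ q ^ 2 by nlinarith]
        ring
      have hdvd2 : Nat.gcd r (q - 1) ∣ q ^ 2 - 1 := hdq1.trans ⟨q + 1, hfact.symm⟩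
      have hcardU : Nat.card Fˣ = q ^ 2 - 1 := by
        rw [Nat.card_eq_fintype_card, Fintype.card_units, hF]
      obtain ⟨gen, hgen⟩ := IsCyclic.exists_ofOrder_eq_natCard (α := Fˣ)
      rw [hcardU] at hgen
      have hqsq1 : q ^ 2 - 1 ≠ 0 := by
        have : 4 ≤ q ^ 2 := by nlinarith
        omega
      have hmdvd : (q ^ 2 - 1) / Nat.gcd r (q - 1) ∣ q ^ 2 - 1 := Nat.div_dvd_of_dvd hdvd2
      set ζ : Fˣ := gen ^ ((q ^ 2 - 1) / Nat.gcd r (q - 1)) with hζ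
      have hordζ : orderOf ζ = Nat.gcd r (q - 1) := by
        rw [hζ, orderOf_pow, hgen, Nat.gcd_eq_right hmdvd,
          Nat.div_div_self hdvd2 hqsq1]
      have hζne1 : ζ ≠ 1 := by
        intro h; rw [h, orderOf_one] at hordζ; omega
      have hζr : ζ ^ r = 1 := orderOf_dvd_iff_pow_eq_one.mp (hordζ ▸ hdr)
      have hζq1 : ζ ^ (q - 1) = 1 := orderOf_dvd_iff_pow_eq_one.mp (hordζ ▸ hdq1)
      have hζrF : (ζ : F) ^ r = 1 := by
        rw [← Units.val_pow_eq_pow_val, hζr, Units.val_one]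
      have hζqF : (ζ : F) ^ q = (ζ : F) := by
        have h1 : (ζ : F) ^ (q - 1) = 1 := by
          rw [← Units.val_pow_eq_pow_val, hζq1, Units.val_one]
        calc (ζ : F) ^ q = (ζ : F) ^ (q - 1) * (ζ : F) := by
              rw [← pow_succ]; congr 1; omega
          _ = (ζ : F) := by rw [h1, one_mul]
      have hζFne1 : (ζ : F) ≠ 1 := fun h => hζne1 (Units.ext h)
      obtain ⟨y₁, y₂, hy₁, hy₂, hne⟩ := (Set.one_lt_ncard_iff (Set.toFinite S)).mp
        (lt_of_lt_of_le (by omega) hScard)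
      obtain ⟨y₀, hy₀, hy₀ne⟩ : ∃ y₀ ∈ S, y₀ ≠ 0 := by
        rcases eq_or_ne y₁ 0 with h | h
        · exact ⟨y₂, hy₂, fun h2 => hne (by rw [h, h2])⟩
        · exact ⟨y₁, hy₁, h⟩
      have hy₀T : y₀ ^ q = t * y₀ := by rw [hST] at hy₀; exact hy₀
      have hmemS : y₀ * ζ ∈ S := by
        rw [hST]
        show (y₀ * (ζ : F)) ^ q = t * (y₀ * (ζ : F))
        rw [mul_pow, hy₀T, hζqF]; ring
      have hgeq : g (y₀ * ζ) = g y₀ := by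
        rw [hg]; simp only
        rw [hD0, mul_pow, hζrF]
        ring
      have heq := hbij.injOn hmemS hy₀ hgeq
      exact hζFne1 (mul_left_cancel₀ hy₀ne (heq.trans (mul_one y₀).symm))
    · rintro ⟨hCne, hgcd⟩
      apply (Set.Finite.injOn_iff_bijOn_of_mapsTo (Set.toFinite S) hmapsTo).mp
      intro y hy y' hy' hgy
      rw [hg] at hgy
      simp only at hgy
      rw [hD0] at hgy
      have hyr : y ^ r = y' ^ r := by
        have h1 : Cc * y ^ r = Cc * y' ^ r := by linear_combination hgy
        exact mul_left_cancel₀ hCne h1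
      rcases eq_or_ne y' 0 with h0 | h0
      · rw [h0] at hyr ⊢
        rw [zero_pow hr.ne'] at hyr
        exact pow_eq_zero_iff hr.ne' |>.mp hyr
      · have hyne : y ≠ 0 := by
          intro h
          rw [h, zero_pow hr.ne'] at hyr
          exact h0 (pow_eq_zero_iff hr.ne' |>.mp hyr.symm)
        have hyT : y ^ q = t * y := by rw [hST] at hy; exact hy
        have hy'T : y' ^ q = t * y' := by rw [hST] at hy'; exact hy'
        have hzr : (y * y'⁻¹) ^ r = 1 := by
          rw [mul_pow, inv_pow, hyr, mul_inv_cancel₀ (pow_ne_zero r h0)]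
        have hzq : (y * y'⁻¹) ^ q = y * y'⁻¹ := by
          rw [mul_pow, inv_pow, hyT, hy'T]
          field_simp
        have hzne : y * y'⁻¹ ≠ 0 := mul_ne_zero hyne (inv_ne_zero h0)
        have hzq1 : (y * y'⁻¹) ^ (q - 1) = 1 := by
          have h1 : (y * y'⁻¹) ^ (q - 1) * (y * y'⁻¹) = 1 * (y * y'⁻¹) := by
            rw [← pow_succ, show q - 1 + 1 = q by omega, hzq, one_mul]
          exact mul_right_cancel₀ hzne h1
        have hdvd1 : orderOf (y * y'⁻¹) ∣ Nat.gcd r (q - 1) :=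
          Nat.dvd_gcd (orderOf_dvd_of_pow_eq_one hzr) (orderOf_dvd_of_pow_eq_one hzq1)
        rw [hgcd, Nat.dvd_one] at hdvd1
        have hz1 : y * y'⁻¹ = 1 := orderOf_eq_one_iff.mp hdvd1
        exact (mul_inv_eq_one₀ h0).mp hz1
  exact ⟨main, parti, partii⟩
end

section
/- Let q be an odd prime power, r a positive integer, and c, u elements of the subfield F_q of F_{q²}. Then f(x) = (x^q + x + c)^r + u·x^q − u·x is a permutation polynomial of F_{q²} if and only if u ≠ 0 and gcd(r, q−1) = 1. -/
theorem stmt_8 {F : Type*} [Field F] [Fintype F]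
    (q : ℕ) (hq : IsPrimePow q) (hqodd : Odd q) (hF : Fintype.card F = q ^ 2)
    (r : ℕ) (hr : 0 < r)
    (c u : F) (hc : c ^ q = c) (hu : u ^ q = u) :
    Function.Bijective (fun x : F => (x ^ q + x + c) ^ r + u * x ^ q - u * x) ↔
      (u ≠ 0 ∧ Nat.gcd r (q - 1) = 1) := by
  classical
  obtain ⟨p, k, hpp, hk, hpq⟩ := hq
  have hp : p.Prime := hpp.nat_prime
  haveI : Fact p.Prime := ⟨hp⟩
  have hpodd : Odd p := by
    rcases Nat.Prime.eq_two_or_odd' hp with h2 | h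
    · exfalso
      have : Even q := by
        rw [← hpq, h2]
        exact (Nat.even_pow).mpr ⟨even_two, hk.ne'⟩
      exact (Nat.not_even_iff_odd.mpr hqodd) this
    · exact h
  have hp3 : 3 ≤ p := by
    have := hp.two_le
    rcases Nat.lt_or_ge p 3 with h | h
    · interval_cases p
      · exact absurd hpodd (by decide)
    · exact h
  have hq3 : 3 ≤ q := by
    calc (3:ℕ) ≤ p := hp3
    _ ≤ p ^ k := Nat.le_self_pow hk.ne' p
    _ = q := hpq
  have hcharF : CharP F p := by
    set p' := ringChar F with hp'
    haveI : CharP F p' := ringChar.charP F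
    obtain ⟨n, hp'prime, hcard⟩ := FiniteField.card F p'
    have hdvd : p ∣ p' ^ (n : ℕ) := by
      rw [← hcard, hF, ← hpq, ← pow_mul]
      exact dvd_pow_self p (by positivity)
    have : p = p' := by
      have := hp.dvd_of_dvd_pow hdvd
      exact (Nat.prime_dvd_prime_iff_eq hp hp'prime).mp this
    rw [this]; infer_instance
  have h2 : (2 : F) ≠ 0 := by
    intro h
    have h2' : ((2 : ℕ) : F) = 0 := by push_cast; exact h
    have := (CharP.cast_eq_zero_iff F p 2).mp h2'
    have hp2 : p = 2 := ((Nat.prime_dvd_prime_iff_eq hp Nat.prime_two).mp this)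
    rw [hp2] at hpodd
    exact (Nat.not_even_iff_odd.mpr hpodd) even_two
  have hadd : ∀ x y : F, (x + y) ^ q = x ^ q + y ^ q := by
    intro x y
    rw [← hpq]
    exact add_pow_char_pow x y p k
  have hneg : ∀ x : F, (-x) ^ q = -x ^ q := fun x => Odd.neg_pow hqodd x
  have hsub : ∀ x y : F, (x - y) ^ q = x ^ q - y ^ q := by
    intro x y
    rw [sub_eq_add_neg, hadd, hneg, sub_eq_add_neg]
  have hqq : ∀ x : F, (x ^ q) ^ q = x := by
    intro x
    rw [← pow_mul, ← pow_two, ← hF]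
    exact FiniteField.pow_card x
  have htwo : (2 : F) ^ q = 2 := by
    have h := hadd 1 1
    norm_num at h
    exact h
  have hqpos : 0 < q := by omega
  -- x in the subfield, nonzero, implies x^(q-1) = 1
  have hfix_pow : ∀ s : F, s ^ q = s → s ≠ 0 → s ^ (q - 1) = 1 := by
    intro s hs hs0
    have hq' : q - 1 + 1 = q := by omega
    have : s ^ (q - 1) * s = 1 * s := by
      rw [← pow_succ, hq', hs, one_mul]
    exact mul_right_cancel₀ hs0 this
  -- injectivity of r-th power on the subfield when gcd(r, q-1) = 1
  have hinj_pow : Nat.gcd r (q - 1) = 1 → ∀ s t : F, s ^ q = s → t ^ q = t →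
      s ^ r = t ^ r → s = t := by
    intro hgcd s t hs ht hst
    rcases eq_or_ne t 0 with rfl | ht0
    · rw [zero_pow hr.ne'] at hst
      exact (pow_eq_zero_iff hr.ne').mp hst
    have hs0 : s ≠ 0 := by
      intro h
      rw [h, zero_pow hr.ne'] at hst
      exact ht0 (pow_eq_zero_iff hr.ne' |>.mp hst.symm)
    set w : F := s * t⁻¹ with hw
    have hwr : w ^ r = 1 := by
      rw [hw, mul_pow, hst, inv_pow, mul_inv_cancel₀ (pow_ne_zero r ht0)]
    have hwq : w ^ (q - 1) = 1 := by
      rw [hw, mul_pow, hfix_pow s hs hs0, inv_pow, hfix_pow t ht ht0, inv_one, mul_one]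
    have hdvd : orderOf w ∣ Nat.gcd r (q - 1) :=
      Nat.dvd_gcd (orderOf_dvd_of_pow_eq_one hwr) (orderOf_dvd_of_pow_eq_one hwq)
    rw [hgcd, Nat.dvd_one] at hdvd
    have hw1 : w = 1 := orderOf_eq_one_iff.mp hdvd
    field_simp [hw] at hw1
    rw [hw] at hw1
    exact (mul_inv_eq_one₀ ht0).mp hw1
  constructor
  · -- bijective → u ≠ 0 ∧ gcd = 1
    intro hbij
    -- cyclic generator
    obtain ⟨g, hg⟩ := IsCyclic.exists_generator (α := Fˣ)
    have hord : orderOf g = q ^ 2 - 1 := by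
      rw [orderOf_eq_card_of_forall_mem_zpowers hg, Nat.card_eq_fintype_card,
        Fintype.card_units, hF]
    obtain ⟨e, he⟩ := hqodd
    have he1 : 1 ≤ e := by omega
    constructor
    · -- u ≠ 0
      intro hu0
      -- build b with b^q = -b, b ≠ 0
      set W : Fˣ := g ^ (2 * e ^ 2 + 2 * e) with hW
      have hhalf : 2 * (2 * e ^ 2 + 2 * e) = q ^ 2 - 1 := by
        have : q ^ 2 = 4 * e ^ 2 + 4 * e + 1 := by rw [he]; ring
        omega
      have hW2 : W ^ 2 = 1 := by
        rw [hW, ← pow_mul, ← orderOf_dvd_iff_pow_eq_one, hord]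
        exact ⟨1, by omega⟩
      have hWne : W ≠ 1 := by
        intro h
        have := orderOf_dvd_of_pow_eq_one (n := 2 * e ^ 2 + 2 * e) (by rw [← hW, h])
        rw [hord] at this
        have hlt : 2 * e ^ 2 + 2 * e < q ^ 2 - 1 := by omega
        have hpos : 0 < 2 * e ^ 2 + 2 * e := by positivity
        exact absurd (Nat.le_of_dvd hpos this) (by omega)
      have hWF : (W : F) = -1 := by
        have h2' : ((W : F) - 1) * ((W : F) + 1) = 0 := by
          have : (W : F) ^ 2 = 1 := by
            rw [← Units.val_pow_eq_pow_val, hW2, Units.val_one]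
          linear_combination this
        rcases mul_eq_zero.mp h2' with h | h
        · exfalso
          apply hWne
          ext
          rw [Units.val_one]
          exact sub_eq_zero.mp h
        · linear_combination h
      set b : F := ((g ^ (e + 1) : Fˣ) : F) with hb
      have hb0 : b ≠ 0 := Units.ne_zero _
      have hbq1 : b ^ (q - 1) = -1 := by
        have : b ^ (q - 1) = ((g ^ ((e + 1) * (q - 1)) : Fˣ) : F) := by
          rw [hb, ← Units.val_pow_eq_pow_val, ← pow_mul]
        rw [this]
        have : (e + 1) * (q - 1) = 2 * e ^ 2 + 2 * e := by
          have : q - 1 = 2 * e := by omega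
          rw [this]; ring
        rw [this, ← hW, hWF]
      have hbq : b ^ q = -b := by
        have hq' : q - 1 + 1 = q := by omega
        rw [← hq', pow_succ, hbq1, neg_one_mul]
      have := hbij.injective (a₁ := b) (a₂ := 0) ?_
      · exact hb0 this
      · simp only [hu0, zero_mul, hbq, zero_pow hqpos.ne']
        ring
    · -- gcd = 1
      by_contra hgcd
      set d := Nat.gcd r (q - 1) with hd
      have hd1 : 1 < d := by
        have : 0 < d := Nat.gcd_pos_of_pos_left _ hr
        omega
      have hdq : d ∣ q - 1 := Nat.gcd_dvd_right _ _
      have hdr : d ∣ r := Nat.gcd_dvd_left _ _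
      have hq21 : q - 1 ∣ q ^ 2 - 1 := by
        have h1 : (q - 1) * (q + 1) = q ^ 2 - 1 := by
          have h2' : q ^ 2 = 4 * e ^ 2 + 4 * e + 1 := by rw [he]; ring
          have h3' : (q - 1) * (q + 1) = 2 * e * (2 * e + 2) := by
            rw [he]; congr 1 <;> omega
          have : 2 * e * (2 * e + 2) = 4 * e ^ 2 + 4 * e := by ring
          omega
        exact ⟨q + 1, h1.symm⟩
      have hdq2 : d ∣ q ^ 2 - 1 := hdq.trans hq21
      have hq2pos : 0 < q ^ 2 - 1 := by
        have h9 : 9 ≤ q ^ 2 := by nlinarith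
        omega
      set m := (q ^ 2 - 1) / d with hm
      have hmd : m * d = q ^ 2 - 1 := Nat.div_mul_cancel hdq2
      have hmpos : 0 < m := by
        rcases Nat.eq_zero_or_pos m with h | h
        · rw [h, zero_mul] at hmd; omega
        · exact h
      have hmlt : m < q ^ 2 - 1 := by
        rcases Nat.lt_or_ge m (q ^ 2 - 1) with h | h
        · exact h
        · exfalso; nlinarith
      set W : Fˣ := g ^ m with hW
      have hWr : W ^ r = 1 := by
        rw [hW, ← pow_mul, ← orderOf_dvd_iff_pow_eq_one, hord]
        obtain ⟨r', hr'⟩ := hdr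
        exact ⟨r', by rw [hr', ← mul_assoc, hmd]⟩
      have hWq : W ^ (q - 1) = 1 := by
        rw [hW, ← pow_mul, ← orderOf_dvd_iff_pow_eq_one, hord]
        obtain ⟨s', hs'⟩ := hdq
        exact ⟨s', by rw [hs', ← mul_assoc, hmd]⟩
      have hWne : W ≠ 1 := by
        intro h
        have := orderOf_dvd_of_pow_eq_one (n := m) (show g ^ m = 1 by rw [← hW]; exact h)
        rw [hord] at this
        exact absurd (Nat.le_of_dvd hmpos this) (by omega)
      set w : F := (W : F) with hwdef
      have hw1 : w ≠ 1 := by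
        intro h
        exact hWne (Units.ext (by rw [Units.val_one, ← hwdef, h]))
      have hwr : w ^ r = 1 := by
        rw [hwdef, ← Units.val_pow_eq_pow_val, hWr, Units.val_one]
      have hwq1 : w ^ (q - 1) = 1 := by
        rw [hwdef, ← Units.val_pow_eq_pow_val, hWq, Units.val_one]
      have hwq : w ^ q = w := by
        have hq' : q - 1 + 1 = q := by omega
        rw [← hq', pow_succ, hwq1, one_mul]
      set x : F := (w - c) / 2 with hx
      set y : F := (1 - c) / 2 with hy
      have hxq : x ^ q = x := by
        rw [hx, div_pow, hsub, hwq, hc, htwo]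
      have hyq : y ^ q = y := by
        rw [hy, div_pow, hsub, one_pow, hc, htwo]
      have hxy : x ≠ y := by
        intro h
        apply hw1
        rw [hx, hy, div_eq_div_iff h2 h2] at h
        have h' := mul_right_cancel₀ h2 h
        linear_combination h'
      apply hxy
      apply hbij.injective
      simp only
      rw [hxq, hyq]
      have hx2 : x + x + c = w := by rw [hx]; field_simp; ring
      have hy2 : y + y + c = 1 := by rw [hy]; field_simp; ring
      rw [hx2, hy2, hwr, one_pow]
      ring
  · -- u ≠ 0 ∧ gcd = 1 → bijective
    rintro ⟨hu0, hgcd⟩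
    rw [← Finite.injective_iff_bijective]
    intro x y hxy
    simp only at hxy
    set s : F := x ^ q + x + c with hs
    set t : F := y ^ q + y + c with ht
    have hsq : s ^ q = s := by
      rw [hs, hadd, hadd, hqq, hc]; ring
    have htq : t ^ q = t := by
      rw [ht, hadd, hadd, hqq, hc]; ring
    have hE : s ^ r - t ^ r = (u * y ^ q - u * y) - (u * x ^ q - u * x) := by
      linear_combination hxy
    have hDq : (s ^ r - t ^ r) ^ q = s ^ r - t ^ r := by
      rw [hsub, ← pow_mul, mul_comm r q, pow_mul, hsq, ← pow_mul (t) , mul_comm r q,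
        pow_mul, htq]
    have hEq : ((u * y ^ q - u * y) - (u * x ^ q - u * x)) ^ q
        = -((u * y ^ q - u * y) - (u * x ^ q - u * x)) := by
      rw [hsub, hsub, hsub, mul_pow, mul_pow, mul_pow, mul_pow, hu, hqq, hqq]
      ring
    have hzero : s ^ r - t ^ r = 0 := by
      have h1 : s ^ r - t ^ r = -(s ^ r - t ^ r) := by
        calc s ^ r - t ^ r = (s ^ r - t ^ r) ^ q := hDq.symm
        _ = ((u * y ^ q - u * y) - (u * x ^ q - u * x)) ^ q := by rw [hE]
        _ = -((u * y ^ q - u * y) - (u * x ^ q - u * x)) := hEq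
        _ = -(s ^ r - t ^ r) := by rw [← hE]
      have : (2 : F) * (s ^ r - t ^ r) = 0 := by linear_combination h1
      rcases mul_eq_zero.mp this with h | h
      · exact absurd h h2
      · exact h
    have hst : s = t := hinj_pow hgcd s t hsq htq (sub_eq_zero.mp hzero)
    have hE0 : (u * y ^ q - u * y) - (u * x ^ q - u * x) = 0 := by
      rw [← hE, hzero]
    have hDxy : y ^ q - y = x ^ q - x := by
      have : u * ((y ^ q - y) - (x ^ q - x)) = 0 := by linear_combination hE0
      rcases mul_eq_zero.mp this with h | h
      · exact absurd h hu0
      · linear_combination h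
    have hTxy : x ^ q + x = y ^ q + y := by
      rw [hs, ht] at hst
      linear_combination hst
    have h2xy : (2 : F) * x = 2 * y := by linear_combination hTxy + hDxy
    exact mul_left_cancel₀ h2 h2xy
end

section
/- Let q be a prime power, r a positive integer, and c, u, v ∈ F_{q²} satisfy c + c^q = 0 and (u + v)^q = (−1)^r·(u + v). Then f(x) = (x^q − x + c)^r + u·x^q + v·x is a permutation polynomial of F_{q²} if and only if u^{q+1} ≠ v^{q+1}. -/
theorem stmt_9 {F : Type*} [Field F] [Fintype F]
    (q : ℕ) (hq : IsPrimePow q) (hF : Fintype.card F = q ^ 2)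
    (r : ℕ) (hr : 0 < r)
    (c u v : F) (hc : c + c ^ q = 0)
    (huv : (u + v) ^ q = (-1 : F) ^ r * (u + v)) :
    Function.Bijective (fun x : F => (x ^ q - x + c) ^ r + u * x ^ q + v * x) ↔
      u ^ (q + 1) ≠ v ^ (q + 1) := by
  obtain ⟨p, n, hp, hn, hpn⟩ := hq
  have hp' : Nat.Prime p := hp.nat_prime
  have hq2 : 2 ≤ q := by
    calc 2 ≤ p := hp'.two_le
    _ = p ^ 1 := (pow_one p).symm
    _ ≤ p ^ n := Nat.pow_le_pow_right hp'.pos hn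
    _ = q := hpn
  -- characteristic
  have hcast : ((q : F)) = 0 := by
    have h0 : ((Fintype.card F : ℕ) : F) = 0 := FiniteField.cast_card_eq_zero F
    rw [hF] at h0
    push_cast at h0
    exact pow_eq_zero_iff (n := 2) (by norm_num) |>.mp h0
  have hpF : ((p : F)) = 0 := by
    have : ((p : F)) ^ n = 0 := by
      rw [← Nat.cast_pow, hpn]; exact hcast
    exact pow_eq_zero_iff (Nat.pos_iff_ne_zero.mp hn) |>.mp this
  have hchar : ringChar F = p := by
    have hdvd : ringChar F ∣ p := ringChar.dvd (by exact_mod_cast hpF)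
    rcases (Nat.Prime.eq_one_or_self_of_dvd hp' _ hdvd) with h1 | h1
    · exfalso
      haveI : CharP F 1 := h1 ▸ ringChar.charP F
      exact CharP.char_ne_one F 1 rfl
    · exact h1
  haveI : Fact p.Prime := ⟨hp'⟩
  haveI : CharP F p := hchar ▸ ringChar.charP F
  -- Frobenius-type facts
  have hadd : ∀ x y : F, (x + y) ^ q = x ^ q + y ^ q := by
    intro x y
    have := map_add (iterateFrobenius F p n) x y
    simpa only [iterateFrobenius_def, hpn] using this
  have hsub : ∀ x y : F, (x - y) ^ q = x ^ q - y ^ q := by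
    intro x y
    have := map_sub (iterateFrobenius F p n) x y
    simpa only [iterateFrobenius_def, hpn] using this
  have hqq : ∀ x : F, (x ^ q) ^ q = x := by
    intro x
    rw [← pow_mul, ← sq, ← hF]
    exact FiniteField.pow_card x
  have hcq : c ^ q = -c := by linear_combination hc
  have huv' : u ^ q + v ^ q = (-1 : F) ^ r * (u + v) := by
    rw [← hadd]; exact huv
  set a : F := v ^ q - (-1 : F) ^ r * u with ha_def
  set f : F → F := fun x : F => (x ^ q - x + c) ^ r + u * x ^ q + v * x with hf_def
  -- key identity on f
  have key : ∀ x : F, (f x) ^ q - (-1 : F) ^ r * f x = a * (x ^ q - x) := by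
    intro x
    have hy : (x ^ q - x + c) ^ q = -(x ^ q - x + c) := by
      rw [hadd, hsub, hqq, hcq]; ring
    have hfx : (f x) ^ q
        = (-1 : F) ^ r * (x ^ q - x + c) ^ r + u ^ q * x + v ^ q * x ^ q := by
      simp only [hf_def]
      rw [hadd, hadd, mul_pow, mul_pow, hqq, ← pow_mul, mul_comm r q, pow_mul, hy,
        neg_pow]
    rw [hfx]
    simp only [hf_def, ha_def]
    linear_combination x * huv'
  -- key algebraic identity
  have hid : u ^ (q + 1) - v ^ (q + 1) = -((u + v) * a) := by
    rw [pow_succ, pow_succ, ha_def]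
    linear_combination u * huv'
  constructor
  · intro hbij
    intro heq
    have hprod : (u + v) * a = 0 := by
      have h' : -((u + v) * a) = 0 := by rw [← hid, heq]; ring
      exact neg_eq_zero.mp h'
    rcases mul_eq_zero.mp hprod with h0 | h0
    · -- u + v = 0 : f 1 = f 0
      have h10 : f 1 = f 0 := by
        simp only [hf_def, one_pow, mul_one]
        have : u + v = 0 := h0
        have h0q : (0 : F) ^ q = 0 := zero_pow (by omega)
        rw [h0q]
        ring_nf
        linear_combination this
      exact one_ne_zero (hbij.injective h10)
    · -- a = 0 : every z satisfies z ^ q = (-1)^r * z, contradiction with card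
      have hall : ∀ z : F, z ^ q - (-1 : F) ^ r * z = 0 := by
        intro z
        obtain ⟨x, hx⟩ := hbij.surjective z
        have := key x
        rw [hx, h0, zero_mul] at this
        exact this
      set P : Polynomial F := Polynomial.X ^ q - Polynomial.C ((-1 : F) ^ r) * Polynomial.X
        with hP
      have hPeval : ∀ z : F, P.eval z = 0 := by
        intro z; simp [hP, hall z]
      have hPdeg : P.natDegree ≤ q := by
        rw [hP]
        refine le_trans (Polynomial.natDegree_sub_le _ _) (max_le ?_ ?_)
        · exact le_of_eq (Polynomial.natDegree_X_pow q)
        · exact le_trans (le_trans (Polynomial.natDegree_C_mul_le _ _)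
            (le_of_eq Polynomial.natDegree_X)) (by omega)
      have hP0 : P = 0 := by
        apply Polynomial.eq_zero_of_natDegree_lt_card_of_eval_eq_zero P
          Function.injective_id (fun z => hPeval z)
        calc P.natDegree ≤ q := hPdeg
        _ < q ^ 2 := by nlinarith
        _ = Fintype.card F := hF.symm
      have : P.coeff q = 0 := by rw [hP0]; simp
      rw [hP, Polynomial.coeff_sub, Polynomial.coeff_C_mul,
        Polynomial.coeff_X_pow, Polynomial.coeff_X_of_ne_one (by omega : q ≠ 1)] at this
      simp at this
  · intro hne
    have hprod : (u + v) * a ≠ 0 := by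
      intro h
      apply hne
      have h' : u ^ (q + 1) - v ^ (q + 1) = 0 := by rw [hid, h]; ring
      exact sub_eq_zero.mp h'
    have hu : u + v ≠ 0 := fun h => hprod (by rw [h, zero_mul])
    have ha : a ≠ 0 := fun h => hprod (by rw [h, mul_zero])
    rw [← Finite.injective_iff_bijective]
    intro x x' hxx'
    have hfeq : f x = f x' := hxx'
    have h1 : a * (x ^ q - x) = a * (x' ^ q - x') := by
      rw [← key, ← key, hfeq]
    have h2 : x ^ q - x = x' ^ q - x' := mul_left_cancel₀ ha h1
    have h3 : x ^ q - x' ^ q = x - x' := by linear_combination h2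
    have h4 : (x ^ q - x + c) ^ r = (x' ^ q - x' + c) ^ r := by rw [h2]
    have h5 : u * x ^ q + v * x = u * x' ^ q + v * x' := by
      have := hfeq
      simp only [hf_def] at this
      linear_combination this - h4
    have h6 : (u + v) * (x - x') = 0 := by linear_combination h5 - u * h3
    rcases mul_eq_zero.mp h6 with h | h
    · exact absurd h hu
    · exact sub_eq_zero.mp h
end

section
/- Let q be a prime power and let d be a positive divisor of q+1. Let r be a positive integer, φ a polynomial over F_{q²}, and a, b, c, u, v ∈ F_{q²} satisfy a·b ≠ 0, a^{q+1} = b^{q+1} and a·c^q = b^q·c. Set δ = (b^q/a)^{(q+1)/d} and f(x) = (a·x^q + b·x + c)^r · φ((a·x^q + b·x + c)^{(q²−1)/d}) + u·x^q + v·x. Then for every x ∈ F_{q²}, f(x) = φ(δ)·(a·x^q + b·x + c)^r + u·x^q + v·x; that is, f(x) is congruent to φ(δ)·(a·x^q + b·x + c)^r + u·x^q + v·x modulo x^{q²} − x. -/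
theorem stmt_11 {F : Type*} [Field F] [Fintype F]
    (q : ℕ) (hq : IsPrimePow q) (hF : Fintype.card F = q ^ 2)
    (d : ℕ) (hd0 : 0 < d) (hdvd : d ∣ q + 1)
    (r : ℕ) (hr : 0 < r) (φ : Polynomial F)
    (a b c u v : F) (hab : a * b ≠ 0)
    (hab1 : a ^ (q + 1) = b ^ (q + 1)) (hac : a * c ^ q = b ^ q * c)
    (δ : F) (hδ : δ = (b ^ q / a) ^ ((q + 1) / d)) :
    ∀ x : F, (a * x ^ q + b * x + c) ^ r *
        φ.eval ((a * x ^ q + b * x + c) ^ ((q ^ 2 - 1) / d)) + u * x ^ q + v * x =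
      φ.eval δ * (a * x ^ q + b * x + c) ^ r + u * x ^ q + v * x := by
  intro x
  have ha : a ≠ 0 := fun h => hab (by simp [h])
  have hb : b ≠ 0 := fun h => hab (by simp [h])
  set y : F := a * x ^ q + b * x + c with hy
  rcases eq_or_ne y 0 with h0 | h0
  · rw [h0, zero_pow hr.ne']
    ring
  -- characteristic setup
  obtain ⟨p, n, hp, hn, hq'⟩ := hq
  have hp' : Fact p.Prime := ⟨hp.nat_prime⟩
  have hq2 : 2 ≤ q := hq'.symm ▸ hp.nat_prime.two_le.trans (Nat.le_self_pow hn.ne' p)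
  have hp0 : (p : F) = 0 := by
    have h1 : ((Fintype.card F : ℕ) : F) = 0 := FiniteField.cast_card_eq_zero F
    rw [hF, ← hq'] at h1
    push_cast at h1
    rw [← pow_mul] at h1
    exact pow_eq_zero_iff (by positivity : 0 < n * 2).ne' |>.mp h1
  haveI : CharP F p := (CharP.charP_iff_prime_eq_zero hp.nat_prime).mpr hp0
  -- Frobenius relation: y ^ q = (b^q / a) * y
  have hxq2 : x ^ q ^ 2 = x := by rw [← hF]; exact FiniteField.pow_card x
  have hyq : y ^ q = (b ^ q / a) * y := by
    have hfrob : y ^ q = a ^ q * x + b ^ q * x ^ q + c ^ q := by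
      have : y ^ q = (a * x ^ q) ^ q + (b * x) ^ q + c ^ q := by
        rw [hy, ← hq']
        rw [add_pow_char_pow, add_pow_char_pow]
      rw [this, mul_pow, mul_pow, ← pow_mul, ← pow_two, hxq2]
    rw [hfrob, div_mul_eq_mul_div, eq_div_iff ha, hy]
    linear_combination x * hab1 + hac
  -- y ^ (q - 1) = b^q / a
  have hym1 : y ^ (q - 1) = b ^ q / a := by
    have h1 : y ^ (q - 1) * y = (b ^ q / a) * y := by
      rw [← pow_succ, Nat.sub_add_cancel (by omega), hyq]
    exact mul_right_cancel₀ h0 h1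
  -- exponent arithmetic
  obtain ⟨k, hk⟩ := hdvd
  have hdiv1 : (q + 1) / d = k := by rw [hk, Nat.mul_div_cancel_left _ hd0]
  have hdiv2 : (q ^ 2 - 1) / d = (q - 1) * k := by
    have : q ^ 2 - 1 = d * ((q - 1) * k) := by
      have h2 : q ^ 2 - 1 = (q + 1) * (q - 1) := by
        have := Nat.sq_sub_sq q 1
        simpa using this
      rw [h2, hk]; ring
    rw [this, Nat.mul_div_cancel_left _ hd0]
  have key : y ^ ((q ^ 2 - 1) / d) = δ := by
    rw [hdiv2, pow_mul, hym1, hδ, hdiv1]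
  rw [key]
  ring
end

section
/- Let q be a prime power and let d ≥ 3 be a divisor of q²−1. Let a, b, c, u, v ∈ F_{q²} satisfy a·b ≠ 0, a^{q+1} = b^{q+1}, a·c^q = b^q·c and u^{q+1} ≠ v^{q+1}. Define f(x) = Σ_{k=0}^{d−1} (a·x^q + b·x + c)^{k·(q²−1)/d + 1} + u·x^q + v·x. Then: (i) f is a permutation polynomial of F_{q²} if (1 + d·(B + B^q)/(u^{q+1} − v^{q+1}))^{(q²−1)/d} = 1; (ii) if moreover d is an odd divisor of q−1, then f is a permutation polynomial of F_{q²} if and only if (1 + d·(B + B^q)/(u^{q+1} − v^{q+1}))^{(q²−1)/d} = 1. -/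
lemma aux_frob {F : Type*} [Field F] [Fintype F] (q : ℕ) (hq : IsPrimePow q)
    (hF : Fintype.card F = q ^ 2) :
    (∀ x y : F, (x+y)^q = x^q + y^q) ∧ (∀ x y : F, (x-y)^q = x^q - y^q) ∧
    (∀ m : ℕ, ((m:F))^q = m) ∧ (∀ x : F, (x^q)^q = x) ∧
    ((-1:F))^(q+1) = 1 ∧ (∀ dd : ℕ, dd ∣ q - 1 → (dd : F) ≠ 0) ∧ 2 ≤ q := by
  obtain ⟨p, n, hp0, hn, rfl⟩ := hq
  have hp := hp0.nat_prime
  set q := p ^ n with hqdef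
  have hq2 : 2 ≤ q := by
    calc 2 ≤ p := hp.two_le
    _ = p ^ 1 := (pow_one p).symm
    _ ≤ q := Nat.pow_le_pow_right hp.pos hn
  haveI hfact : Fact p.Prime := ⟨hp⟩
  haveI hchar : CharP F p := by
    have h1 : CharP F (ringChar F) := ringChar.charP F
    obtain ⟨m, hm, hcard⟩ := FiniteField.card F (ringChar F)
    have h2 : (ringChar F) ∣ q^2 := by
      rw [← hF, hcard]; exact dvd_pow_self _ (by positivity)
    have h3 : ringChar F ∣ p := hm.dvd_of_dvd_pow (hm.dvd_of_dvd_pow h2)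
    have : ringChar F = p := (Nat.prime_dvd_prime_iff_eq hm hp).mp h3
    rwa [this] at h1
  have hnat : ∀ m : ℕ, ((m:F))^q = m := by
    intro m
    have := map_natCast (iterateFrobenius F p n) m
    rwa [iterateFrobenius_def] at this
  refine ⟨fun x y => add_pow_char_pow x y p n, fun x y => sub_pow_char_pow x y n, hnat, ?_, ?_, ?_, hq2⟩
  · intro x
    rw [← pow_mul, ← pow_two, ← hF, FiniteField.pow_card]
  · rcases hp.eq_two_or_odd' with h2 | hodd
    · subst h2
      haveI : CharP F 2 := hchar
      rw [CharTwo.neg_eq, one_pow]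
    · have hoq : Odd q := hodd.pow
      exact (hoq.add_one).neg_one_pow
  · intro dd hdd hcast
    have hpd : p ∣ dd := (CharP.cast_eq_zero_iff F p dd).mp hcast
    have h1 : p ∣ q - 1 := hpd.trans hdd
    have h2 : p ∣ q := dvd_pow_self p (by omega)
    have := Nat.dvd_sub h2 h1
    have hq1 : q - (q - 1) = 1 := by omega
    rw [hq1] at this
    exact hp.one_lt.ne' (Nat.dvd_one.mp this)
open Finset in
open scoped Classical in
lemma aux_geom {F : Type*} [Field F] (d s N : ℕ) (hs0 : s ≠ 0) (hsd : s * d = N)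
    (hu : ∀ t : F, t ≠ 0 → t ^ N = 1) (t : F) :
    ∑ k ∈ Finset.range d, t ^ (k * s + 1) = if t ^ s = 1 then (d : F) * t else 0 := by
  have hterm : ∀ k, t ^ (k * s + 1) = (t ^ s) ^ k * t := by
    intro k
    rw [pow_succ' t, ← pow_mul, mul_comm s k]
    ring
  by_cases h1 : t ^ s = 1
  · rw [if_pos h1]
    calc ∑ k ∈ range d, t ^ (k * s + 1) = ∑ _k ∈ range d, t := by
          refine Finset.sum_congr rfl fun k _ => ?_
          rw [hterm k, h1, one_pow, one_mul]
    _ = (d : F) * t := by rw [Finset.sum_const, card_range, nsmul_eq_mul]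
  · rw [if_neg h1]
    by_cases ht : t = 0
    · refine Finset.sum_eq_zero fun k _ => ?_
      rw [ht, zero_pow (by omega)]
    · have : ∑ k ∈ range d, t ^ (k * s + 1) = (∑ k ∈ range d, (t ^ s) ^ k) * t := by
        rw [Finset.sum_mul]
        exact Finset.sum_congr rfl fun k _ => hterm k
      rw [this, geom_sum_eq h1, ← pow_mul, hsd, hu t ht, sub_self, zero_div, zero_mul]
open Polynomial in
lemma aux_roots {F : Type*} [Field F] [Fintype F] [DecidableEq F] (q : ℕ) (hq2 : 2 ≤ q)
    (A B C : F) (hA : A ≠ 0) :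
    (Finset.univ.filter fun x : F => A * x ^ q + B * x = C).card ≤ q := by
  set P : F[X] := Polynomial.C A * Polynomial.X ^ q + Polynomial.C B * Polynomial.X - Polynomial.C C with hP
  have hPne : P ≠ 0 := by
    intro h
    have : P.coeff q = A := by
      simp only [hP, coeff_sub, coeff_add, coeff_C_mul, coeff_X, coeff_C, coeff_X_pow]
      rw [if_pos trivial, if_neg (by omega), if_neg (by omega)]
      ring
    rw [h] at this
    simp at this
    exact hA this.symm
  have hdeg : P.natDegree ≤ q := by
    apply le_trans (natDegree_sub_le _ _)
    simp only [max_le_iff]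
    constructor
    · apply le_trans (natDegree_add_le _ _)
      simp only [max_le_iff]
      constructor
      · apply le_trans (natDegree_C_mul_le _ _); simp
      · apply le_trans (natDegree_C_mul_le _ _); simp; omega
    · simp
  have hsub : (Finset.univ.filter fun x : F => A * x ^ q + B * x = C) ⊆ P.roots.toFinset := by
    intro x hx
    simp only [Finset.mem_filter] at hx
    rw [Multiset.mem_toFinset, mem_roots hPne]
    simp [hP, IsRoot, sub_eq_zero, hx.2]
  calc (Finset.univ.filter fun x : F => A * x ^ q + B * x = C).card
      ≤ P.roots.toFinset.card := Finset.card_le_card hsub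
    _ ≤ Multiset.card P.roots := Multiset.toFinset_card_le _
    _ ≤ P.natDegree := P.card_roots'
    _ ≤ q := hdeg
lemma aux_mu {F : Type*} [Field F] (q : ℕ) (a b u v w : F)
    (hq0 : q ≠ 0)
    (hqq : ∀ x : F, (x^q)^q = x)
    (hadd : ∀ x y : F, (x+y)^q = x^q + y^q)
    (hsubq : ∀ x y : F, (x-y)^q = x^q - y^q)
    (ha : a ≠ 0) (hb : b ≠ 0) (hba : b * b^q = a * a^q)
    (huv : u * u^q ≠ v * v^q)
    (hw : b * (u*w^q + v*w)^q = a^q * (u*w^q + v*w)) :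
    (u*u^q - v*v^q) * (a*w^q + b*w)
      = (a*u^q + a^q*u - b*v^q - b^q*v) * (u*w^q + v*w) := by
  have hexp : (u*w^q + v*w)^q = u^q*w + v^q*w^q := by
    rw [hadd, mul_pow, mul_pow, hqq]
  rw [hexp] at hw
  have hw' : (b*v^q - a^q*u) * w^q + (b*u^q - a^q*v) * w = 0 := by linear_combination hw
  by_cases hal : b*v^q - a^q*u = 0
  -- degenerate case: show contradiction with huv
  · exfalso
    have hbe : (b*u^q - a^q*v) = 0 := by
      have hprod : (b^q*u - a*v^q) * (b*u^q - a^q*v) = 0 := by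
        linear_combination (b^q*v - a*u^q) * hal - (v*v^q - u*u^q) * hba
      rcases mul_eq_zero.mp hprod with h | h
      · have hq1 : (b*u^q - a^q*v)^q = b^q*u - a*v^q := by
          rw [hsubq, mul_pow, mul_pow, hqq, hqq]
        have : ((b*u^q - a^q*v)^q)^q = (0:F)^q := by rw [hq1, h]
        rwa [hqq, zero_pow hq0] at this
      · exact h
    -- from hal and hbe derive u*u^q = v*v^q
    have h1 : b*v^q = a^q*u := by linear_combination hal
    have h2 : b*u^q = a^q*v := by linear_combination hbe
    apply huv
    have hcan : a^q * b ≠ 0 := mul_ne_zero (pow_ne_zero _ ha) hb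
    apply mul_left_cancel₀ hcan
    calc a^q*b*(u*u^q) = (a^q*u)*(b*u^q) := by ring
    _ = (b*v^q)*(a^q*v) := by rw [h1, h2]
    _ = a^q*b*(v*v^q) := by ring
  · apply mul_left_cancel₀ hal
    linear_combination ((u*u^q - v*v^q)*a - (a*u^q + a^q*u - b*v^q - b^q*v)*u) * hw'
      + (v*(v*v^q - u*u^q)*w) * hba
lemma aux_L {F : Type*} [Field F] (q : ℕ) (hq0 : q ≠ 0)
    (hqq : ∀ x : F, (x^q)^q = x)
    (hsubq : ∀ x y : F, (x-y)^q = x^q - y^q)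
    (u v : F) (huv : u * u^q ≠ v * v^q)
    (w : F) (hw : u * w^q + v * w = 0) : w = 0 := by
  by_contra hw0
  have hwq0 : w^q ≠ 0 := fun h => hw0 (by rw [← hqq w, h, zero_pow hq0])
  have hneg : ∀ x : F, (-x)^q = -(x^q) := by
    intro x
    have h := hsubq 0 x
    rw [zero_pow hq0, zero_sub, zero_sub] at h
    exact h
  have h1 : u * w^q = -(v*w) := by linear_combination hw
  have h2 : u^q * w = -(v^q * w^q) := by
    have := congrArg (fun z => z^q) h1
    rw [mul_pow, hqq, hneg, mul_pow] at this
    exact this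
  have h3 : (u * u^q - v * v^q) * (w * w^q) = 0 := by
    linear_combination (u^q * w) * h1 - (v * w) * h2
  rcases mul_eq_zero.mp h3 with h | h
  · exact huv (by linear_combination h)
  · exact hw0 (by rcases mul_eq_zero.mp h with h' | h' <;> [exact h'; exact absurd h' hwq0])

set_option maxHeartbeats 1000000 in
theorem stmt_14 {F : Type*} [Field F] [Fintype F]
    (q : ℕ) (hq : IsPrimePow q) (hF : Fintype.card F = q ^ 2)
    (d : ℕ) (hd3 : 3 ≤ d) (hdvd : d ∣ q ^ 2 - 1)
    (a b c u v : F) (hab : a * b ≠ 0)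
    (hab1 : a ^ (q + 1) = b ^ (q + 1)) (hac : a * c ^ q = b ^ q * c)
    (huv : u ^ (q + 1) ≠ v ^ (q + 1))
    (B : F) (hB : B = a * u ^ q - b * v ^ q)
    (f : F → F)
    (hf : f = fun x => (∑ k ∈ Finset.range d,
      (a * x ^ q + b * x + c) ^ (k * ((q ^ 2 - 1) / d) + 1)) + u * x ^ q + v * x) :
    ((1 + (d : F) * (B + B ^ q) / (u ^ (q + 1) - v ^ (q + 1))) ^ ((q ^ 2 - 1) / d) = 1 →
      Function.Bijective f) ∧
    (Odd d → d ∣ q - 1 →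
      (Function.Bijective f ↔
        (1 + (d : F) * (B + B ^ q) / (u ^ (q + 1) - v ^ (q + 1))) ^ ((q ^ 2 - 1) / d) = 1)) := by
  classical
  obtain ⟨hadd, hsubq, hnat, hqq, hneg1, hdvdne, hq2⟩ := aux_frob q hq hF
  set s := (q^2 - 1)/d with hs_def
  have hq4 : 4 ≤ q^2 := by
    calc 4 = 2^2 := rfl
    _ ≤ q^2 := Nat.pow_le_pow_left hq2 2
  have hsd : s * d = q^2 - 1 := Nat.div_mul_cancel hdvd
  have hs0 : s ≠ 0 := by intro h; rw [h, zero_mul] at hsd; omega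
  have hq0 : q ≠ 0 := by omega
  have hneg : ∀ x : F, (-x)^q = -(x^q) := fun x => by
    have h := hsubq 0 x; rwa [zero_pow hq0, zero_sub, zero_sub] at h
  have ha : a ≠ 0 := fun h => hab (by rw [h, zero_mul])
  have hb : b ≠ 0 := fun h => hab (by rw [h, mul_zero])
  have hba : b * b^q = a * a^q := by linear_combination - hab1
  have hbc : b * c^q = a^q * c := by
    have h := congrArg (fun z : F => z^q) hac
    rw [mul_pow, mul_pow, hqq c, hqq b] at h
    exact h.symm
  have huv' : u * u^q ≠ v * v^q := fun h => huv (by linear_combination h)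
  have hunits : ∀ t : F, t ≠ 0 → t^(q^2-1) = 1 := by
    intro t ht
    have h : t^(q^2-1) * t = 1 * t := by
      rw [← pow_succ, (by omega : q^2 - 1 + 1 = q^2), ← hF, FiniteField.pow_card, one_mul]
    exact mul_right_cancel₀ ht h
  have hgeom := aux_geom (F := F) d s (q^2-1) hs0 hsd hunits
  have hphiT : ∀ x : F, b * (a*x^q + b*x + c)^q = a^q * (a*x^q + b*x + c) := by
    intro x
    have hx : (a*x^q + b*x + c)^q = a^q*x + b^q*x^q + c^q := by
      rw [hadd, hadd, mul_pow, mul_pow, hqq]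
    rw [hx]
    linear_combination x^q * hba + hbc
  set D := u^(q+1) - v^(q+1) with hD_def
  have hD : D ≠ 0 := by rw [hD_def]; exact sub_ne_zero_of_ne huv
  have hDe : D = u*u^q - v*v^q := by rw [hD_def]; ring
  have hBBq : B^q = a^q*u - b^q*v := by
    rw [hB, hsubq, mul_pow, mul_pow, hqq, hqq]
  have hBB : B + B^q = a*u^q + a^q*u - b*v^q - b^q*v := by rw [hBBq, hB]; ring
  have hLinj : ∀ w : F, u*w^q + v*w = 0 → w = 0 := aux_L q hq0 hqq hsubq u v huv'
  -- MAIN injectivity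
  have main : (1 + (d:F) * (B + B^q) / D)^s = 1 → Function.Injective f := by
    intro hDel x1 x2 hfx
    simp only [hf] at hfx
    rw [hgeom (a*x1^q + b*x1 + c), hgeom (a*x2^q + b*x2 + c)] at hfx
    set t1 := a*x1^q + b*x1 + c with ht1
    set t2 := a*x2^q + b*x2 + c with ht2
    have hT1 : b*t1^q = a^q*t1 := by rw [ht1]; exact hphiT x1
    have hT2 : b*t2^q = a^q*t2 := by rw [ht2]; exact hphiT x2
    apply sub_eq_zero.mp
    set w := x1 - x2 with hw
    have hwq : w^q = x1^q - x2^q := by rw [hw]; exact hsubq x1 x2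
    have ht12 : t1 - t2 = a*w^q + b*w := by rw [ht1, ht2, hwq, hw]; ring
    have hDne0 : (1 + (d:F) * (B + B^q) / D) ≠ 0 := by
      intro h; rw [h, zero_pow hs0] at hDel; exact zero_ne_one hDel
    by_cases h1 : t1^s = 1 <;> by_cases h2 : t2^s = 1
    · -- both one
      rw [if_pos h1, if_pos h2] at hfx
      have hLw : u*w^q + v*w = -((d:F)*(t1 - t2)) := by
        linear_combination hfx + u*hwq + v*hw
      have hLT : b*(u*w^q + v*w)^q = a^q*(u*w^q + v*w) := by
        rw [hLw, hneg, mul_pow, hnat, hsubq]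
        linear_combination (-(d:F))*hT1 + (d:F)*hT2
      have hmu := aux_mu q a b u v w hq0 hqq hadd hsubq ha hb hba huv' hLT
      have hLw' : u*w^q + v*w = -((d:F)*(a*w^q + b*w)) := by
        rw [hLw, ht12]
      have h' : (D + (d:F)*(B+B^q)) * (a*w^q + b*w) = 0 := by
        linear_combination hmu + (a*u^q + a^q*u - b*v^q - b^q*v)*hLw'
          + (a*w^q + b*w)*hDe + ((d:F)*(a*w^q + b*w))*hBB
      have hz : D + (d:F)*(B+B^q) ≠ 0 := by
        intro h
        apply hDne0
        field_simp
        linear_combination h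
      have hP0 : a*w^q + b*w = 0 := by
        rcases mul_eq_zero.mp h' with h | h
        · exact absurd h hz
        · exact h
      apply hLinj
      rw [hLw']
      rw [hP0, mul_zero, neg_zero]
    · -- t1 one, t2 not
      exfalso
      rw [if_pos h1, if_neg h2] at hfx
      have hLw : u*w^q + v*w = -((d:F)*t1) := by
        linear_combination hfx + u*hwq + v*hw
      have hLT : b*(u*w^q + v*w)^q = a^q*(u*w^q + v*w) := by
        rw [hLw, hneg, mul_pow, hnat]
        linear_combination (-(d:F))*hT1
      have hmu := aux_mu q a b u v w hq0 hqq hadd hsubq ha hb hba huv' hLT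
      have hDt2 : D*t2 = (D + (d:F)*(B+B^q))*t1 := by
        linear_combination (-D)*ht12 - hmu - (a*w^q + b*w)*hDe
          - (a*u^q + a^q*u - b*v^q - b^q*v)*hLw - ((d:F)*t1)*hBB
      have ht2D : t2 = (1 + (d:F)*(B+B^q)/D)*t1 := by
        apply mul_left_cancel₀ hD
        rw [hDt2]
        field_simp
      apply h2
      rw [ht2D, mul_pow, hDel, h1, one_mul]
    · -- t2 one, t1 not
      exfalso
      rw [if_neg h1, if_pos h2] at hfx
      have hLw : u*w^q + v*w = (d:F)*t2 := by
        linear_combination hfx + u*hwq + v*hw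
      have hLT : b*(u*w^q + v*w)^q = a^q*(u*w^q + v*w) := by
        rw [hLw, mul_pow, hnat]
        linear_combination (d:F)*hT2
      have hmu := aux_mu q a b u v w hq0 hqq hadd hsubq ha hb hba huv' hLT
      have hDt1 : D*t1 = (D + (d:F)*(B+B^q))*t2 := by
        linear_combination D*ht12 + hmu + (a*w^q + b*w)*hDe
          + (a*u^q + a^q*u - b*v^q - b^q*v)*hLw - ((d:F)*t2)*hBB
      have ht1D : t1 = (1 + (d:F)*(B+B^q)/D)*t2 := by
        apply mul_left_cancel₀ hD
        rw [hDt1]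
        field_simp
      apply h1
      rw [ht1D, mul_pow, hDel, h2, one_mul]
    · -- both not one
      rw [if_neg h1, if_neg h2] at hfx
      apply hLinj
      linear_combination hfx + u*hwq + v*hw
  -- CONVERSE
  have hconv : Odd d → d ∣ q - 1 → Function.Bijective f →
      (1 + (d:F) * (B + B^q) / D)^s = 1 := by
    intro hodd hdq1 hbij
    by_contra hDeln
    have hdF : (d:F) ≠ 0 := hdvdne d hdq1
    -- the line T as a finset
    set Tf : Finset F := Finset.univ.filter (fun t : F => b*t^q = a^q*t) with hTf
    have hTcard : Tf.card ≤ q := by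
      have hsub : Tf ⊆ Finset.univ.filter (fun x : F => b*x^q + (-(a^q))*x = 0) := by
        intro t ht
        rw [hTf, Finset.mem_filter] at ht
        rw [Finset.mem_filter]
        exact ⟨Finset.mem_univ t, by linear_combination ht.2⟩
      exact le_trans (Finset.card_le_card hsub) (aux_roots q hq2 b (-(a^q)) 0 hb)
    set S : Finset F := Finset.univ.image (fun x : F => a*x^q + b*x) with hS
    have hST : S ⊆ Tf := by
      intro t ht
      rw [hS, Finset.mem_image] at ht
      obtain ⟨x, _, rfl⟩ := ht
      rw [hTf, Finset.mem_filter]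
      refine ⟨Finset.mem_univ _, ?_⟩
      have hx : (a*x^q + b*x)^q = a^q*x + b^q*x^q := by
        rw [hadd, mul_pow, mul_pow, hqq]
      rw [hx]
      linear_combination x^q * hba
    have hcard2 : q * q ≤ S.card * q := by
      have h1 : (Finset.univ : Finset F).card = ∑ t ∈ S, (Finset.univ.filter
          (fun x : F => a*x^q + b*x = t)).card := by
        have := Finset.card_eq_sum_card_fiberwise
          (f := fun x : F => a*x^q + b*x) (s := Finset.univ) (t := S)
          (fun x _ => by rw [hS]; exact Finset.mem_image_of_mem _ (Finset.mem_univ x))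
        exact this
      have h2 : ∀ t ∈ S, (Finset.univ.filter (fun x : F => a*x^q + b*x = t)).card ≤ q :=
        fun t _ => aux_roots q hq2 a b t ha
      have h3 : ∑ t ∈ S, (Finset.univ.filter (fun x : F => a*x^q + b*x = t)).card
          ≤ S.card * q := by
        calc ∑ t ∈ S, (Finset.univ.filter (fun x : F => a*x^q + b*x = t)).card
            ≤ S.card • q := Finset.sum_le_card_nsmul _ _ _ h2
        _ = S.card * q := by rw [smul_eq_mul]
      calc q * q = q^2 := (sq q).symm
      _ = (Finset.univ : Finset F).card := by rw [Finset.card_univ, hF]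
      _ ≤ S.card * q := h1 ▸ h3
    have hqS : q ≤ S.card := Nat.le_of_mul_le_mul_right hcard2 (by omega)
    have hSeq : S = Tf := Finset.eq_of_subset_of_card_le hST (le_trans hTcard hqS)
    -- a nonzero element of T
    obtain ⟨t0, ht0S, ht0ne⟩ := Finset.exists_mem_ne
      (lt_of_lt_of_le (by omega : 1 < q) hqS) (0 : F)
    have ht0T : b*t0^q = a^q*t0 := by
      have h := hST ht0S
      rw [hTf, Finset.mem_filter] at h
      exact h.2
    -- cyclic group argument
    obtain ⟨γ, hγ⟩ := IsCyclic.exists_generator (α := Fˣ)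
    have hcardU : Fintype.card Fˣ = q^2 - 1 := by rw [Fintype.card_units, hF]
    have horder : orderOf γ = q^2 - 1 := by
      rw [orderOf_eq_card_of_forall_mem_zpowers hγ, Nat.card_eq_fintype_card, hcardU]
    have hγpow : γ ^ (q^2 - 1) = 1 := by rw [← horder]; exact pow_orderOf_eq_one γ
    obtain ⟨n0, hn0⟩ : ∃ n0 : ℕ, γ ^ n0 = Units.mk0 t0 ht0ne :=
      (Submonoid.mem_powers_iff _ _).mp
        (mem_powers_iff_mem_zpowers.mpr (hγ (Units.mk0 t0 ht0ne)))
    -- coprimality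
    have hcop : Nat.Coprime (q+1) d := by
      have hg2 : Nat.gcd (q+1) d ∣ 2 := by
        have h1 : Nat.gcd (q+1) d ∣ (q+1) - (q-1) :=
          Nat.dvd_sub (Nat.gcd_dvd_left _ _) ((Nat.gcd_dvd_right _ _).trans hdq1)
        rwa [(by omega : (q+1) - (q-1) = 2)] at h1
      rcases (Nat.dvd_prime Nat.prime_two).mp hg2 with h | h
      · exact h
      · exfalso
        have h2 : 2 ∣ d := h ▸ Nat.gcd_dvd_right _ _
        rw [Nat.odd_iff] at hodd
        omega
    haveI : NeZero d := ⟨by omega⟩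
    set ζ : ZMod d := (-(n0 : ZMod d)) * ((q+1 : ℕ) : ZMod d)⁻¹ with hζ
    set j : ℕ := ζ.val with hj
    have hjd : (d:ℕ) ∣ (q+1)*j + n0 := by
      have hz : (((q+1)*j + n0 : ℕ) : ZMod d) = 0 := by
        push_cast
        rw [hj, ZMod.natCast_val, ZMod.cast_id, hζ]
        have hinv : ((q+1 : ℕ) : ZMod d) * ((q+1 : ℕ) : ZMod d)⁻¹ = 1 :=
          ZMod.coe_mul_inv_eq_one _ hcop
        push_cast at hinv ⊢
        calc ((q:ZMod d)+1) * (-(n0 : ZMod d) * ((q:ZMod d)+1)⁻¹) + (n0 : ZMod d)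
            = -((n0:ZMod d) * (((q:ZMod d)+1) * ((q:ZMod d)+1)⁻¹)) + n0 := by ring
        _ = 0 := by rw [hinv]; ring
      exact (ZMod.natCast_eq_zero_iff _ _).mp hz
    -- build t1
    set lamu : Fˣ := γ ^ ((q+1)*j) with hlamu
    set t1u : Fˣ := lamu * Units.mk0 t0 ht0ne with ht1u
    set t1 : F := (t1u : F) with ht1
    have ht1ne : t1 ≠ 0 := Units.ne_zero t1u
    have hfac : (q+1)*(q-1) = q^2 - 1 := by
      have := Nat.sq_sub_sq q 1
      simpa using this.symm
    have hlampow : (lamu : F) ^ (q-1) = 1 := by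
      have h1 : lamu ^ (q-1) = 1 := by
        rw [hlamu, ← pow_mul]
        have he : (q+1)*j*(q-1) = (q^2-1)*j := by
          calc (q+1)*j*(q-1) = ((q+1)*(q-1))*j := by ring
          _ = (q^2-1)*j := by rw [hfac]
        rw [he, pow_mul, hγpow, one_pow]
      rw [← Units.val_pow_eq_pow_val, h1, Units.val_one]
    have hlamq : (lamu : F)^q = (lamu : F) := by
      calc (lamu : F)^q = (lamu : F)^(q-1+1) := by rw [(by omega : q-1+1 = q)]
      _ = (lamu : F)^(q-1) * (lamu : F) := pow_succ _ _
      _ = (lamu : F) := by rw [hlampow, one_mul]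
    have ht1val : t1 = (lamu : F) * t0 := by
      rw [ht1, ht1u, Units.val_mul, Units.val_mk0]
    have ht1T : b*t1^q = a^q*t1 := by
      rw [ht1val, mul_pow, hlamq]
      calc b * ((lamu:F) * t0^q) = (lamu:F) * (b * t0^q) := by ring
      _ = (lamu:F) * (a^q*t0) := by rw [ht0T]
      _ = a^q * ((lamu:F) * t0) := by ring
    have ht1s : t1^s = 1 := by
      obtain ⟨K, hK⟩ := hjd
      have he : ((q+1)*j + n0)*s = (q^2-1)*K := by
        calc ((q+1)*j + n0)*s = (d*K)*s := by rw [hK]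
        _ = (s*d)*K := by ring
        _ = (q^2-1)*K := by rw [hsd]
      have h1 : t1u ^ s = 1 := by
        rw [ht1u, ← hn0, hlamu, ← pow_add, ← pow_mul, he, pow_mul, hγpow, one_pow]
      rw [ht1, ← Units.val_pow_eq_pow_val, h1, Units.val_one]
    -- find x1 with phi x1 = t1
    have ht1cT : t1 - c ∈ Tf := by
      rw [hTf, Finset.mem_filter]
      refine ⟨Finset.mem_univ _, ?_⟩
      rw [hsubq]
      linear_combination ht1T - hbc
    obtain ⟨x1, _, hx1⟩ := Finset.mem_image.mp (hSeq ▸ ht1cT)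
    have hphix1 : a*x1^q + b*x1 + c = t1 := by linear_combination hx1
    -- L is bijective, get w
    have hLbij : Function.Bijective (fun x : F => u*x^q + v*x) := by
      rw [← Finite.injective_iff_bijective]
      intro x y hxy
      simp only at hxy
      apply sub_eq_zero.mp
      apply hLinj
      rw [hsubq]
      linear_combination hxy
    obtain ⟨w, hwL⟩ := hLbij.surjective ((d:F)*t1)
    simp only at hwL
    have hw0 : w ≠ 0 := by
      intro h
      rw [h, zero_pow hq0, mul_zero, mul_zero, add_zero] at hwL
      exact (mul_ne_zero hdF ht1ne) hwL.symm
    -- mu relation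
    have hLT : b*(u*w^q + v*w)^q = a^q*(u*w^q + v*w) := by
      rw [hwL, mul_pow, hnat]
      linear_combination (d:F)*ht1T
    have hmu := aux_mu q a b u v w hq0 hqq hadd hsubq ha hb hba huv' hLT
    -- compute t2
    have ht2 : a*(x1+w)^q + b*(x1+w) + c = t1 + (a*w^q + b*w) := by
      rw [hadd]
      linear_combination hphix1
    have hDt2 : D*(t1 + (a*w^q + b*w)) = (D + (d:F)*(B+B^q))*t1 := by
      linear_combination hmu + (a*u^q + a^q*u - b*v^q - b^q*v)*hwL
        + (a*w^q + b*w)*hDe - ((d:F)*t1)*hBB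
    have ht2D : a*(x1+w)^q + b*(x1+w) + c = (1 + (d:F)*(B+B^q)/D)*t1 := by
      rw [ht2]
      apply mul_left_cancel₀ hD
      rw [hDt2]
      field_simp
    have ht2s : (a*(x1+w)^q + b*(x1+w) + c)^s ≠ 1 := by
      rw [ht2D, mul_pow, ht1s, mul_one]
      exact hDeln
    -- conclude f (x1+w) = f x1
    have hfx1 : f x1 = (d:F)*t1 + (u*x1^q + v*x1) := by
      rw [hf]
      simp only
      rw [hgeom, hphix1, if_pos ht1s]
      ring
    have hfx2 : f (x1+w) = u*(x1+w)^q + v*(x1+w) := by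
      rw [hf]
      simp only
      rw [hgeom, if_neg ht2s, zero_add]
    have hcontr : f (x1+w) = f x1 := by
      rw [hfx1, hfx2, hadd]
      linear_combination hwL
    have := hbij.injective hcontr
    exact hw0 (add_eq_left.mp this)
  refine ⟨fun h => Finite.injective_iff_bijective.mp (main h),
    fun hodd hdq1 => ⟨fun hbij => hconv hodd hdq1 hbij,
      fun h => Finite.injective_iff_bijective.mp (main h)⟩⟩
end

section
/- Let q be an odd prime power, let d ≥ 3 be an odd divisor of q−1, let b, c ∈ F_{q²} satisfy b^{q+1} = 1 and c^q = b^q·c, and let e be a nonzero element of the subfield F_q of F_{q²}. Define f(x) = Σ_{k=0}^{d−1} e·(x^q + b·x + c)^{k·(q²−1)/d + 1} + (1−e)·x^q − b·(1+e)·x. Then f is a permutation polynomial of F_{q²} if and only if (1 − d)^{(q²−1)/d} = 1, where 1 − d denotes the field element 1 minus d·1. -/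
private lemma sq_sub_one_aux (q : ℕ) (hq : 1 ≤ q) : (q - 1) * (q + 1) = q ^ 2 - 1 := by
  have h : 1 ≤ q ^ 2 := Nat.one_le_pow _ _ (by omega)
  zify [hq, h]
  ring

theorem stmt_15 {F : Type*} [Field F] [Fintype F]
    (q : ℕ) (hq : IsPrimePow q) (hqodd : Odd q) (hF : Fintype.card F = q ^ 2)
    (d : ℕ) (hd3 : 3 ≤ d) (hdodd : Odd d) (hdvd : d ∣ q - 1)
    (b c : F) (hb : b ^ (q + 1) = 1) (hc : c ^ q = b ^ q * c)
    (e : F) (he : e ^ q = e) (he0 : e ≠ 0)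
    (f : F → F)
    (hf : f = fun x => (∑ k ∈ Finset.range d,
      e * (x ^ q + b * x + c) ^ (k * ((q ^ 2 - 1) / d) + 1)) +
      (1 - e) * x ^ q - b * (1 + e) * x) :
    Function.Bijective f ↔ (1 - (d : F)) ^ ((q ^ 2 - 1) / d) = 1 := by
  classical
  -- numeric facts
  have hq2 : 2 ≤ q := hq.two_le
  have hq3 : 3 ≤ q := by have := Nat.odd_iff.mp hqodd; omega
  obtain ⟨p, n0, hp', hn0, hpq⟩ := hq
  have hpp : p.Prime := hp'.nat_prime
  have hpdvdq : p ∣ q := hpq ▸ dvd_pow_self p hn0.ne'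
  have hpodd : p ≠ 2 := by
    rintro rfl
    have := Nat.odd_iff.mp hqodd
    omega
  -- characteristic
  have hcharF : CharP F p := by
    have h1 : CharP F (ringChar F) := ringChar.charP F
    have h2 : (ringChar F).Prime := CharP.char_is_prime F (ringChar F)
    obtain ⟨m, hm1, hm2⟩ := FiniteField.card F (ringChar F)
    have h3 : ringChar F ∣ q ^ 2 := by
      rw [← hF, hm2]
      exact dvd_pow_self _ (by positivity)
    have h4 : ringChar F ∣ q := h2.prime.dvd_of_dvd_pow h3
    have h5 : ringChar F ∣ p := by
      rw [← hpq] at h4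
      exact h2.prime.dvd_of_dvd_pow h4
    have h6 : ringChar F = p := (Nat.prime_dvd_prime_iff_eq h2 hpp).mp h5
    rwa [h6] at h1
  haveI := Fact.mk hpp
  haveI := hcharF
  -- the q-power Frobenius ring hom and its consequences
  set φ : F →+* F := iterateFrobenius F p n0 with hφdef
  have hφ : ∀ x : F, φ x = x ^ q := by
    intro x
    rw [hφdef, iterateFrobenius_def p n0 x, hpq]
  have hq_add : ∀ u v : F, (u + v) ^ q = u ^ q + v ^ q := by
    intro u v; simpa only [hφ] using map_add φ u v
  have hq_sub : ∀ u v : F, (u - v) ^ q = u ^ q - v ^ q := by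
    intro u v; simpa only [hφ] using map_sub φ u v
  have hq_neg : ∀ u : F, (-u) ^ q = -(u ^ q) := by
    intro u; simpa only [hφ] using map_neg φ u
  have hq_div : ∀ u v : F, (u / v) ^ q = u ^ q / v ^ q := by
    intro u v; simpa only [hφ] using map_div₀ φ u v
  have hnatq : ∀ n : ℕ, ((n : F)) ^ q = (n : F) := by
    intro n; simpa only [hφ] using map_natCast φ n
  have h2q : (2 : F) ^ q = 2 := by simpa using hnatq 2
  have h1q : (1 : F) ^ q = 1 := one_pow q
  have hx2 : ∀ x : F, (x ^ q) ^ q = x := by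
    intro x
    rw [← pow_mul, ← sq, ← hF, FiniteField.pow_card]
  have h2F : (2 : F) ≠ 0 := by
    intro h
    have h1 : ((2 : ℕ) : F) = 0 := by exact_mod_cast h
    have h2 : p ∣ 2 := (CharP.cast_eq_zero_iff F p 2).mp h1
    exact hpodd ((Nat.prime_dvd_prime_iff_eq hpp Nat.prime_two).mp h2)
  have hb0 : b ≠ 0 := by
    intro h
    rw [h, zero_pow (by omega)] at hb
    exact zero_ne_one hb
  have hbq : b ^ q * b = 1 := by rw [← pow_succ]; exact hb
  have hbqne : b ^ q ≠ 0 := pow_ne_zero _ hb0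
  -- divisibility and s
  have hdvd2 : d ∣ q ^ 2 - 1 :=
    hdvd.trans ⟨q + 1, (sq_sub_one_aux q (by omega)).symm⟩
  set s : ℕ := (q ^ 2 - 1) / d with hs_def
  have hds : d * s = q ^ 2 - 1 := Nat.mul_div_cancel' hdvd2
  have hqq : q ≤ q ^ 2 := Nat.le_self_pow (by norm_num) q
  have hs0 : 0 < s := Nat.div_pos (by have := Nat.le_of_dvd (by omega) hdvd; omega) (by omega)
  have hdF : (d : F) ≠ 0 := by
    intro h
    have h1 : p ∣ d := (CharP.cast_eq_zero_iff F p d).mp h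
    have h2 : p ∣ q - 1 := h1.trans hdvd
    have h3 : p ∣ 1 := by
      have h4 := Nat.dvd_sub hpdvdq h2
      rwa [show q - (q - 1) = 1 by omega] at h4
    have := Nat.le_of_dvd one_pos h3
    have := hpp.two_le
    omega
  -- x^(q²-1) = 1 for x ≠ 0
  have hunit : ∀ x : F, x ≠ 0 → x ^ (q ^ 2 - 1) = 1 := by
    intro x hx
    rw [← hF]
    exact FiniteField.pow_card_sub_one_eq_one x hx
  -- geometric sum evaluation
  have hgeo : ∀ y : F, (∑ k ∈ Finset.range d, e * y ^ (k * s + 1)) =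
      if y ^ s = 1 then e * (d : F) * y else 0 := by
    intro y
    have hterm : ∀ k, e * y ^ (k * s + 1) = (y ^ s) ^ k * (e * y) := by
      intro k
      rw [pow_add, pow_one, mul_comm k s, pow_mul]
      ring
    rw [Finset.sum_congr rfl fun k _ => hterm k, ← Finset.sum_mul]
    by_cases hys : y ^ s = 1
    · rw [if_pos hys, hys]
      simp only [one_pow, Finset.sum_const, Finset.card_range, nsmul_eq_mul, mul_one]
      ring
    · rw [if_neg hys]
      by_cases hy0 : y = 0
      · simp [hy0]
      · rw [geom_sum_eq hys d, ← pow_mul, mul_comm s d, hds, hunit y hy0]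
        simp
  -- key form of f
  have hkey : ∀ x : F, f x =
      e * (if (x ^ q + b * x + c) ^ s = 1 then ((d : F) - 1) * (x ^ q + b * x + c)
        else -(x ^ q + b * x + c)) + (x ^ q - b * x) + e * c := by
    intro x
    rw [hf]
    simp only
    rw [hgeo (x ^ q + b * x + c)]
    by_cases h : (x ^ q + b * x + c) ^ s = 1
    · rw [if_pos h, if_pos h]; ring
    · rw [if_neg h, if_neg h]; ring
  -- the line L
  have hL : ∀ x : F, (x ^ q + b * x + c) ^ q = b ^ q * (x ^ q + b * x + c) := by
    intro x
    rw [hq_add, hq_add, mul_pow, hx2, hc]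
    linear_combination -x * hbq
  have hL' : ∀ x : F, (x ^ q - b * x) ^ q = -(b ^ q) * (x ^ q - b * x) := by
    intro x
    rw [hq_sub, mul_pow, hx2]
    linear_combination -x * hbq
  -- the projection is injective
  have hinj2 : ∀ x x' : F, x ^ q + b * x + c = x' ^ q + b * x' + c →
      x ^ q - b * x = x' ^ q - b * x' → x = x' := by
    intro x x' h1 h2
    have h3 : (2 * b) * x = (2 * b) * x' := by linear_combination h1 - h2
    exact mul_left_cancel₀ (mul_ne_zero h2F hb0) h3
  -- Ψ stays on L
  have hΨL : ∀ y : F, y ^ q = b ^ q * y →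
      (if y ^ s = 1 then ((d : F) - 1) * y else -y) ^ q =
        b ^ q * (if y ^ s = 1 then ((d : F) - 1) * y else -y) := by
    intro y hy
    by_cases h : y ^ s = 1
    · rw [if_pos h, mul_pow, hq_sub, hnatq, h1q, hy]
      ring
    · rw [if_neg h, hq_neg, hy]
      ring
  constructor
  · -- bijective → condition
    intro hbij
    by_contra hcond
    -- build y ∈ L \ {0} with y^s = 1 via cyclic group
    obtain ⟨ζ, hζ⟩ := IsCyclic.exists_generator (α := Fˣ)
    have hord : orderOf ζ = q ^ 2 - 1 := by
      rw [orderOf_eq_card_of_forall_mem_zpowers hζ, Nat.card_eq_fintype_card,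
        Fintype.card_units, hF]
    set bu : Fˣ := Units.mk0 b hb0 with hbu
    obtain ⟨t, ht⟩ := (Submonoid.mem_powers_iff _ _).mp
      ((mem_powers_iff_mem_zpowers).mpr (hζ (bu ^ q)))
    have hbu1 : bu ^ (q + 1) = 1 := by
      have : ((bu ^ (q + 1) : Fˣ) : F) = ((1 : Fˣ) : F) := by
        rw [Units.val_pow_eq_pow_val, hbu, Units.val_mk0, hb, Units.val_one]
      exact Units.ext this
    have h1 : ζ ^ (t * (q + 1)) = 1 := by
      rw [pow_mul, ht, ← pow_mul, mul_comm q (q + 1), pow_mul, hbu1, one_pow]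
    have h2 : q ^ 2 - 1 ∣ t * (q + 1) := hord ▸ orderOf_dvd_of_pow_eq_one h1
    have h3 : q - 1 ∣ t := by
      rw [← sq_sub_one_aux q (by omega)] at h2
      exact (Nat.mul_dvd_mul_iff_right (show 0 < q + 1 by omega)).mp h2
    obtain ⟨k, hk⟩ := h3
    -- coprimality of d and q+1
    have hcop : Nat.Coprime d (q + 1) := by
      have hg1 : Nat.gcd d (q + 1) ∣ q - 1 := (Nat.gcd_dvd_left d (q + 1)).trans hdvd
      have hg2 : Nat.gcd d (q + 1) ∣ q + 1 := Nat.gcd_dvd_right d (q + 1)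
      have hg3 : Nat.gcd d (q + 1) ∣ 2 := by
        have h5 := Nat.dvd_sub hg2 hg1
        rwa [show q + 1 - (q - 1) = 2 by omega] at h5
      have hgodd : ¬ 2 ∣ Nat.gcd d (q + 1) := by
        intro h2d
        have : 2 ∣ d := h2d.trans (Nat.gcd_dvd_left d (q + 1))
        rw [Nat.odd_iff] at hdodd
        omega
      rcases (Nat.dvd_prime Nat.prime_two).mp hg3 with h | h
      · exact h
      · exact absurd (h ▸ dvd_refl (Nat.gcd d (q + 1))) hgodd
    haveI : NeZero (q + 1) := ⟨by omega⟩
    set u : ℕ := ((d : ZMod (q + 1))⁻¹ * (k : ZMod (q + 1))).val with hu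
    have hmod : d * u ≡ k [MOD q + 1] := by
      have h4 : ((d * u : ℕ) : ZMod (q + 1)) = (k : ZMod (q + 1)) := by
        push_cast
        rw [hu, ZMod.natCast_val, ZMod.cast_id, ← mul_assoc,
          ZMod.coe_mul_inv_eq_one d hcop, one_mul]
      exact (ZMod.natCast_eq_natCast_iff _ _ _).mp h4
    set y : F := ((ζ ^ (d * u) : Fˣ) : F) with hy
    have hy0 : y ≠ 0 := Units.ne_zero _
    have hys : y ^ s = 1 := by
      rw [hy, ← Units.val_pow_eq_pow_val, ← pow_mul]
      have h5 : d * u * s = (q ^ 2 - 1) * u := by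
        rw [mul_comm d u, mul_assoc, hds, mul_comm]
      rw [h5, pow_mul, ← hord, pow_orderOf_eq_one, one_pow, Units.val_one]
    have hyq : y ^ (q - 1) = b ^ q := by
      have h5 : ζ ^ (d * u * (q - 1)) = ζ ^ t := by
        rw [pow_eq_pow_iff_modEq, hord, hk, ← sq_sub_one_aux q (by omega),
          mul_comm (q - 1) (q + 1)]
        have h6 : d * u * (q - 1) ≡ k * (q - 1) [MOD (q + 1) * (q - 1)] :=
          hmod.mul_right' _
        rwa [mul_comm k (q - 1)] at h6
      have h7 : (ζ ^ (d * u)) ^ (q - 1) = bu ^ q := by rw [← pow_mul, h5, ht]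
      calc y ^ (q - 1) = ((ζ ^ (d * u)) ^ (q - 1) : Fˣ) := by
            rw [hy, ← Units.val_pow_eq_pow_val]
        _ = ((bu ^ q : Fˣ) : F) := by rw [h7]
        _ = b ^ q := by rw [Units.val_pow_eq_pow_val, hbu, Units.val_mk0]
    have hyL : y ^ q = b ^ q * y := by
      calc y ^ q = y ^ (q - 1 + 1) := by rw [show q - 1 + 1 = q by omega]
        _ = y ^ (q - 1) * y := by rw [pow_succ]
        _ = b ^ q * y := by rw [hyq]
    -- the colliding pair
    have hsolve : ∀ v : F, v ^ q = b ^ q * v → ((v / (2 * b)) ^ q = v / 2 ∧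
        b * (v / (2 * b)) = v / 2) := by
      intro v hv
      constructor
      · rw [hq_div, mul_pow, h2q, hv, mul_comm (2 : F) (b ^ q),
          mul_div_mul_left _ _ hbqne]
      · rw [mul_div_assoc', mul_comm b v, mul_comm (2 : F) b, ← div_div,
          mul_div_cancel_right₀ _ hb0]
    set y' : F := (1 - (d : F)) * y with hy'
    have hy'L : y' ^ q = b ^ q * y' := by
      rw [hy', mul_pow, hq_sub, h1q, hnatq, hyL]
      ring
    have hy's : y' ^ s ≠ 1 := by
      rw [hy', mul_pow, hys, mul_one]
      exact hcond
    set x : F := (y - c) / (2 * b) with hx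
    set x' : F := (y' - c) / (2 * b) with hx'
    have hyc : (y - c) ^ q = b ^ q * (y - c) := by
      rw [hq_sub, hyL, hc]; ring
    have hy'c : (y' - c) ^ q = b ^ q * (y' - c) := by
      rw [hq_sub, hy'L, hc]; ring
    obtain ⟨ha1, ha2⟩ := hsolve (y - c) hyc
    obtain ⟨ha1', ha2'⟩ := hsolve (y' - c) hy'c
    have hhalf : ∀ w : F, w / 2 + w / 2 = w := by
      intro w
      rw [← add_div, ← two_mul, mul_div_cancel_left₀ _ h2F]
    have hgx : x ^ q + b * x + c = y := by
      rw [hx, ha1, ha2, hhalf, sub_add_cancel]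
    have hgx' : x' ^ q + b * x' + c = y' := by
      rw [hx', ha1', ha2', hhalf, sub_add_cancel]
    have hBx : x ^ q - b * x = 0 := by rw [hx, ha1, ha2, sub_self]
    have hBx' : x' ^ q - b * x' = 0 := by rw [hx', ha1', ha2', sub_self]
    have hfx : f x = f x' := by
      rw [hkey x, hkey x', hgx, hgx', hBx, hBx', if_pos hys, if_neg hy's, hy']
      ring
    have hxx : x ≠ x' := by
      intro h
      have h1' : y - c = y' - c := by
        have h2' := congrArg (· * (2 * b)) h
        simp only [hx, hx', div_mul_cancel₀ _ (mul_ne_zero h2F hb0)] at h2'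
        exact h2'
      have h2' : (d : F) * y = 0 := by rw [hy'] at h1'; linear_combination h1'
      rcases mul_eq_zero.mp h2' with h | h
      · exact hdF h
      · exact hy0 h
    exact hxx (hbij.injective hfx)
  · -- condition → bijective
    intro hcond
    rw [← Finite.injective_iff_bijective]
    have hd1 : (1 : F) - (d : F) ≠ 0 := by
      intro h
      rw [h, zero_pow hs0.ne'] at hcond
      exact zero_ne_one hcond
    intro x x' hxx
    rw [hkey x, hkey x'] at hxx
    set Y : F := x ^ q + b * x + c with hY
    set Y' : F := x' ^ q + b * x' + c with hY'
    have hLx : Y ^ q = b ^ q * Y := hL x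
    have hLx' : Y' ^ q = b ^ q * Y' := hL x'
    set Ψ : F := if Y ^ s = 1 then ((d : F) - 1) * Y else -Y with hΨdef
    set Ψ' : F := if Y' ^ s = 1 then ((d : F) - 1) * Y' else -Y' with hΨ'def
    have hΨq : Ψ ^ q = b ^ q * Ψ := hΨL Y hLx
    have hΨ'q : Ψ' ^ q = b ^ q * Ψ' := hΨL Y' hLx'
    have hz : e * (Ψ - Ψ') = (x' ^ q - b * x') - (x ^ q - b * x) := by
      linear_combination hxx
    have hzq1 : (e * (Ψ - Ψ')) ^ q = b ^ q * (e * (Ψ - Ψ')) := by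
      rw [mul_pow, he, hq_sub, hΨq, hΨ'q]
      ring
    have hzq2 : (e * (Ψ - Ψ')) ^ q = -(b ^ q) * (e * (Ψ - Ψ')) := by
      rw [hz, hq_sub, hL' x', hL' x]
      ring
    have hz0 : e * (Ψ - Ψ') = 0 := by
      have h0 : (2 * b ^ q) * (e * (Ψ - Ψ')) = 0 := by linear_combination hzq2 - hzq1
      rcases mul_eq_zero.mp h0 with h | h
      · exact absurd h (mul_ne_zero h2F hbqne)
      · exact h
    have hΨeq : Ψ = Ψ' := by
      rcases mul_eq_zero.mp hz0 with h | h
      · exact absurd h he0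
      · exact sub_eq_zero.mp h
    have hB : x ^ q - b * x = x' ^ q - b * x' := by
      rw [hz0] at hz
      linear_combination hz
    have hyy : Y = Y' := by
      rw [hΨdef, hΨ'def] at hΨeq
      have hdm1 : (d : F) - 1 ≠ 0 := by
        intro h
        apply hd1
        linear_combination -h
      by_cases h1 : Y ^ s = 1 <;> by_cases h2 : Y' ^ s = 1
      · rw [if_pos h1, if_pos h2] at hΨeq
        exact mul_left_cancel₀ hdm1 hΨeq
      · rw [if_pos h1, if_neg h2] at hΨeq
        exfalso
        apply h2
        have hyy' : Y' = (1 - (d : F)) * Y := by linear_combination hΨeq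
        rw [hyy', mul_pow, hcond, h1, one_mul]
      · rw [if_neg h1, if_pos h2] at hΨeq
        exfalso
        apply h1
        have hyy' : Y = (1 - (d : F)) * Y' := by linear_combination -hΨeq
        rw [hyy', mul_pow, hcond, h2, one_mul]
      · rw [if_neg h1, if_neg h2] at hΨeq
        exact neg_injective hΨeq
    exact hinj2 x x' (by rw [← hY, ← hY', hyy]) hB
end

section
/- Let q be a prime power, let d be a positive divisor of q−1, let r be a positive integer, and let φ be a polynomial with coefficients in the subfield F_q of F_{q²}. Let a, b, c, u, v ∈ F_{q²} satisfy a·b ≠ 0, a^{q+1} = b^{q+1}, a·c^q = b^q·c, b·u ≠ a·v and B + A^{1−r}·B^{q·r} = 0. Then f(x) = (a·x^q + b·x + c)^r · φ((a·x^q + b·x + c)^{(q²−1)/d}) + u·x^q + v·x is a permutation polynomial of F_{q²} if and only if u^{q+1} ≠ v^{q+1}. -/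
theorem stmt_16 {F : Type*} [Field F] [Fintype F]
    (q : ℕ) (hq : IsPrimePow q) (hF : Fintype.card F = q ^ 2)
    (d : ℕ) (hd0 : 0 < d) (hdvd : d ∣ q - 1)
    (r : ℕ) (hr : 0 < r)
    (φ : Polynomial F) (hφ : ∀ i : ℕ, (φ.coeff i) ^ q = φ.coeff i)
    (a b c u v : F) (hab : a * b ≠ 0)
    (hab1 : a ^ (q + 1) = b ^ (q + 1)) (hac : a * c ^ q = b ^ q * c)
    (hA0 : b * u ≠ a * v)
    (A B : F) (hA : A = b * u - a * v) (hB : B = a * u ^ q - b * v ^ q)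
    (hB0 : B + A * (A ^ r)⁻¹ * B ^ (q * r) = 0)
    (f : F → F)
    (hf : f = fun x => (a * x ^ q + b * x + c) ^ r *
      φ.eval ((a * x ^ q + b * x + c) ^ ((q ^ 2 - 1) / d)) + u * x ^ q + v * x) :
    Function.Bijective f ↔ u ^ (q + 1) ≠ v ^ (q + 1) := by
  classical
  obtain ⟨p, k, hpp, hk, hpk⟩ := hq
  have hp : Nat.Prime p := hpp.nat_prime
  haveI : Fact p.Prime := ⟨hp⟩
  have hq2 : 2 ≤ q := by
    calc 2 ≤ p := hp.two_le
    _ ≤ p ^ k := Nat.le_self_pow (by omega) p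
    _ = q := hpk
  have hq0 : q ≠ 0 := by omega
  haveI hcharP : CharP F p := by
    obtain ⟨n, hpc, hcard⟩ := FiniteField.card F (ringChar F)
    have h1 : (ringChar F) ^ (n : ℕ) = p ^ (2 * k) := by
      rw [← hcard, hF, ← hpk, ← pow_mul, mul_comm k 2]
    have hdvd' : p ∣ ringChar F := by
      have h2 : p ∣ (ringChar F) ^ (n : ℕ) := by
        rw [h1]; exact dvd_pow_self p (by omega)
      exact hp.dvd_of_dvd_pow h2
    have h3 : p = ringChar F := (Nat.prime_dvd_prime_iff_eq hp hpc).mp hdvd'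
    rw [h3]; exact ringChar.charP F
  have frobadd : ∀ x y : F, (x + y) ^ q = x ^ q + y ^ q := by
    intro x y; rw [← hpk]; exact add_pow_char_pow x y p k
  have frobsub : ∀ x y : F, (x - y) ^ q = x ^ q - y ^ q := by
    intro x y; rw [← hpk]; exact sub_pow_char_pow x y k
  have hx2 : ∀ x : F, (x ^ q) ^ q = x := by
    intro x
    rw [← pow_mul, show q * q = q ^ 2 by ring, ← hF]
    exact FiniteField.pow_card x
  have ha : a ≠ 0 := fun h => hab (by simp [h])
  have hb : b ≠ 0 := fun h => hab (by simp [h])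
  have hAne : A ≠ 0 := by rw [hA]; exact sub_ne_zero.mpr hA0
  have hAq : A ^ q = b ^ q * u ^ q - a ^ q * v ^ q := by
    rw [hA, frobsub, mul_pow, mul_pow]
  have hABq : a * A ^ q = b ^ q * B := by
    rw [hAq, hB]; linear_combination (-(v ^ q)) * hab1
  have hBne : B ≠ 0 := by
    intro h; rw [h, mul_zero] at hABq
    rcases mul_eq_zero.mp hABq with h' | h'
    · exact ha h'
    · exact hAne (pow_eq_zero_iff hq0 |>.mp h')
  have hBq : b * B ^ q = a ^ q * A := by
    have h2 : (a * A ^ q) ^ q = (b ^ q * B) ^ q := by rw [hABq]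
    rw [mul_pow, mul_pow, hx2 A, hx2 b] at h2
    exact h2.symm
  set ε : F := a ^ q * b⁻¹ with hε
  have hεb : ε * b = a ^ q := by rw [hε]; field_simp
  have hε1 : ε ^ (q + 1) = 1 := by
    have h3 : a ^ (q * (q + 1)) = b ^ (q + 1) := by
      rw [mul_add, mul_one, pow_add, pow_mul, hx2 a, ← hab1, pow_add, pow_one]
      ring
    rw [hε, mul_pow, inv_pow, ← pow_mul, h3]
    field_simp
  have hBqε : B ^ q = ε * A := by
    refine mul_left_cancel₀ hb ?_
    rw [hBq]
    linear_combination (-A) * hεb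
  have hεA : ε ^ r * A = -B := by
    have hArne : A ^ r ≠ 0 := pow_ne_zero _ hAne
    have h5 : B ^ (q * r) = ε ^ r * A ^ r := by rw [pow_mul, hBqε, mul_pow]
    have h6 := hB0
    rw [h5] at h6
    have h7 : A * (A ^ r)⁻¹ * (ε ^ r * A ^ r) = ε ^ r * A := by
      field_simp
    rw [h7] at h6
    linear_combination h6
  have hcq : b * c ^ q = a ^ q * c := by
    refine mul_left_cancel₀ (pow_ne_zero q hb) ?_
    linear_combination (-(c ^ q)) * hab1 + a ^ q * hac
  have hhq : ∀ x : F, (a * x ^ q + b * x + c) ^ q = ε * (a * x ^ q + b * x + c) := by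
    intro x
    have e1 : (a * x ^ q + b * x + c) ^ q = a ^ q * x + b ^ q * x ^ q + c ^ q := by
      rw [frobadd, frobadd, mul_pow, mul_pow, hx2]
    refine mul_left_cancel₀ hb ?_
    rw [e1]
    have e2 : b * (ε * (a * x ^ q + b * x + c)) = a ^ q * (a * x ^ q + b * x + c) := by
      rw [← hεb]; ring
    rw [e2]
    linear_combination (-(x ^ q)) * hab1 + hcq
  have hεe : ε ^ ((q ^ 2 - 1) / d) = 1 := by
    obtain ⟨m, hm⟩ := hdvd
    have h7 : (q ^ 2 - 1) / d = (q + 1) * m := by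
      have h8 : q ^ 2 - 1 = (q + 1) * (q - 1) := by simpa using Nat.sq_sub_sq q 1
      rw [h8, hm, show (q + 1) * (d * m) = d * ((q + 1) * m) by ring,
        Nat.mul_div_cancel_left _ hd0]
    rw [h7, pow_mul, hε1, one_pow]
  have hsum : ∀ (s : Finset ℕ) (g : ℕ → F), (∑ i ∈ s, g i) ^ q = ∑ i ∈ s, (g i) ^ q := by
    intro s g
    induction s using Finset.induction_on with
    | empty => simp [zero_pow hq0]
    | insert _ _ h ih => rw [Finset.sum_insert h, Finset.sum_insert h, frobadd, ih]
  have heval : ∀ z : F, (φ.eval z) ^ q = φ.eval (z ^ q) := by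
    intro z
    rw [Polynomial.eval_eq_sum_range, Polynomial.eval_eq_sum_range, hsum]
    refine Finset.sum_congr rfl fun i _ => ?_
    rw [mul_pow, hφ i, ← pow_mul, mul_comm i q, pow_mul]
  have hGq : ∀ y : F, y ^ q = ε * y →
      (y ^ r * φ.eval (y ^ ((q ^ 2 - 1) / d))) ^ q
        = ε ^ r * (y ^ r * φ.eval (y ^ ((q ^ 2 - 1) / d))) := by
    intro y hyq
    have hz : (y ^ ((q ^ 2 - 1) / d)) ^ q = y ^ ((q ^ 2 - 1) / d) := by
      rw [← pow_mul, mul_comm, pow_mul, hyq, mul_pow, hεe, one_mul]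
    rw [mul_pow, heval, hz, ← pow_mul, mul_comm r q, pow_mul, hyq, mul_pow]
    ring
  set α : F := u ^ q - ε ^ r * v with hα
  set β : F := v ^ q - ε ^ r * u with hβ
  have hαβ : a * α = b * β := by
    rw [hα, hβ]
    linear_combination (-1 : F) * hB - ε ^ r * hA + hεA
  have hdiff : b * (u ^ (q + 1) - v ^ (q + 1)) = α * A := by
    linear_combination (-(b * u)) * hα + (b * v) * hβ + v * hαβ + (-α) * hA
  have hlam : ∀ x : F, f x ^ q - ε ^ r * f x = α * x + β * x ^ q := by
    intro x
    simp only [hf]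
    rw [frobadd, frobadd, hGq (a * x ^ q + b * x + c) (hhq x), mul_pow, mul_pow,
      hx2 x, hα, hβ]
    ring
  constructor
  · intro hbij heq
    have hα0 : α = 0 := by
      have h9 := hdiff
      rw [heq, sub_self, mul_zero] at h9
      rcases mul_eq_zero.mp h9.symm with h | h
      · exact h
      · exact absurd h hAne
    have hβ0 : β = 0 := by
      have h9 := hαβ
      rw [hα0, mul_zero] at h9
      rcases mul_eq_zero.mp h9.symm with h | h
      · exact absurd h hb
      · exact h
    have hroot : ∀ x : F, f x ^ q - ε ^ r * f x = 0 := by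
      intro x; rw [hlam x, hα0, hβ0]; ring
    set P : Polynomial F := Polynomial.X ^ q - Polynomial.C (ε ^ r) * Polynomial.X with hP
    have hPdeg : P.natDegree = q := by
      rw [hP, Polynomial.natDegree_sub_eq_left_of_natDegree_lt, Polynomial.natDegree_X_pow]
      rw [Polynomial.natDegree_X_pow]
      calc (Polynomial.C (ε ^ r) * Polynomial.X).natDegree
          ≤ Polynomial.X.natDegree := Polynomial.natDegree_C_mul_le _ _
        _ = 1 := Polynomial.natDegree_X
        _ < q := by omega
    have hPne : P ≠ 0 := by
      intro h0
      rw [h0, Polynomial.natDegree_zero] at hPdeg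
      omega
    have hroots : ∀ x : F, f x ∈ P.roots := by
      intro x
      rw [Polynomial.mem_roots hPne]
      simp only [Polynomial.IsRoot, hP, Polynomial.eval_sub, Polynomial.eval_pow,
        Polynomial.eval_mul, Polynomial.eval_C, Polynomial.eval_X]
      exact hroot x
    have hsub : Finset.univ.image f ⊆ P.roots.toFinset := by
      intro z hz
      simp only [Finset.mem_image] at hz
      obtain ⟨x, -, rfl⟩ := hz
      rw [Multiset.mem_toFinset]
      exact hroots x
    have h14 : Fintype.card F ≤ q := by
      calc Fintype.card F = Finset.univ.card := (Finset.card_univ).symm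
        _ = (Finset.univ.image f).card :=
            (Finset.card_image_of_injective Finset.univ hbij.injective).symm
        _ ≤ P.roots.toFinset.card := Finset.card_le_card hsub
        _ ≤ Multiset.card P.roots := Multiset.toFinset_card_le _
        _ ≤ P.natDegree := Polynomial.card_roots' P
        _ = q := hPdeg
    rw [hF] at h14
    have h15 : 2 * q ≤ q * q := Nat.mul_le_mul_right q hq2
    have h16 : q ^ 2 = q * q := by ring
    omega
  · intro hne
    refine Finite.injective_iff_bijective.mp ?_
    intro x y hxy
    have hαne : α ≠ 0 := by
      intro h0
      apply hne
      have h9 := hdiff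
      rw [h0, zero_mul] at h9
      rcases mul_eq_zero.mp h9 with h | h
      · exact absurd h hb
      · exact sub_eq_zero.mp h
    have h10 : α * x + β * x ^ q = α * y + β * y ^ q := by
      rw [← hlam x, ← hlam y, hxy]
    have hw : b * (x - y) + a * (x ^ q - y ^ q) = 0 := by
      have h11 : α * (b * (x - y) + a * (x ^ q - y ^ q)) = 0 := by
        linear_combination b * h10 + (x ^ q - y ^ q) * hαβ
      exact (mul_eq_zero.mp h11).resolve_left hαne
    have hhxy : a * x ^ q + b * x + c = a * y ^ q + b * y + c := by
      linear_combination hw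
    have hfx := hxy
    rw [hf] at hfx
    simp only at hfx
    rw [hhxy] at hfx
    have h12 : u * (x ^ q - y ^ q) + v * (x - y) = 0 := by linear_combination hfx
    have h13 : (x - y) * (a * v - b * u) = 0 := by
      linear_combination a * h12 - u * hw
    rcases mul_eq_zero.mp h13 with h | h
    · exact sub_eq_zero.mp h
    · exact absurd (sub_eq_zero.mp h) (Ne.symm hA0)
end
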